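/- arXiv:2509.26170 — 11 statements merged into one kernel-verified Lean document; each statement's English description precedes it below -/
import Mathlib

section
/- If a graph Γ admits a non-diagonal TF-automorphism, then Γ is unstable, i.e., the direct product Γ × K₂ admits an automorphism not contained in Aut(Γ) × Aut(K₂). -/
/-- The automorphism group of a graph given by an adjacency relation `A`. -/
def autSubgroup {X : Type*} (A : X → X → Prop) : Subgroup (Equiv.Perm X) where
  carrier := {σ | ∀ x y, A x y ↔ A (σ x) (σ y)}
  one_mem' := fun _ _ => Iff.rfl
  mul_mem' := by
    intro a b ha hb x y
    simpa [Equiv.Perm.mul_apply] using (hb x y).trans (ha (b x) (b y))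
  inv_mem' := by
    intro a ha x y
    have h := ha (a⁻¹ x) (a⁻¹ y)
    simpa using h.symm

/-- The group of two-fold automorphisms (TF-automorphisms) of a graph with
adjacency relation `A`: pairs `(α, β)` of permutations such that
`(s, t)` is an arc iff `(α s, β t)` is an arc. -/
def tfaSubgroup {X : Type*} (A : X → X → Prop) :
    Subgroup (Equiv.Perm X × Equiv.Perm X) where
  carrier := {p | ∀ x y, A x y ↔ A (p.1 x) (p.2 y)}
  one_mem' := fun _ _ => Iff.rfl
  mul_mem' := by
    intro a b ha hb x y
    simpa [Equiv.Perm.mul_apply] using (hb x y).trans (ha (b.1 x) (b.2 y))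
  inv_mem' := by
    intro a ha x y
    have h := ha (a.1⁻¹ x) (a.2⁻¹ y)
    simpa using h.symm

/-- Adjacency of the direct (tensor) product of two graphs. -/
def prodAdj {X Y : Type*} (A : X → X → Prop) (B : Y → Y → Prop) :
    X × Y → X × Y → Prop := fun p q => A p.1 q.1 ∧ B p.2 q.2

/-- Adjacency of the complete graph `K₂` on `Bool`. -/
def k2Adj : Bool → Bool → Prop := fun i j => i ≠ j

/-- Adjacency of the cycle `Cₙ` on `ZMod n`. -/
def cycAdj (n : ℕ) : ZMod n → ZMod n → Prop := fun i j => i = j + 1 ∨ j = i + 1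

/-- If a graph `Γ` admits a non-diagonal TF-automorphism, then `Γ` is
unstable: `Γ × K₂` admits an automorphism not contained in `Aut(Γ) × Aut(K₂)`. -/
theorem stmt_2 {V : Type*} [Fintype V] (Adj : V → V → Prop) (hsymm : Symmetric Adj)
    (α β : Equiv.Perm V) (hTF : (α, β) ∈ tfaSubgroup Adj) (hne : α ≠ β) :
    ∃ τ ∈ autSubgroup (prodAdj Adj k2Adj),
      ¬∃ (σ : Equiv.Perm V) (ρ : Equiv.Perm Bool),
        σ ∈ autSubgroup Adj ∧ ρ ∈ autSubgroup k2Adj ∧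
        ∀ x : V × Bool, τ x = (σ x.1, ρ x.2) := by
  classical
  set τ : Equiv.Perm (V × Bool) :=
    { toFun := fun p => ((if p.2 then β else α) p.1, p.2)
      invFun := fun p => ((if p.2 then β⁻¹ else α⁻¹) p.1, p.2)
      left_inv := by rintro ⟨v, (_|_)⟩ <;> simp
      right_inv := by rintro ⟨v, (_|_)⟩ <;> simp } with hτ
  refine ⟨τ, ?_, ?_⟩
  · rintro ⟨x, bx⟩ ⟨y, by_⟩
    have hfb : ∀ u w, Adj u w ↔ Adj (α u) (β w) := hTF
    have hbf : ∀ u w, Adj u w ↔ Adj (β u) (α w) := by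
      intro u w
      constructor
      · intro h; exact hsymm ((hfb w u).mp (hsymm h))
      · intro h; exact hsymm ((hfb w u).mpr (hsymm h))
    cases bx <;> cases by_ <;>
      simp [hτ, prodAdj, k2Adj, Equiv.coe_fn_mk] <;>
      first
        | exact hfb x y
        | exact hbf x y
  · rintro ⟨σ, ρ, hσ, hρ, hall⟩
    obtain ⟨v, hv⟩ : ∃ v, α v ≠ β v := by
      by_contra h
      push_neg at h
      exact hne (Equiv.ext h)
    have h1 := congrArg Prod.fst (hall (v, false))
    have h2 := congrArg Prod.fst (hall (v, true))
    simp [hτ, Equiv.coe_fn_mk] at h1 h2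
    exact hv (h1.trans h2.symm)
end

section
/- Let Γ be a connected non-bipartite graph. Then Aut(Γ × K₂) is isomorphic to TFA(Γ) ⋊ Z₂; in particular Γ is unstable if and only if Γ admits a non-diagonal TF-automorphism. -/
namespace Stmt3Aux

variable {V : Type*} {Adj : V → V → Prop}

/-! ### Basic permutations of the product -/

def notPerm : Equiv.Perm Bool := ⟨not, not, Bool.not_not, Bool.not_not⟩

def swp (V : Type*) : Equiv.Perm (V × Bool) :=
  Equiv.prodCongr (Equiv.refl V) notPerm

@[simp] lemma swp_apply (p : V × Bool) : swp V p = (p.1, !p.2) := rfl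

lemma swp_sq : swp V * swp V = 1 := Equiv.ext fun p => by
  simp [Equiv.Perm.mul_apply]

lemma swp_inv : (swp V)⁻¹ = swp V := by
  rw [inv_eq_iff_mul_eq_one]; exact swp_sq

def iota (α β : Equiv.Perm V) : Equiv.Perm (V × Bool) where
  toFun p := (bif p.2 then β p.1 else α p.1, p.2)
  invFun p := (bif p.2 then β⁻¹ p.1 else α⁻¹ p.1, p.2)
  left_inv p := by cases p with | mk v b => cases b <;> simp
  right_inv p := by cases p with | mk v b => cases b <;> simp

@[simp] lemma iota_false (α β : Equiv.Perm V) (v : V) : iota α β (v, false) = (α v, false) := rfl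
@[simp] lemma iota_true (α β : Equiv.Perm V) (v : V) : iota α β (v, true) = (β v, true) := rfl

lemma iota_mul (α β α' β' : Equiv.Perm V) :
    iota (α * α') (β * β') = iota α β * iota α' β' := Equiv.ext fun p => by
  cases p with | mk v b => cases b <;> simp [Equiv.Perm.mul_apply]

lemma iota_one : (iota 1 1 : Equiv.Perm (V × Bool)) = 1 := Equiv.ext fun p => by
  cases p with | mk v b => cases b <;> rfl

lemma iota_swap_conj (α β : Equiv.Perm V) :
    iota β α = swp V * iota α β * (swp V)⁻¹ := Equiv.ext fun p => by
  rw [swp_inv]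
  cases p with | mk v b => cases b <;> simp [Equiv.Perm.mul_apply]

lemma swp_mem : swp V ∈ autSubgroup (prodAdj Adj k2Adj) := by
  intro x y
  simp only [swp_apply]
  constructor
  · rintro ⟨h1, h2⟩
    exact ⟨h1, by revert h2; simp [k2Adj]⟩
  · rintro ⟨h1, h2⟩
    exact ⟨h1, by revert h2; simp [k2Adj]⟩

lemma tfa_symm_mem (hsymm : Symmetric Adj) {α β : Equiv.Perm V}
    (h : (α, β) ∈ tfaSubgroup Adj) : (β, α) ∈ tfaSubgroup Adj := by
  intro x y
  have h1 : Adj y x ↔ Adj (α y) (β x) := h y x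
  constructor
  · intro hxy
    exact hsymm (h1.mp (hsymm hxy))
  · intro hxy
    exact hsymm (h1.mpr (hsymm hxy))

lemma iota_mem (hsymm : Symmetric Adj) {α β : Equiv.Perm V}
    (h : (α, β) ∈ tfaSubgroup Adj) :
    iota α β ∈ autSubgroup (prodAdj Adj k2Adj) := by
  have h' := tfa_symm_mem hsymm h
  rintro ⟨x, i⟩ ⟨y, j⟩
  cases i <;> cases j
  · simp [prodAdj, k2Adj]
  · simpa [prodAdj, k2Adj] using h x y
  · simpa [prodAdj, k2Adj] using h' x y
  · simp [prodAdj, k2Adj]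

/-! ### Connectedness of the product -/

lemma R_symm (hsymm : Symmetric Adj) : Symmetric (prodAdj Adj k2Adj) :=
  fun _ _ h => ⟨hsymm h.1, Ne.symm h.2⟩

lemma rtg_symm (hsymm : Symmetric Adj) :
    Symmetric (Relation.ReflTransGen (prodAdj Adj k2Adj)) :=
  fun a b h => by
    haveI : Std.Symm (prodAdj Adj k2Adj) := ⟨fun _ _ h' => R_symm hsymm h'⟩
    exact Std.Symm.symm a b h

lemma lift_walk {u v : V} (h : Relation.ReflTransGen Adj u v) (i : Bool) :
    ∃ j, Relation.ReflTransGen (prodAdj Adj k2Adj) (u, i) (v, j) := by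
  induction h with
  | refl => exact ⟨i, Relation.ReflTransGen.refl⟩
  | tail _ hbc ih =>
    obtain ⟨j, hj⟩ := ih
    exact ⟨!j, hj.tail ⟨hbc, by simp [k2Adj]⟩⟩

lemma nonempty_of_nonbip
    (hnonbip : ¬∃ c : V → Bool, ∀ u v, Adj u v → c u ≠ c v) : Nonempty V := by
  by_contra h
  rw [not_nonempty_iff] at h
  exact hnonbip ⟨fun v => isEmptyElim v, fun u => isEmptyElim u⟩

lemma conn_prod (hsymm : Symmetric Adj)
    (hconn : ∀ u v : V, Relation.ReflTransGen Adj u v)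
    (hnonbip : ¬∃ c : V → Bool, ∀ u v, Adj u v → c u ≠ c v)
    (p q : V × Bool) : Relation.ReflTransGen (prodAdj Adj k2Adj) p q := by
  obtain ⟨u₀⟩ := nonempty_of_nonbip hnonbip
  by_cases hv : ∃ v, Relation.ReflTransGen (prodAdj Adj k2Adj) (v, false) (v, true)
  · obtain ⟨v₁, h1⟩ := hv
    obtain ⟨u, i⟩ := p
    obtain ⟨v, j⟩ := q
    obtain ⟨i₁, hi₁⟩ := lift_walk (hconn u v₁) i
    obtain ⟨j₁, hj₁⟩ := lift_walk (hconn v v₁) j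
    have hmid : Relation.ReflTransGen (prodAdj Adj k2Adj) (v₁, i₁) (v₁, j₁) := by
      cases i₁ <;> cases j₁
      · exact Relation.ReflTransGen.refl
      · exact h1
      · exact rtg_symm hsymm h1
      · exact Relation.ReflTransGen.refl
    exact (hi₁.trans hmid).trans (rtg_symm hsymm hj₁)
  · exfalso
    push_neg at hv
    apply hnonbip
    have hex : ∀ v : V, ∃ j, Relation.ReflTransGen (prodAdj Adj k2Adj) (u₀, false) (v, j) :=
      fun v => lift_walk (hconn u₀ v) false
    refine ⟨fun v => Classical.choose (hex v), ?_⟩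
    intro u v hadj heq
    have hu := Classical.choose_spec (hex u)
    have hw := Classical.choose_spec (hex v)
    have hw' : Relation.ReflTransGen (prodAdj Adj k2Adj) (u₀, false)
        (v, !(Classical.choose (hex u))) := hu.tail ⟨hadj, by simp [k2Adj]⟩
    have heq' : Classical.choose (hex u) = Classical.choose (hex v) := heq
    rw [heq'] at hw'
    have hloop : Relation.ReflTransGen (prodAdj Adj k2Adj)
        (v, Classical.choose (hex v)) (v, !(Classical.choose (hex v))) :=
      (rtg_symm hsymm hw).trans hw'
    cases hcv : Classical.choose (hex v) with
    | false => rw [hcv] at hloop; exact hv v hloop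
    | true => rw [hcv] at hloop; exact hv v (rtg_symm hsymm hloop)

lemma parity_const (hsymm : Symmetric Adj)
    (hconn : ∀ u v : V, Relation.ReflTransGen Adj u v)
    (hnonbip : ¬∃ c : V → Bool, ∀ u v, Adj u v → c u ≠ c v)
    {τ : Equiv.Perm (V × Bool)}
    (hτ : ∀ x y, prodAdj Adj k2Adj x y ↔ prodAdj Adj k2Adj (τ x) (τ y))
    (p q : V × Bool) : xor (τ p).2 p.2 = xor (τ q).2 q.2 := by
  have h := conn_prod hsymm hconn hnonbip p q
  induction h with
  | refl => rfl
  | @tail b c hab hbc ih =>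
    have h2 : (τ b).2 ≠ (τ c).2 := ((hτ b c).mp hbc).2
    have h1 : b.2 ≠ c.2 := hbc.2
    rw [ih]
    obtain h1' : b.2 = !c.2 := by revert h1; cases b.2 <;> cases c.2 <;> simp
    obtain h2' : (τ b).2 = !(τ c).2 := by revert h2; cases (τ b).2 <;> cases (τ c).2 <;> simp
    rw [h1', h2']
    cases (τ c).2 <;> cases c.2 <;> rfl

/-! ### Decomposition -/

/-- Part-preserving automorphisms of the product come from TF-automorphisms. -/
lemma decomp_pp {τ : Equiv.Perm (V × Bool)}
    (hτ : τ ∈ autSubgroup (prodAdj Adj k2Adj))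
    (hpp : ∀ p : V × Bool, (τ p).2 = p.2) :
    ∃ q ∈ tfaSubgroup Adj, τ = iota q.1 q.2 := by
  have hppinv : ∀ p : V × Bool, (τ⁻¹ p).2 = p.2 := by
    intro p
    have := hpp (τ⁻¹ p)
    rw [Equiv.Perm.coe_inv, Equiv.apply_symm_apply] at this
    exact this.symm
  have hfix : ∀ (v : V) (b : Bool), τ (v, b) = ((τ (v, b)).1, b) := by
    intro v b
    conv_lhs => rw [← Prod.mk.eta (p := τ (v, b))]
    rw [hpp]
  have hfixinv : ∀ (v : V) (b : Bool), τ⁻¹ (v, b) = ((τ⁻¹ (v, b)).1, b) := by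
    intro v b
    conv_lhs => rw [← Prod.mk.eta (p := τ⁻¹ (v, b))]
    rw [hppinv]
  refine ⟨(⟨fun v => (τ (v, false)).1, fun v => (τ⁻¹ (v, false)).1, ?_, ?_⟩,
          ⟨fun v => (τ (v, true)).1, fun v => (τ⁻¹ (v, true)).1, ?_, ?_⟩), ?_, ?_⟩
  · intro v
    show (τ⁻¹ ((τ (v, false)).1, false)).1 = v
    rw [← hfix, Equiv.Perm.coe_inv, Equiv.symm_apply_apply]
  · intro v
    show (τ ((τ⁻¹ (v, false)).1, false)).1 = v
    rw [← hfixinv, Equiv.Perm.coe_inv, Equiv.apply_symm_apply]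
  · intro v
    show (τ⁻¹ ((τ (v, true)).1, true)).1 = v
    rw [← hfix, Equiv.Perm.coe_inv, Equiv.symm_apply_apply]
  · intro v
    show (τ ((τ⁻¹ (v, true)).1, true)).1 = v
    rw [← hfixinv, Equiv.Perm.coe_inv, Equiv.apply_symm_apply]
  · intro x y
    have h := hτ (x, false) (y, true)
    simp only [prodAdj, k2Adj] at h ⊢
    rw [hfix x false, hfix y true] at h
    simpa using h
  · apply Equiv.ext
    rintro ⟨v, b⟩
    cases b
    · exact hfix v false
    · exact hfix v true

lemma decomp (hsymm : Symmetric Adj)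
    (hconn : ∀ u v : V, Relation.ReflTransGen Adj u v)
    (hnonbip : ¬∃ c : V → Bool, ∀ u v, Adj u v → c u ≠ c v)
    {τ : Equiv.Perm (V × Bool)}
    (hτ : τ ∈ autSubgroup (prodAdj Adj k2Adj)) :
    ∃ q ∈ tfaSubgroup Adj, τ = iota q.1 q.2 ∨ τ = iota q.1 q.2 * swp V := by
  obtain ⟨u₀⟩ := nonempty_of_nonbip hnonbip
  have hpar := parity_const hsymm hconn hnonbip hτ
  cases hk : (τ (u₀, false)).2 with
  | false =>
    have hpp : ∀ p : V × Bool, (τ p).2 = p.2 := by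
      intro p
      have := hpar p (u₀, false)
      rw [hk] at this
      revert this
      cases (τ p).2 <;> cases p.2 <;> simp
    obtain ⟨q, hq, he⟩ := decomp_pp hτ hpp
    exact ⟨q, hq, Or.inl he⟩
  | true =>
    have hτ' : τ * swp V ∈ autSubgroup (prodAdj Adj k2Adj) := mul_mem hτ swp_mem
    have hpp : ∀ p : V × Bool, ((τ * swp V) p).2 = p.2 := by
      rintro ⟨w, i⟩
      have := hpar (swp V (w, i)) (u₀, false)
      rw [hk] at this
      show (τ (swp V (w, i))).2 = i
      simp only [swp_apply] at this ⊢
      cases i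
      · simp only [Bool.not_false] at this ⊢
        revert this; cases (τ (w, true)).2 <;> simp
      · simp only [Bool.not_true] at this ⊢
        revert this; cases (τ (w, false)).2 <;> simp
    obtain ⟨q, hq, he⟩ := decomp_pp hτ' hpp
    refine ⟨q, hq, Or.inr ?_⟩
    have h2 := congrArg (· * swp V) he
    simpa [mul_assoc, swp_sq] using h2

/-! ### The semidirect product structure -/

lemma sq_pow_mod {G : Type*} [Monoid G] {s : G} (hs : s * s = 1) (n : ℕ) :
    s ^ (n % 2) = s ^ n := by
  conv_rhs => rw [← Nat.div_add_mod n 2]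
  rw [pow_add, pow_mul, sq, hs, one_pow, one_mul]

/-- A hom out of `Multiplicative (ZMod 2)` from a square-one element. -/
def mkZhom {G : Type*} [Group G] (s : G) (hs : s * s = 1) :
    Multiplicative (ZMod 2) →* G where
  toFun x := s ^ (Multiplicative.toAdd x).val
  map_one' := by
    show s ^ (Multiplicative.toAdd (1 : Multiplicative (ZMod 2))).val = 1
    rw [toAdd_one, ZMod.val_zero, pow_zero]
  map_mul' x y := by
    show s ^ (Multiplicative.toAdd (x * y)).val = _ * _
    rw [toAdd_mul, ZMod.val_add, sq_pow_mod hs, pow_add]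

lemma mkZhom_apply {G : Type*} [Group G] (s : G) (hs : s * s = 1)
    (x : Multiplicative (ZMod 2)) : mkZhom s hs x = s ^ (Multiplicative.toAdd x).val := rfl

/-- The swap automorphism of the TFA group. -/
def tfaSwap (hsymm : Symmetric Adj) : MulAut ↥(tfaSubgroup Adj) where
  toFun p := ⟨(p.1.2, p.1.1), tfa_symm_mem hsymm p.2⟩
  invFun p := ⟨(p.1.2, p.1.1), tfa_symm_mem hsymm p.2⟩
  left_inv p := Subtype.ext rfl
  right_inv p := Subtype.ext rfl
  map_mul' p q := Subtype.ext rfl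

lemma tfaSwap_sq (hsymm : Symmetric Adj) : tfaSwap hsymm * tfaSwap hsymm = 1 :=
  MulEquiv.ext fun p => Subtype.ext rfl

def phi (hsymm : Symmetric Adj) : Multiplicative (ZMod 2) →* MulAut ↥(tfaSubgroup Adj) :=
  mkZhom (tfaSwap hsymm) (tfaSwap_sq hsymm)

def swpG (Adj : V → V → Prop) : ↥(autSubgroup (prodAdj Adj k2Adj)) :=
  ⟨swp V, swp_mem⟩

lemma swpG_sq : swpG Adj * swpG Adj = 1 := Subtype.ext swp_sq

def f1 (hsymm : Symmetric Adj) :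
    ↥(tfaSubgroup Adj) →* ↥(autSubgroup (prodAdj Adj k2Adj)) where
  toFun p := ⟨iota p.1.1 p.1.2, iota_mem hsymm p.2⟩
  map_one' := Subtype.ext iota_one
  map_mul' p q := Subtype.ext (iota_mul _ _ _ _)

def f2 : Multiplicative (ZMod 2) →* ↥(autSubgroup (prodAdj Adj k2Adj)) :=
  mkZhom (swpG Adj) swpG_sq

lemma val_cases (g : Multiplicative (ZMod 2)) :
    (Multiplicative.toAdd g).val = 0 ∨ (Multiplicative.toAdd g).val = 1 := by
  have := ZMod.val_lt (Multiplicative.toAdd g)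
  omega

lemma compat (hsymm : Symmetric Adj) :
    ∀ g, (f1 hsymm).comp ((phi hsymm g)).toMonoidHom =
      (MulAut.conj (f2 (Adj := Adj) g)).toMonoidHom.comp (f1 hsymm) := by
  intro g
  refine MonoidHom.ext fun p => ?_
  show f1 hsymm ((tfaSwap hsymm ^ (Multiplicative.toAdd g).val) p) =
    f2 g * f1 hsymm p * (f2 (Adj := Adj) g)⁻¹
  have hf2 : f2 (Adj := Adj) g = swpG Adj ^ (Multiplicative.toAdd g).val := rfl
  rcases val_cases g with h | h
  · rw [h, hf2, h, pow_zero]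
    simp
  · rw [h, hf2, h, pow_one, pow_one]
    refine Subtype.ext ?_
    exact iota_swap_conj p.1.1 p.1.2

def bigHom (hsymm : Symmetric Adj) :
    (↥(tfaSubgroup Adj) ⋊[phi hsymm] Multiplicative (ZMod 2)) →*
      ↥(autSubgroup (prodAdj Adj k2Adj)) :=
  SemidirectProduct.lift (f1 hsymm) f2 (compat hsymm)

lemma bigHom_apply (hsymm : Symmetric Adj)
    (a : ↥(tfaSubgroup Adj) ⋊[phi hsymm] Multiplicative (ZMod 2)) :
    bigHom hsymm a = f1 hsymm a.1 * f2 a.2 := rfl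

lemma bigHom_bij (hsymm : Symmetric Adj)
    (hconn : ∀ u v : V, Relation.ReflTransGen Adj u v)
    (hnonbip : ¬∃ c : V → Bool, ∀ u v, Adj u v → c u ≠ c v) :
    Function.Bijective (bigHom hsymm) := by
  obtain ⟨u₀⟩ := nonempty_of_nonbip hnonbip
  constructor
  · rw [injective_iff_map_eq_one]
    rintro ⟨p, k⟩ ha
    have h1 : iota (V := V) p.1.1 p.1.2 * (swp V) ^ (Multiplicative.toAdd k).val = 1 := by
      have h0 := congrArg Subtype.val ha
      rw [bigHom_apply] at h0
      simpa [f1, f2, mkZhom_apply, swpG] using h0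
    have hk0 : (Multiplicative.toAdd k).val = 0 := by
      rcases val_cases k with h | h
      · exact h
      · exfalso
        rw [h, pow_one] at h1
        have h2 := congrArg (fun σ : Equiv.Perm (V × Bool) => (σ (u₀, false)).2) h1
        simp only [Equiv.Perm.mul_apply, swp_apply, Bool.not_false, iota_true,
          Equiv.Perm.one_apply] at h2
        exact Bool.true_eq_false.mp h2
    have hk1 : k = 1 := by
      have h3 : Multiplicative.toAdd k = Multiplicative.toAdd (1 : Multiplicative (ZMod 2)) := by
        rw [toAdd_one]
        exact (ZMod.val_eq_zero _).mp hk0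
      exact Multiplicative.toAdd.injective h3
    rw [hk0, pow_zero, mul_one] at h1
    have hα : p.1.1 = 1 := by
      refine Equiv.ext fun v => ?_
      have h4 := congrArg (fun σ : Equiv.Perm (V × Bool) => σ (v, false)) h1
      simpa using congrArg Prod.fst h4
    have hβ : p.1.2 = 1 := by
      refine Equiv.ext fun v => ?_
      have h4 := congrArg (fun σ : Equiv.Perm (V × Bool) => σ (v, true)) h1
      simpa using congrArg Prod.fst h4
    have hp : p = 1 := Subtype.ext (Prod.ext hα hβ)
    rw [hp, hk1]
    rfl
  · rintro ⟨τ, hτ⟩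
    obtain ⟨q, hq, hcase⟩ := decomp hsymm hconn hnonbip hτ
    rcases hcase with he | he
    · refine ⟨⟨⟨q, hq⟩, 1⟩, ?_⟩
      refine Subtype.ext ?_
      rw [bigHom_apply]
      simp only [map_one, mul_one]
      exact he.symm
    · refine ⟨⟨⟨q, hq⟩, Multiplicative.ofAdd (1 : ZMod 2)⟩, ?_⟩
      refine Subtype.ext ?_
      have hf2 : f2 (Adj := Adj) (Multiplicative.ofAdd (1 : ZMod 2)) = swpG Adj := by
        show swpG Adj ^ (Multiplicative.toAdd (Multiplicative.ofAdd (1 : ZMod 2))).val = swpG Adj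
        rw [show (Multiplicative.toAdd (Multiplicative.ofAdd (1 : ZMod 2))).val = 1 by decide,
          pow_one]
      rw [bigHom_apply, hf2]
      exact he.symm

end Stmt3Aux

/-- For a connected non-bipartite graph `Γ`, we have
`Aut(Γ × K₂) ≅ TFA(Γ) ⋊ Z₂`; in particular `Γ` is unstable if and only if it
admits a non-diagonal TF-automorphism. -/
theorem stmt_3 {V : Type*} [Fintype V] (Adj : V → V → Prop) (hsymm : Symmetric Adj)
    (hconn : ∀ u v : V, Relation.ReflTransGen Adj u v)
    (hnonbip : ¬∃ c : V → Bool, ∀ u v, Adj u v → c u ≠ c v) :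
    (∃ φ : Multiplicative (ZMod 2) →* MulAut ↥(tfaSubgroup Adj),
        Nonempty (↥(autSubgroup (prodAdj Adj k2Adj)) ≃*
          (↥(tfaSubgroup Adj) ⋊[φ] Multiplicative (ZMod 2)))) ∧
    ((∃ τ ∈ autSubgroup (prodAdj Adj k2Adj),
        ¬∃ (σ : Equiv.Perm V) (ρ : Equiv.Perm Bool),
          σ ∈ autSubgroup Adj ∧ ρ ∈ autSubgroup k2Adj ∧
          ∀ x : V × Bool, τ x = (σ x.1, ρ x.2)) ↔
      ∃ p ∈ tfaSubgroup Adj, p.1 ≠ p.2) := by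
  constructor
  · exact ⟨Stmt3Aux.phi hsymm,
      ⟨(MulEquiv.ofBijective (Stmt3Aux.bigHom hsymm)
        (Stmt3Aux.bigHom_bij hsymm hconn hnonbip)).symm⟩⟩
  constructor
  · rintro ⟨τ, hτ, hno⟩
    by_contra hdiag
    push_neg at hdiag
    obtain ⟨q, hq, hcase⟩ := Stmt3Aux.decomp hsymm hconn hnonbip hτ
    have hd : q.1 = q.2 := hdiag q hq
    apply hno
    rcases hcase with he | he
    · refine ⟨q.1, Equiv.refl Bool, ?_, ?_, ?_⟩
      · intro x y
        have h := hq x y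
        rw [← hd] at h
        exact h
      · intro i j
        exact Iff.rfl
      · rintro ⟨v, b⟩
        rw [he]
        cases b
        · rfl
        · show (q.2 v, true) = (q.1 v, true)
          rw [hd]
    · refine ⟨q.1, Stmt3Aux.notPerm, ?_, ?_, ?_⟩
      · intro x y
        have h := hq x y
        rw [← hd] at h
        exact h
      · intro i j
        cases i <;> cases j <;> simp [k2Adj, Stmt3Aux.notPerm]
      · rintro ⟨v, b⟩
        rw [he]
        cases b
        · show (q.2 v, true) = (q.1 v, true)
          rw [hd]
        · rfl
  · rintro ⟨p, hp, hnep⟩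
    have hp' : (p.1, p.2) ∈ tfaSubgroup Adj := hp
    refine ⟨Stmt3Aux.iota p.1 p.2, Stmt3Aux.iota_mem hsymm hp', ?_⟩
    rintro ⟨σ, ρ, hσ, hρ, hall⟩
    apply hnep
    refine Equiv.ext fun v => ?_
    have h1 := hall (v, false)
    have h2 := hall (v, true)
    have hρf : ρ false = false := by
      have h := congrArg Prod.snd h1
      exact h.symm
    have hρt : ρ true = true := by
      have h := congrArg Prod.snd h2
      exact h.symm
    have e1 : p.1 v = σ v := congrArg Prod.fst h1
    have e2 : p.2 v = σ v := congrArg Prod.fst h2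
    exact e1.trans e2.symm
end

section
/- The subgroup of Aut(Γ × K₂) consisting of automorphisms that setwise stabilize V(Γ)×{0} is isomorphic to the group TFA(Γ) of TF-automorphisms of Γ. -/
section Aux
variable {V : Type*}

/-- Build a permutation of `V × Bool` from a pair of permutations. -/
def tfMk (α β : Equiv.Perm V) : Equiv.Perm (V × Bool) where
  toFun p := (bif p.2 then β p.1 else α p.1, p.2)
  invFun p := (bif p.2 then β.symm p.1 else α.symm p.1, p.2)
  left_inv := by rintro ⟨v, _ | _⟩ <;> simp
  right_inv := by rintro ⟨v, _ | _⟩ <;> simp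

@[simp] lemma tfMk_false (α β : Equiv.Perm V) (v : V) :
    tfMk α β (v, false) = (α v, false) := rfl

@[simp] lemma tfMk_true (α β : Equiv.Perm V) (v : V) :
    tfMk α β (v, true) = (β v, true) := rfl

/-- The embedding of TFA(Γ) into permutations of `V × Bool`. -/
def tfHom (Adj : V → V → Prop) : ↥(tfaSubgroup Adj) →* Equiv.Perm (V × Bool) where
  toFun p := tfMk (p : Equiv.Perm V × Equiv.Perm V).1 (p : Equiv.Perm V × Equiv.Perm V).2
  map_one' := by ext ⟨v, _ | _⟩ <;> simp [tfMk]
  map_mul' a b := by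
    ext ⟨v, _ | _⟩ <;> simp [tfMk, Equiv.Perm.mul_apply]

lemma tfHom_injective (Adj : V → V → Prop) : Function.Injective (tfHom Adj) := by
  intro a b hab
  ext1
  apply Prod.ext
  · ext v
    have := congrArg (fun σ : Equiv.Perm (V × Bool) => (σ (v, false)).1) hab
    simpa [tfHom] using this
  · ext v
    have := congrArg (fun σ : Equiv.Perm (V × Bool) => (σ (v, true)).1) hab
    simpa [tfHom] using this

end Aux

/-- The subgroup of `Aut(Γ × K₂)` consisting of automorphisms that
setwise stabilize `V(Γ) × {0}` is isomorphic to `TFA(Γ)`, via the isomorphism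
sending `τ` to `(α, β)` where `τ (v,0) = (α v, 0)` and `τ (v,1) = (β v, 1)`. -/
theorem stmt_4 {V : Type*} [Fintype V] (Adj : V → V → Prop) (hsymm : Symmetric Adj) :
    ∃ H : Subgroup (Equiv.Perm (V × Bool)),
      (H : Set (Equiv.Perm (V × Bool))) =
        {τ | τ ∈ autSubgroup (prodAdj Adj k2Adj) ∧ ∀ v : V, (τ (v, false)).2 = false} ∧
      ∃ f : H ≃* ↥(tfaSubgroup Adj),
        ∀ (τ : H) (v : V),
          (τ : Equiv.Perm (V × Bool)) (v, false) =
            ((f τ : Equiv.Perm V × Equiv.Perm V).1 v, false) ∧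
          (τ : Equiv.Perm (V × Bool)) (v, true) =
            ((f τ : Equiv.Perm V × Equiv.Perm V).2 v, true) := by
  refine ⟨(tfHom Adj).range, ?_, ?_⟩
  · ext τ
    simp only [MonoidHom.coe_range, Set.mem_range, Set.mem_setOf_eq]
    constructor
    · rintro ⟨⟨⟨α, β⟩, hp⟩, rfl⟩
      refine ⟨?_, fun v => rfl⟩
      rintro ⟨x, (_ | _)⟩ ⟨y, (_ | _)⟩
      · show prodAdj Adj k2Adj (x, false) (y, false) ↔
          prodAdj Adj k2Adj (α x, false) (α y, false)
        simp [prodAdj, k2Adj]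
      · show prodAdj Adj k2Adj (x, false) (y, true) ↔
          prodAdj Adj k2Adj (α x, false) (β y, true)
        have h1 := hp x y
        simp only [prodAdj, k2Adj] at *
        constructor
        · rintro ⟨h, h2⟩; exact ⟨h1.mp h, h2⟩
        · rintro ⟨h, h2⟩; exact ⟨h1.mpr h, h2⟩
      · show prodAdj Adj k2Adj (x, true) (y, false) ↔
          prodAdj Adj k2Adj (β x, true) (α y, false)
        have h1 := hp y x
        simp only [prodAdj, k2Adj] at *
        constructor
        · rintro ⟨h, h2⟩; exact ⟨hsymm (h1.mp (hsymm h)), h2⟩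
        · rintro ⟨h, h2⟩; exact ⟨hsymm (h1.mpr (hsymm h)), h2⟩
      · show prodAdj Adj k2Adj (x, true) (y, true) ↔
          prodAdj Adj k2Adj (β x, true) (β y, true)
        simp [prodAdj, k2Adj]
    · rintro ⟨haut, hfix⟩
      have hinjf : Function.Injective (fun v : V => (τ (v, false)).1) := by
        intro v w h
        have h2 : τ (v, false) = τ (w, false) :=
          Prod.ext h ((hfix v).trans (hfix w).symm)
        simpa using τ.injective h2
      set α : Equiv.Perm V := Equiv.ofBijective _ (Finite.injective_iff_bijective.mp hinjf)
        with hα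
      have hαf : ∀ v, τ (v, false) = (α v, false) := fun v =>
        Prod.ext (show (τ (v, false)).1 = α v from rfl) (hfix v)
      have htrue : ∀ v : V, (τ (v, true)).2 = true := by
        intro v
        by_contra h
        have h' : (τ (v, true)).2 = false := by
          cases hb : (τ (v, true)).2
          · rfl
          · exact absurd hb h
        obtain ⟨w, hw⟩ := α.surjective (τ (v, true)).1
        have heq : τ (v, true) = τ (w, false) := by
          rw [hαf w]
          exact Prod.ext (show (τ (v, true)).1 = α w from hw.symm) h'
        have := τ.injective heq
        simp at this
      have hinjt : Function.Injective (fun v : V => (τ (v, true)).1) := by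
        intro v w h
        have h2 : τ (v, true) = τ (w, true) :=
          Prod.ext h ((htrue v).trans (htrue w).symm)
        simpa using τ.injective h2
      set β : Equiv.Perm V := Equiv.ofBijective _ (Finite.injective_iff_bijective.mp hinjt)
        with hβ
      have hβt : ∀ v, τ (v, true) = (β v, true) := fun v =>
        Prod.ext (show (τ (v, true)).1 = β v from rfl) (htrue v)
      have htfa : (α, β) ∈ tfaSubgroup Adj := by
        intro x y
        have := haut (x, false) (y, true)
        rw [hαf x, hβt y] at this
        simpa [prodAdj, k2Adj] using this
      refine ⟨⟨(α, β), htfa⟩, ?_⟩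
      apply Equiv.ext
      rintro ⟨v, (_ | _)⟩
      · exact (hαf v).symm
      · exact (hβt v).symm
  · refine ⟨(MonoidHom.ofInjective (tfHom_injective Adj)).symm, fun τ v => ?_⟩
    have hτ : tfHom Adj ((MonoidHom.ofInjective (tfHom_injective Adj)).symm τ) =
        (τ : Equiv.Perm (V × Bool)) := by
      have := (MonoidHom.ofInjective (tfHom_injective Adj)).apply_symm_apply τ
      exact congrArg Subtype.val this
    constructor
    · rw [← hτ]; rfl
    · rw [← hτ]; rfl
end

section
/- Let Γ be a connected bipartite graph with bipartition {U,W} that admits an automorphism swapping U and W. Then |Aut(Γ × K₂)| = 4·|TFA(Γ)|. -/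
section Stmt6Aux

variable {V : Type*}

lemma mem_autSubgroup_iff {X : Type*} {A : X → X → Prop} {g : Equiv.Perm X} :
    g ∈ autSubgroup A ↔ ∀ x y, A x y ↔ A (g x) (g y) := Iff.rfl

lemma mem_tfaSubgroup_iff {X : Type*} {A : X → X → Prop}
    {p : Equiv.Perm X × Equiv.Perm X} :
    p ∈ tfaSubgroup A ↔ ∀ x y, A x y ↔ A (p.1 x) (p.2 y) := Iff.rfl

/-- `cmpo U p` says `p` lies in the component `U×{0} ∪ W×{1}`. -/
def cmpo (U : Set V) (p : V × Bool) : Prop := p.1 ∈ U ↔ p.2 = false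

variable {Adj : V → V → Prop} {U W : Set V}

lemma edge_cmp (hdisj : Disjoint U W)
    (hbip : ∀ u v, Adj u v → (u ∈ U ∧ v ∈ W) ∨ (u ∈ W ∧ v ∈ U))
    {p q : V × Bool} (h : prodAdj Adj k2Adj p q) : cmpo U p ↔ cmpo U q := by
  obtain ⟨hA, hk⟩ := h
  have hd : ∀ x, x ∈ W → x ∉ U := fun x hx hx' => Set.disjoint_left.mp hdisj hx' hx
  have hside : (p.1 ∈ U ∧ q.1 ∉ U) ∨ (p.1 ∉ U ∧ q.1 ∈ U) := by
    rcases hbip _ _ hA with ⟨h1, h2⟩ | ⟨h1, h2⟩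
    · exact Or.inl ⟨h1, hd _ h2⟩
    · exact Or.inr ⟨hd _ h1, h2⟩
  have hne : p.2 ≠ q.2 := hk
  unfold cmpo
  rcases hside with ⟨h1, h2⟩ | ⟨h1, h2⟩ <;> cases hp : p.2 <;> cases hq : q.2 <;> simp_all

lemma rtg_cmp (hdisj : Disjoint U W)
    (hbip : ∀ u v, Adj u v → (u ∈ U ∧ v ∈ W) ∨ (u ∈ W ∧ v ∈ U))
    {p q : V × Bool} (h : Relation.ReflTransGen (prodAdj Adj k2Adj) p q) :
    cmpo U p ↔ cmpo U q := by
  induction h with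
  | refl => exact Iff.rfl
  | tail _ h2 ih => exact ih.trans (edge_cmp hdisj hbip h2)

lemma lift_walk {u v : V} (h : Relation.ReflTransGen Adj u v) (i : Bool) :
    ∃ j, Relation.ReflTransGen (prodAdj Adj k2Adj) (u, i) (v, j) := by
  induction h with
  | refl => exact ⟨i, .refl⟩
  | tail _ h2 ih =>
      obtain ⟨j, hj⟩ := ih
      exact ⟨!j, hj.tail ⟨h2, by simp [k2Adj]⟩⟩

lemma conn_of_cmp (hconn : ∀ u v : V, Relation.ReflTransGen Adj u v)
    (hdisj : Disjoint U W)
    (hbip : ∀ u v, Adj u v → (u ∈ U ∧ v ∈ W) ∨ (u ∈ W ∧ v ∈ U))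
    {p q : V × Bool} (h : cmpo U p ↔ cmpo U q) :
    Relation.ReflTransGen (prodAdj Adj k2Adj) p q := by
  obtain ⟨j, hj⟩ := lift_walk (hconn p.1 q.1) p.2
  have h1 : cmpo U p ↔ cmpo U (q.1, j) := rtg_cmp hdisj hbip hj
  have h3 : (q.1 ∈ U ↔ j = false) ↔ (q.1 ∈ U ↔ q.2 = false) := h1.symm.trans h
  have h2 : j = q.2 := by
    by_cases hq : q.1 ∈ U <;> cases j <;> cases hq2 : q.2 <;> simp_all
  simpa [h2] using hj

lemma rtg_map {X : Type*} {A : X → X → Prop} {g : Equiv.Perm X}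
    (hg : g ∈ autSubgroup A) {p q : X} (h : Relation.ReflTransGen A p q) :
    Relation.ReflTransGen A (g p) (g q) := by
  induction h with
  | refl => exact .refl
  | tail _ h2 ih => exact ih.tail ((hg _ _).mp h2)

lemma eps_edge {g : Equiv.Perm (V × Bool)} (hg : g ∈ autSubgroup (prodAdj Adj k2Adj))
    {p q : V × Bool} (h : prodAdj Adj k2Adj p q) :
    ((g p).2 = p.2) ↔ ((g q).2 = q.2) := by
  have h2 : prodAdj Adj k2Adj (g p) (g q) := (hg p q).mp h
  have e1 : p.2 ≠ q.2 := h.2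
  have e2 : (g p).2 ≠ (g q).2 := h2.2
  cases hp : p.2 <;> cases hq : q.2 <;> cases hgp : (g p).2 <;> cases hgq : (g q).2 <;> simp_all

lemma eps_rtg {g : Equiv.Perm (V × Bool)} (hg : g ∈ autSubgroup (prodAdj Adj k2Adj))
    {p q : V × Bool} (hw : Relation.ReflTransGen (prodAdj Adj k2Adj) p q) :
    ((g p).2 = p.2) ↔ ((g q).2 = q.2) := by
  induction hw with
  | refl => exact Iff.rfl
  | tail _ h2 ih => exact ih.trans (eps_edge hg h2)

lemma eps_const (hconn : ∀ u v : V, Relation.ReflTransGen Adj u v)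
    (hdisj : Disjoint U W)
    (hbip : ∀ u v, Adj u v → (u ∈ U ∧ v ∈ W) ∨ (u ∈ W ∧ v ∈ U))
    {g : Equiv.Perm (V × Bool)} (hg : g ∈ autSubgroup (prodAdj Adj k2Adj))
    {p q : V × Bool} (h : cmpo U p ↔ cmpo U q) :
    ((g p).2 = p.2) ↔ ((g q).2 = q.2) :=
  eps_rtg hg (conn_of_cmp hconn hdisj hbip h)

lemma cmp_map (hconn : ∀ u v : V, Relation.ReflTransGen Adj u v)
    (hdisj : Disjoint U W)
    (hbip : ∀ u v, Adj u v → (u ∈ U ∧ v ∈ W) ∨ (u ∈ W ∧ v ∈ U))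
    {g : Equiv.Perm (V × Bool)} (hg : g ∈ autSubgroup (prodAdj Adj k2Adj))
    {p q : V × Bool} (h : cmpo U p ↔ cmpo U q) :
    cmpo U (g p) ↔ cmpo U (g q) :=
  rtg_cmp hdisj hbip (rtg_map hg (conn_of_cmp hconn hdisj hbip h))

lemma cmp_map_ne (hconn : ∀ u v : V, Relation.ReflTransGen Adj u v)
    (hdisj : Disjoint U W)
    (hbip : ∀ u v, Adj u v → (u ∈ U ∧ v ∈ W) ∨ (u ∈ W ∧ v ∈ U))
    {g : Equiv.Perm (V × Bool)} (hg : g ∈ autSubgroup (prodAdj Adj k2Adj))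
    {p q : V × Bool} (h : ¬(cmpo U p ↔ cmpo U q)) :
    ¬(cmpo U (g p) ↔ cmpo U (g q)) := by
  intro hc
  apply h
  have := cmp_map hconn hdisj hbip ((autSubgroup (prodAdj Adj k2Adj)).inv_mem hg) hc
  simpa using this

def sPerm : Equiv.Perm (V × Bool) where
  toFun p := (p.1, !p.2)
  invFun p := (p.1, !p.2)
  left_inv p := by simp
  right_inv p := by simp

lemma sPerm_apply (p : V × Bool) : sPerm p = (p.1, !p.2) := rfl

lemma sPerm_sq : (sPerm : Equiv.Perm (V × Bool)) * sPerm = 1 := by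
  ext p <;> simp [Equiv.Perm.mul_apply, sPerm_apply]

lemma sPerm_mem : (sPerm : Equiv.Perm (V × Bool)) ∈ autSubgroup (prodAdj Adj k2Adj) := by
  intro p q
  cases hp : p.2 <;> cases hq : q.2 <;> simp_all [prodAdj, k2Adj, sPerm_apply]

def tPerm (α β : Equiv.Perm V) : Equiv.Perm (V × Bool) where
  toFun p := ((cond p.2 β α) p.1, p.2)
  invFun p := ((cond p.2 β⁻¹ α⁻¹) p.1, p.2)
  left_inv p := by cases p with | mk x i => cases i <;> simp
  right_inv p := by cases p with | mk x i => cases i <;> simp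

lemma tPerm_apply (α β : Equiv.Perm V) (p : V × Bool) :
    tPerm α β p = ((cond p.2 β α) p.1, p.2) := rfl

lemma tPerm_mem (hsymm : Symmetric Adj) {α β : Equiv.Perm V}
    (h : (α, β) ∈ tfaSubgroup Adj) :
    tPerm α β ∈ autSubgroup (prodAdj Adj k2Adj) := by
  have h' : ∀ x y, Adj x y ↔ Adj (α x) (β y) := h
  intro p q
  cases p with | mk x i =>
  cases q with | mk y j =>
  cases i <;> cases j
  · show (Adj x y ∧ k2Adj false false) ↔ (Adj (α x) (α y) ∧ k2Adj false false)
    simp [k2Adj]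
  · show (Adj x y ∧ k2Adj false true) ↔ (Adj (α x) (β y) ∧ k2Adj false true)
    exact and_congr (h' x y) Iff.rfl
  · show (Adj x y ∧ k2Adj true false) ↔ (Adj (β x) (α y) ∧ k2Adj true false)
    refine and_congr ?_ Iff.rfl
    exact ⟨fun hx => hsymm ((h' y x).mp (hsymm hx)), fun hx => hsymm ((h' y x).mpr (hsymm hx))⟩
  · show (Adj x y ∧ k2Adj true true) ↔ (Adj (β x) (β y) ∧ k2Adj true true)
    simp [k2Adj]

open Classical in
noncomputable def tauPerm (σ : Equiv.Perm V) (U : Set V) (hs : ∀ x, σ x ∈ U ↔ x ∉ U) :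
    Equiv.Perm (V × Bool) where
  toFun p := if cmpo U p then p else (σ p.1, !p.2)
  invFun p := if cmpo U p then p else (σ⁻¹ p.1, !p.2)
  left_inv p := by
    by_cases h : cmpo U p
    · simp [h]
    · have key : ¬ cmpo U (σ p.1, !p.2) := by
        unfold cmpo at h
        show ¬(σ p.1 ∈ U ↔ (!p.2) = false)
        have h2 : ((!p.2) = false) ↔ ¬(p.2 = false) := by cases p.2 <;> simp
        rw [hs p.1, h2]
        tauto
      simp [h, key]
  right_inv p := by
    by_cases h : cmpo U p
    · simp [h]
    · have key : ¬ cmpo U (σ⁻¹ p.1, !p.2) := by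
        have hA : p.1 ∈ U ↔ σ⁻¹ p.1 ∉ U := by simpa using hs (σ⁻¹ p.1)
        have hs' : σ⁻¹ p.1 ∈ U ↔ p.1 ∉ U := by tauto
        unfold cmpo at h
        show ¬(σ⁻¹ p.1 ∈ U ↔ (!p.2) = false)
        have h2 : ((!p.2) = false) ↔ ¬(p.2 = false) := by cases p.2 <;> simp
        rw [hs', h2]
        tauto
      simp only [Equiv.Perm.inv_def] at key
      simp [h, key]

open Classical in
lemma tauPerm_apply (σ : Equiv.Perm V) (U : Set V) (hs : ∀ x, σ x ∈ U ↔ x ∉ U)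
    (p : V × Bool) :
    tauPerm σ U hs p = if cmpo U p then p else (σ p.1, !p.2) := rfl

open Classical in
lemma tauPerm_inv_apply (σ : Equiv.Perm V) (U : Set V) (hs : ∀ x, σ x ∈ U ↔ x ∉ U)
    (p : V × Bool) :
    (tauPerm σ U hs)⁻¹ p = if cmpo U p then p else (σ⁻¹ p.1, !p.2) := rfl

lemma cmpo_flip_sigma {σ : Equiv.Perm V} (hs : ∀ x, σ x ∈ U ↔ x ∉ U)
    {p : V × Bool} (h : ¬ cmpo U p) : ¬ cmpo U (σ p.1, !p.2) := by
  unfold cmpo at h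
  show ¬(σ p.1 ∈ U ↔ (!p.2) = false)
  have h2 : ((!p.2) = false) ↔ ¬(p.2 = false) := by cases p.2 <;> simp
  rw [hs p.1, h2]
  tauto

lemma tauPerm_mem (hdisj : Disjoint U W)
    (hbip : ∀ u v, Adj u v → (u ∈ U ∧ v ∈ W) ∨ (u ∈ W ∧ v ∈ U))
    {σ : Equiv.Perm V} (hσ : σ ∈ autSubgroup Adj) (hs : ∀ x, σ x ∈ U ↔ x ∉ U) :
    tauPerm σ U hs ∈ autSubgroup (prodAdj Adj k2Adj) := by
  have hσ' : ∀ x y, Adj x y ↔ Adj (σ x) (σ y) := hσ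
  intro p q
  by_cases hp : cmpo U p <;> by_cases hq : cmpo U q
  · rw [tauPerm_apply, tauPerm_apply, if_pos hp, if_pos hq]
  · rw [tauPerm_apply, tauPerm_apply, if_pos hp, if_neg hq]
    constructor
    · intro h
      exact absurd (edge_cmp hdisj hbip h) (by tauto)
    · intro h
      have h1 := edge_cmp hdisj hbip h
      have h2 := cmpo_flip_sigma hs hq
      tauto
  · rw [tauPerm_apply, tauPerm_apply, if_neg hp, if_pos hq]
    constructor
    · intro h
      exact absurd (edge_cmp hdisj hbip h) (by tauto)
    · intro h
      have h1 := edge_cmp hdisj hbip h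
      have h2 := cmpo_flip_sigma hs hp
      tauto
  · rw [tauPerm_apply, tauPerm_apply, if_neg hp, if_neg hq]
    show (Adj p.1 q.1 ∧ k2Adj p.2 q.2) ↔ (Adj (σ p.1) (σ q.1) ∧ k2Adj (!p.2) (!q.2))
    refine and_congr (hσ' p.1 q.1) ?_
    show (p.2 ≠ q.2) ↔ ((!p.2) ≠ (!q.2))
    cases p.2 <;> cases q.2 <;> simp

def fiberPerm (g : Equiv.Perm (V × Bool)) (hl : ∀ p, (g p).2 = p.2) (i : Bool) :
    Equiv.Perm V where
  toFun x := (g (x, i)).1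
  invFun x := (g⁻¹ (x, i)).1
  left_inv x := by
    have e : g (x, i) = ((g (x, i)).1, i) := Prod.ext_iff.mpr ⟨rfl, hl (x, i)⟩
    show (g⁻¹ ((g (x, i)).1, i)).1 = x
    rw [← e, Equiv.Perm.inv_def, Equiv.symm_apply_apply]
  right_inv x := by
    have hl' : ∀ p, (g⁻¹ p).2 = p.2 := by
      intro p
      have h := hl (g⁻¹ p)
      rw [Equiv.Perm.inv_def, Equiv.apply_symm_apply] at h
      exact h.symm
    have e : g⁻¹ (x, i) = ((g⁻¹ (x, i)).1, i) := Prod.ext_iff.mpr ⟨rfl, hl' (x, i)⟩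
    show (g ((g⁻¹ (x, i)).1, i)).1 = x
    rw [← e, Equiv.Perm.inv_def, Equiv.apply_symm_apply]

lemma fiberPerm_apply (g : Equiv.Perm (V × Bool)) (hl : ∀ p, (g p).2 = p.2) (i : Bool)
    (x : V) : fiberPerm g hl i x = (g (x, i)).1 := rfl

/-- `e` if `b` is true, identity otherwise. -/
def condPerm {X : Type*} (b : Bool) (e : Equiv.Perm X) : Equiv.Perm X := cond b e 1

@[simp] lemma condPerm_false {X : Type*} (e : Equiv.Perm X) : condPerm false e = 1 := rfl

@[simp] lemma condPerm_true {X : Type*} (e : Equiv.Perm X) : condPerm true e = e := rfl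

end Stmt6Aux

/-- If `Γ` is a connected bipartite graph with bipartition `{U, W}`
admitting an automorphism swapping `U` and `W`, then `|Aut(Γ × K₂)| = 4 |TFA(Γ)|`. -/
theorem stmt_6 {V : Type*} [Fintype V] (Adj : V → V → Prop) (hsymm : Symmetric Adj)
    (hconn : ∀ u v : V, Relation.ReflTransGen Adj u v)
    (U W : Set V) (hdisj : Disjoint U W) (hcover : U ∪ W = Set.univ)
    (hU : U.Nonempty) (hW : W.Nonempty)
    (hbip : ∀ u v, Adj u v → (u ∈ U ∧ v ∈ W) ∨ (u ∈ W ∧ v ∈ U))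
    (hswap : ∃ σ ∈ autSubgroup Adj, ⇑σ '' U = W ∧ ⇑σ '' W = U) :
    Nat.card ↥(autSubgroup (prodAdj Adj k2Adj)) = 4 * Nat.card ↥(tfaSubgroup Adj) := by
  classical
  obtain ⟨σ, hσ, hσU, hσW⟩ := hswap
  obtain ⟨u0, hu0⟩ := hU
  obtain ⟨w0, hw0⟩ := hW
  have hd : ∀ x, x ∈ W → x ∉ U := fun x hx hx' => Set.disjoint_left.mp hdisj hx' hx
  have hUW : ∀ x : V, x ∉ U → x ∈ W := by
    intro x hx
    have hx2 : x ∈ U ∪ W := by rw [hcover]; exact Set.mem_univ x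
    rcases hx2 with h | h
    · exact absurd h hx
    · exact h
  have hs : ∀ x, σ x ∈ U ↔ x ∉ U := by
    intro x
    constructor
    · intro h hxU
      have h2 : σ x ∈ W := by rw [← hσU]; exact Set.mem_image_of_mem σ hxU
      exact hd _ h2 h
    · intro h
      have h2 : σ x ∈ σ '' W := Set.mem_image_of_mem σ (hUW x h)
      rwa [hσW] at h2
  set G := autSubgroup (prodAdj Adj k2Adj) with hGdef
  set T := tfaSubgroup Adj with hTdef
  have hc0 : cmpo U (u0, false) := iff_of_true hu0 rfl
  have hc1 : ¬ cmpo U (w0, false) := fun h => hd w0 hw0 (h.mpr rfl)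
  have hmix : ¬(cmpo U ((u0 : V), false) ↔ cmpo U ((w0 : V), false)) := fun h => hc1 (h.mp hc0)
  set τ : Equiv.Perm (V × Bool) := tauPerm σ U hs with hτdef
  have hτmem : τ ∈ G := tauPerm_mem hdisj hbip hσ hs
  have hsmem : (sPerm : Equiv.Perm (V × Bool)) ∈ G := sPerm_mem
  have hτsnd : ∀ q : V × Bool, (τ q).2 = if cmpo U q then q.2 else !q.2 := by
    intro q
    by_cases h : cmpo U q
    · rw [hτdef, tauPerm_apply, if_pos h, if_pos h]
    · rw [hτdef, tauPerm_apply, if_neg h, if_neg h]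
  have hτinvsnd : ∀ q : V × Bool, (τ⁻¹ q).2 = if cmpo U q then q.2 else !q.2 := by
    intro q
    by_cases h : cmpo U q
    · rw [hτdef, tauPerm_inv_apply, if_pos h, if_pos h]
    · rw [hτdef, tauPerm_inv_apply, if_neg h, if_neg h]
  have hXsnd : ∀ (b : Bool) (α β : Equiv.Perm V) (p : V × Bool),
      (((condPerm b (sPerm (V := V))) * tPerm α β) p).2 = cond b (!p.2) p.2 := by
    intro b α β p
    cases b <;> simp [Equiv.Perm.mul_apply, sPerm_apply, tPerm_apply]
  have hsbmem : ∀ b : Bool, (condPerm b (sPerm (V := V)) : Equiv.Perm (V × Bool)) ∈ G := by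
    intro b; cases b
    · exact one_mem G
    · exact hsmem
  have hτcmem : ∀ c : Bool, (condPerm c τ) ∈ G := by
    intro c; cases c
    · exact one_mem G
    · exact hτmem
  have hsb_sq : ∀ b : Bool, (condPerm b (sPerm (V := V)) : Equiv.Perm (V × Bool)) * (condPerm b (sPerm (V := V))) = 1 := by
    intro b; cases b
    · simp
    · exact sPerm_sq
  -- the key invariant computation
  have key1 : ∀ (b c : Bool) (α β : Equiv.Perm V), (α, β) ∈ T →
      (((((condPerm c τ) * ((condPerm b (sPerm (V := V))) * tPerm α β)) ((u0 : V), false)).2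
        = (((condPerm c τ) * ((condPerm b (sPerm (V := V))) * tPerm α β)) ((w0 : V), false)).2) ↔ c = false) := by
    intro b c α β hab
    have hXm : ((condPerm b (sPerm (V := V))) * tPerm α β) ∈ G := mul_mem (hsbmem b) (tPerm_mem hsymm hab)
    have hXs0 : (((condPerm b (sPerm (V := V))) * tPerm α β) ((u0 : V), false)).2 = cond b true false := by
      rw [hXsnd]
      cases b <;> rfl
    have hXs1 : (((condPerm b (sPerm (V := V))) * tPerm α β) ((w0 : V), false)).2 = cond b true false := by
      rw [hXsnd]
      cases b <;> rfl
    have hD : ¬(cmpo U (((condPerm b (sPerm (V := V))) * tPerm α β) ((u0 : V), false))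
        ↔ cmpo U (((condPerm b (sPerm (V := V))) * tPerm α β) ((w0 : V), false))) :=
      cmp_map_ne hconn hdisj hbip hXm hmix
    cases c
    · rw [condPerm_false, one_mul, hXs0, hXs1]
      simp
    · rw [condPerm_true]
      simp only [Equiv.Perm.mul_apply] at hXs0 hXs1 ⊢
      rw [hτsnd, hτsnd]
      by_cases hd0 : cmpo U (((condPerm b (sPerm (V := V))) * tPerm α β) ((u0 : V), false))
      · have hd1 : ¬ cmpo U (((condPerm b (sPerm (V := V))) * tPerm α β) ((w0 : V), false)) := by tauto
        simp only [Equiv.Perm.mul_apply] at hd0 hd1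
        rw [if_pos hd0, if_neg hd1, hXs0, hXs1]
        cases b <;> simp
      · have hd1 : cmpo U (((condPerm b (sPerm (V := V))) * tPerm α β) ((w0 : V), false)) := by tauto
        simp only [Equiv.Perm.mul_apply] at hd0 hd1
        rw [if_neg hd0, if_pos hd1, hXs0, hXs1]
        cases b <;> simp
  -- the bijection
  have hbij : Function.Bijective (fun x : ↥T × Bool × Bool =>
      (⟨(condPerm x.2.2 τ) * ((condPerm x.2.1 (sPerm (V := V))) * tPerm x.1.1.1 x.1.1.2),
        mul_mem (hτcmem x.2.2) (mul_mem (hsbmem x.2.1)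
          (tPerm_mem hsymm (by rw [Prod.mk.eta]; exact x.1.2)))⟩ : ↥G)) := by
    constructor
    · rintro ⟨⟨⟨α, β⟩, hab⟩, b, c⟩ ⟨⟨⟨α', β'⟩, hab'⟩, b', c'⟩ h
      have hE : (condPerm c τ) * ((condPerm b (sPerm (V := V))) * tPerm α β)
          = (condPerm c' τ) * ((condPerm b' (sPerm (V := V))) * tPerm α' β') := congrArg Subtype.val h
      have hcc : c = c' := by
        by_cases hsn : (((condPerm c τ) * ((condPerm b (sPerm (V := V))) * tPerm α β)) ((u0 : V), false)).2
            = (((condPerm c τ) * ((condPerm b (sPerm (V := V))) * tPerm α β)) ((w0 : V), false)).2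
        · have hsn' := hsn
          rw [hE] at hsn'
          exact ((key1 b c α β hab).mp hsn).trans ((key1 b' c' α' β' hab').mp hsn').symm
        · have hsn' : ¬((((condPerm c' τ) * ((condPerm b' (sPerm (V := V))) * tPerm α' β')) ((u0 : V), false)).2
              = (((condPerm c' τ) * ((condPerm b' (sPerm (V := V))) * tPerm α' β')) ((w0 : V), false)).2) := by
            rw [← hE]; exact hsn
          have e1 : ¬(c = false) := fun hcf => hsn ((key1 b c α β hab).mpr hcf)
          have e2 : ¬(c' = false) := fun hcf => hsn' ((key1 b' c' α' β' hab').mpr hcf)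
          cases c <;> cases c' <;> simp_all
      subst hcc
      have hE2 : (condPerm b (sPerm (V := V))) * tPerm α β = (condPerm b' (sPerm (V := V))) * tPerm α' β' :=
        mul_left_cancel hE
      have hbb : b = b' := by
        have h0 : (((condPerm b (sPerm (V := V))) * tPerm α β) ((u0 : V), false)).2
            = (((condPerm b' (sPerm (V := V))) * tPerm α' β') ((u0 : V), false)).2 := by rw [hE2]
        rw [hXsnd, hXsnd] at h0
        cases b <;> cases b' <;> simp_all
      subst hbb
      have hE3 : tPerm α β = tPerm α' β' := mul_left_cancel hE2
      have hα : α = α' := by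
        ext x
        have h1 : tPerm α β (x, false) = tPerm α' β' (x, false) := by rw [hE3]
        rw [tPerm_apply, tPerm_apply] at h1
        exact congrArg Prod.fst h1
      have hβ : β = β' := by
        ext x
        have h1 : tPerm α β (x, true) = tPerm α' β' (x, true) := by rw [hE3]
        rw [tPerm_apply, tPerm_apply] at h1
        exact congrArg Prod.fst h1
      subst hα; subst hβ
      rfl
    · rintro ⟨g, hg⟩
      obtain ⟨c, g1, hg1mem, hrec, hK⟩ :
          ∃ (c : Bool) (g1 : Equiv.Perm (V × Bool)), g1 ∈ G ∧ g = (condPerm c τ) * g1 ∧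
            (g1 ((u0 : V), false)).2 = (g1 ((w0 : V), false)).2 := by
        by_cases hce : (g ((u0 : V), false)).2 = (g ((w0 : V), false)).2
        · exact ⟨false, g, hg, (one_mul g).symm, hce⟩
        · refine ⟨true, τ⁻¹ * g, mul_mem (inv_mem hτmem) hg, (mul_inv_cancel_left τ g).symm, ?_⟩
          have hD : ¬(cmpo U (g ((u0 : V), false)) ↔ cmpo U (g ((w0 : V), false))) :=
            cmp_map_ne hconn hdisj hbip hg hmix
          show ((τ⁻¹ * g) ((u0 : V), false)).2 = ((τ⁻¹ * g) ((w0 : V), false)).2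
          rw [Equiv.Perm.mul_apply, Equiv.Perm.mul_apply, hτinvsnd, hτinvsnd]
          by_cases hd0 : cmpo U (g ((u0 : V), false))
          · have hd1 : ¬ cmpo U (g ((w0 : V), false)) := by tauto
            rw [if_pos hd0, if_neg hd1]
            revert hce
            cases h0 : (g ((u0 : V), false)).2 <;> cases h1 : (g ((w0 : V), false)).2 <;> simp
          · have hd1 : cmpo U (g ((w0 : V), false)) := by tauto
            rw [if_neg hd0, if_pos hd1]
            revert hce
            cases h0 : (g ((u0 : V), false)).2 <;> cases h1 : (g ((w0 : V), false)).2 <;> simp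
      obtain ⟨b, hb⟩ : ∃ b : Bool, (g1 ((u0 : V), false)).2 = b := ⟨_, rfl⟩
      have hb1 : (g1 ((w0 : V), false)).2 = b := hK.symm.trans hb
      have hg2mem : (condPerm b (sPerm (V := V))) * g1 ∈ G := mul_mem (hsbmem b) hg1mem
      have hlay0 : (((condPerm b (sPerm (V := V))) * g1) ((u0 : V), false)).2 = ((u0 : V), false).2 := by
        rw [Equiv.Perm.mul_apply]
        cases b
        · simpa using hb
        · simp [sPerm_apply, hb]
      have hlay1 : (((condPerm b (sPerm (V := V))) * g1) ((w0 : V), false)).2 = ((w0 : V), false).2 := by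
        rw [Equiv.Perm.mul_apply]
        cases b
        · simpa using hb1
        · simp [sPerm_apply, hb1]
      have hlay : ∀ p : V × Bool, (((condPerm b (sPerm (V := V))) * g1) p).2 = p.2 := by
        intro p
        by_cases hcp : cmpo U p
        · exact (eps_const hconn hdisj hbip hg2mem (iff_of_true hcp hc0)).mpr hlay0
        · exact (eps_const hconn hdisj hbip hg2mem (iff_of_false hcp hc1)).mpr hlay1
      set X : Equiv.Perm (V × Bool) := (condPerm b (sPerm (V := V))) * g1 with hXdef
      set α : Equiv.Perm V := fiberPerm X hlay false with hαdef
      set β : Equiv.Perm V := fiberPerm X hlay true with hβdef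
      have eX0 : ∀ x : V, X (x, false) = (α x, false) :=
        fun x => Prod.ext_iff.mpr ⟨rfl, hlay (x, false)⟩
      have eX1 : ∀ y : V, X (y, true) = (β y, true) :=
        fun y => Prod.ext_iff.mpr ⟨rfl, hlay (y, true)⟩
      have htfa : ((α, β) : Equiv.Perm V × Equiv.Perm V) ∈ T := by
        intro x y
        have h1 : prodAdj Adj k2Adj (x, false) (y, true)
            ↔ prodAdj Adj k2Adj (X (x, false)) (X (y, true)) := hg2mem _ _
        rw [eX0, eX1] at h1
        constructor
        · intro ha
          exact (h1.mp ⟨ha, by simp [k2Adj]⟩).1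
        · intro ha
          exact (h1.mpr ⟨ha, by simp [k2Adj]⟩).1
      have heq : tPerm α β = X := by
        apply Equiv.ext
        rintro ⟨x, i⟩
        cases i
        · rw [tPerm_apply]
          exact (eX0 x).symm
        · rw [tPerm_apply]
          exact (eX1 x).symm
      refine ⟨⟨⟨(α, β), htfa⟩, b, c⟩, ?_⟩
      apply Subtype.ext
      show (condPerm c τ) * ((condPerm b (sPerm (V := V))) * tPerm α β) = g
      rw [heq, hXdef, ← mul_assoc (condPerm b (sPerm (V := V))) (condPerm b (sPerm (V := V))) g1, hsb_sq b, one_mul]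
      exact hrec.symm
  have hcard := Nat.card_congr (Equiv.ofBijective _ hbij)
  rw [Nat.card_prod, Nat.card_prod] at hcard
  have hcb : Nat.card Bool = 2 := by simp [Nat.card_eq_fintype_card]
  rw [hcb] at hcard
  omega
end

section
/- Let Γ be a connected bipartite graph with bipartition {U,W}, and let (α,β) be a TF-automorphism of Γ. Then either both α and β setwise stabilize U and W, or both α and β interchange U and W. -/
private lemma img_of_iff {V : Type*} (σ : Equiv.Perm V) (S T : Set V)
    (h : ∀ x, σ x ∈ T ↔ x ∈ S) : ⇑σ '' S = T := by
  ext t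
  constructor
  · rintro ⟨x, hx, rfl⟩; exact (h x).2 hx
  · intro ht
    exact ⟨σ⁻¹ t, (h _).1 (by simpa using ht), by simp⟩

/-- Let `Γ` be a connected bipartite graph with bipartition `{U, W}` and
`(α, β)` a TF-automorphism of `Γ`. Then either both `α` and `β` setwise stabilize
`U` and `W`, or both interchange `U` and `W`. -/
theorem stmt_7 {V : Type*} [Fintype V] (Adj : V → V → Prop) (hsymm : Symmetric Adj)
    (hconn : ∀ u v : V, Relation.ReflTransGen Adj u v)
    (U W : Set V) (hdisj : Disjoint U W) (hcover : U ∪ W = Set.univ)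
    (hU : U.Nonempty) (hW : W.Nonempty)
    (hbip : ∀ u v, Adj u v → (u ∈ U ∧ v ∈ W) ∨ (u ∈ W ∧ v ∈ U))
    (α β : Equiv.Perm V) (hTF : (α, β) ∈ tfaSubgroup Adj) :
    (⇑α '' U = U ∧ ⇑α '' W = W ∧ ⇑β '' U = U ∧ ⇑β '' W = W) ∨
    (⇑α '' U = W ∧ ⇑α '' W = U ∧ ⇑β '' U = W ∧ ⇑β '' W = U) := by
  classical
  have memW : ∀ x : V, x ∈ W ↔ ¬ x ∈ U := by
    intro x
    constructor
    · intro hw hu; exact (Set.disjoint_left.mp hdisj hu) hw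
    · intro hu
      have : x ∈ U ∪ W := hcover ▸ Set.mem_univ x
      rcases this with h | h
      · exact absurd h hu
      · exact h
  -- opposite sides along edges
  have opp : ∀ {a b : V}, Adj a b → (a ∈ U ↔ ¬ b ∈ U) := by
    intro a b hab
    have hma := memW a
    have hmb := memW b
    rcases hbip a b hab with ⟨ha, hb⟩ | ⟨ha, hb⟩ <;> tauto
  have edge1 : ∀ {x y : V}, Adj x y → (α x ∈ U ↔ ¬ β y ∈ U) := by
    intro x y hxy
    exact opp ((hTF x y).1 hxy)
  have edge2 : ∀ {x y : V}, Adj x y → (α y ∈ U ↔ ¬ β x ∈ U) := by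
    intro x y hxy
    exact opp ((hTF y x).1 (hsymm hxy))
  -- P x : α x and β x on same side
  set P : V → Prop := fun x => (α x ∈ U ↔ β x ∈ U) with hP
  have Pedge : ∀ {x y : V}, Adj x y → (P x ↔ P y) := by
    intro x y hxy
    have h1 := edge1 hxy
    have h2 := edge2 hxy
    simp only [hP]
    tauto
  have Pconst : ∀ x y : V, P x ↔ P y := by
    intro x y
    induction hconn x y with
    | refl => exact Iff.rfl
    | tail _ hadj ih => exact ih.trans (Pedge hadj)
  obtain ⟨u0, hu0⟩ := hU
  obtain ⟨w0, hw0⟩ := hW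
  by_cases hp : P u0
  · -- P holds everywhere
    have Pall : ∀ x, α x ∈ U ↔ β x ∈ U := fun x => (Pconst x u0).2 hp
    -- E x : α preserves side of x ; constant along edges
    set E : V → Prop := fun x => (α x ∈ U ↔ x ∈ U) with hE
    have Eedge : ∀ {x y : V}, Adj x y → (E x ↔ E y) := by
      intro x y hxy
      have h1 := edge1 hxy
      have h3 := opp hxy
      have h4 := Pall y
      simp only [hE]
      tauto
    have Econst : ∀ x y : V, E x ↔ E y := by
      intro x y
      induction hconn x y with
      | refl => exact Iff.rfl
      | tail _ hadj ih => exact ih.trans (Eedge hadj)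
    by_cases he : E u0
    · left
      have Eall : ∀ x, α x ∈ U ↔ x ∈ U := fun x => (Econst x u0).2 he
      have Ball : ∀ x, β x ∈ U ↔ x ∈ U := fun x => (Pall x).symm.trans (Eall x)
      have EallW : ∀ x, α x ∈ W ↔ x ∈ W := by
        intro x; rw [memW, memW, Eall x]
      have BallW : ∀ x, β x ∈ W ↔ x ∈ W := by
        intro x; rw [memW, memW, Ball x]
      exact ⟨img_of_iff α U U Eall, img_of_iff α W W EallW,
        img_of_iff β U U Ball, img_of_iff β W W BallW⟩
    · right
      have Eall : ∀ x, ¬ (α x ∈ U ↔ x ∈ U) := fun x => fun h => he ((Econst u0 x).2 h)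
      have EallW : ∀ x, α x ∈ W ↔ x ∈ U := by
        intro x
        rw [memW]
        have := Eall x
        tauto
      have EallU : ∀ x, α x ∈ U ↔ x ∈ W := by
        intro x
        rw [memW]
        have := Eall x
        tauto
      have BallW : ∀ x, β x ∈ W ↔ x ∈ U := by
        intro x
        rw [memW]
        have h1 := Pall x
        have h2 := Eall x
        tauto
      have BallU : ∀ x, β x ∈ U ↔ x ∈ W := by
        intro x
        rw [memW]
        have h1 := Pall x
        have h2 := Eall x
        tauto
      exact ⟨img_of_iff α U W EallW, img_of_iff α W U EallU,
        img_of_iff β U W BallW, img_of_iff β W U BallU⟩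
  · -- P fails everywhere : contradiction with connectivity
    exfalso
    have Pnone : ∀ x, ¬ (α x ∈ U ↔ β x ∈ U) := fun x => fun h => hp ((Pconst u0 x).2 h)
    -- Q x : α x ∈ U is constant along edges
    set Q : V → Prop := fun x => α x ∈ U with hQ
    have Qedge : ∀ {x y : V}, Adj x y → (Q x ↔ Q y) := by
      intro x y hxy
      have h1 := edge1 hxy
      have h2 := Pnone y
      simp only [hQ]
      tauto
    have Qconst : ∀ x y : V, Q x ↔ Q y := by
      intro x y
      induction hconn x y with
      | refl => exact Iff.rfl
      | tail _ hadj ih => exact ih.trans (Qedge hadj)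
    have := Qconst (α⁻¹ u0) (α⁻¹ w0)
    simp only [hQ, Equiv.Perm.inv_def, Equiv.apply_symm_apply] at this
    exact ((memW w0).1 hw0) (this.1 hu0)
end

section
/- Let Γ = Cay(Z₈, {±1,±2}) and let n ≥ 6 be even. Then the map τ on Z₈ × Zₙ defined by (u,i)^τ = (5u+4i, i) is an automorphism of the direct product Γ × Cₙ. -/
/-- Adjacency of the Cayley graph `Cay(Z₈, {±1, ±2})`. -/
def cayAdj : ZMod 8 → ZMod 8 → Prop := fun u v => u - v ∈ ({1, -1, 2, -2} : Set (ZMod 8))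

private lemma key_four (n : ℕ) (hn : 6 ≤ n) (hev : Even n) (i j : ZMod n) (h : i = j + 1) :
    (4 : ZMod 8) * (i.val : ZMod 8) = 4 * (j.val : ZMod 8) + 4 := by
  obtain ⟨m, hm⟩ := hev
  have hn1 : 1 < n := by omega
  have : NeZero n := ⟨by omega⟩
  have : Fact (1 < n) := ⟨hn1⟩
  have hv : i.val = (j.val + 1) % n := by
    rw [h, ZMod.val_add, ZMod.val_one]
  have hnat : i.val + n * ((j.val + 1) / n) = j.val + 1 := by
    rw [hv]; exact Nat.mod_add_div _ _
  have hc : ((i.val : ZMod 8) + (n : ZMod 8) * (((j.val + 1) / n : ℕ) : ZMod 8))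
      = (j.val : ZMod 8) + 1 := by
    have := congrArg (fun k : ℕ => (k : ZMod 8)) hnat
    push_cast at this
    linear_combination this
  have hn8 : (4 : ZMod 8) * (n : ZMod 8) = 0 := by
    have h1 : (n : ZMod 8) = (m : ZMod 8) + (m : ZMod 8) := by rw [hm]; push_cast; ring
    have h2 : (4 : ZMod 8) * ((m : ZMod 8) + (m : ZMod 8)) = 8 * (m : ZMod 8) := by ring
    rw [h1, h2, show (8 : ZMod 8) = 0 from by decide, zero_mul]
  linear_combination 4 * hc - (((j.val + 1) / n : ℕ) : ZMod 8) * hn8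

private lemma cay_symm (x y : ZMod 8) (h : cayAdj x y) : cayAdj y x := by
  unfold cayAdj at h ⊢
  have key : ∀ d : ZMod 8, d ∈ ({1, -1, 2, -2} : Set (ZMod 8)) →
      -d ∈ ({1, -1, 2, -2} : Set (ZMod 8)) := by decide
  have e : y - x = -(x - y) := by ring
  rw [e]; exact key _ h

private lemma cay_iff (u v c d : ZMod 8) (h : 4 * c = 4 * d + 4) :
    cayAdj u v ↔ cayAdj (5 * u + 4 * c) (5 * v + 4 * d) := by
  have h2 : 5 * u + 4 * c - (5 * v + 4 * d) = 5 * (u - v) + 4 := by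
    linear_combination h
  unfold cayAdj
  rw [h2]
  have key : ∀ x : ZMod 8, x ∈ ({1, -1, 2, -2} : Set (ZMod 8)) ↔
      5 * x + 4 ∈ ({1, -1, 2, -2} : Set (ZMod 8)) := by decide
  exact key (u - v)

/-- Let `Γ = Cay(Z₈, {±1,±2})` and let `n ≥ 6` be even. The map
`(u, i) ↦ (5u + 4i, i)` is an automorphism of the direct product `Γ × Cₙ`. -/
theorem stmt_11 (n : ℕ) (hn : 6 ≤ n) (hev : Even n) :
    ∃ τ : Equiv.Perm (ZMod 8 × ZMod n),
      (∀ (u : ZMod 8) (i : ZMod n), τ (u, i) = (5 * u + 4 * (i.val : ZMod 8), i)) ∧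
      τ ∈ autSubgroup (prodAdj cayAdj (cycAdj n)) := by
  have hinv : Function.Involutive
      (fun p : ZMod 8 × ZMod n => (5 * p.1 + 4 * (p.2.val : ZMod 8), p.2)) := by
    rintro ⟨u, i⟩
    simp only [Prod.mk.injEq]
    exact ⟨(by decide : ∀ u c : ZMod 8, 5 * (5 * u + 4 * c) + 4 * c = u) u _, trivial⟩
  refine ⟨hinv.toPerm _, fun u i => rfl, ?_⟩
  rintro ⟨u, i⟩ ⟨v, j⟩
  show prodAdj cayAdj (cycAdj n) (u, i) (v, j) ↔
    prodAdj cayAdj (cycAdj n) (5 * u + 4 * (i.val : ZMod 8), i)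
      (5 * v + 4 * (j.val : ZMod 8), j)
  unfold prodAdj
  simp only
  constructor
  · rintro ⟨h1, h2⟩
    refine ⟨?_, h2⟩
    rcases h2 with h | h
    · exact (cay_iff u v _ _ (key_four n hn hev i j h)).mp h1
    · exact cay_symm _ _ ((cay_iff v u _ _ (key_four n hn hev j i h)).mp (cay_symm _ _ h1))
  · rintro ⟨h1, h2⟩
    refine ⟨?_, h2⟩
    rcases h2 with h | h
    · exact (cay_iff u v _ _ (key_four n hn hev i j h)).mpr h1
    · exact cay_symm _ _ ((cay_iff v u _ _ (key_four n hn hev j i h)).mpr (cay_symm _ _ h1))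
end

section
/- Let Γ be a connected non-bipartite graph admitting a non-diagonal TF-automorphism (α,β), and let Σ be a connected bipartite graph with bipartition {U,W}. Define, for each vertex v of Σ, α_v = α if v ∈ U and α_v = β if v ∈ W. Then the map (s,v) ↦ (s^{α_v}, v) is an automorphism of Γ × Σ that is not in Aut(Γ) × Aut(Σ). In particular, if Γ is unstable then the pair (Γ,Σ) is unstable. -/
/-- Let `Γ` be connected non-bipartite with a non-diagonal
TF-automorphism `(α, β)`, and `Σ` connected bipartite with bipartition `{U, W}`.
Then `(s, v) ↦ (α s, v)` for `v ∈ U` and `(s, v) ↦ (β s, v)` for `v ∈ W` is an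
automorphism of `Γ × Σ` not in `Aut(Γ) × Aut(Σ)`. -/
theorem stmt_13 {VG VS : Type*} [Fintype VG] [Fintype VS]
    (AdjG : VG → VG → Prop) (hsG : Symmetric AdjG)
    (hconnG : ∀ u v : VG, Relation.ReflTransGen AdjG u v)
    (hnbG : ¬∃ c : VG → Bool, ∀ u v, AdjG u v → c u ≠ c v)
    (α β : Equiv.Perm VG) (hTF : (α, β) ∈ tfaSubgroup AdjG) (hne : α ≠ β)
    (AdjS : VS → VS → Prop) (hsS : Symmetric AdjS)
    (hconnS : ∀ u v : VS, Relation.ReflTransGen AdjS u v)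
    (U W : Set VS) [DecidablePred (· ∈ U)]
    (hdisj : Disjoint U W) (hcover : U ∪ W = Set.univ)
    (hU : U.Nonempty) (hW : W.Nonempty)
    (hbip : ∀ u v, AdjS u v → (u ∈ U ∧ v ∈ W) ∨ (u ∈ W ∧ v ∈ U)) :
    ∃ τ : Equiv.Perm (VG × VS),
      (∀ (s : VG) (v : VS), τ (s, v) = (if v ∈ U then α s else β s, v)) ∧
      τ ∈ autSubgroup (prodAdj AdjG AdjS) ∧
      ¬∃ (σ : Equiv.Perm VG) (ρ : Equiv.Perm VS),
        σ ∈ autSubgroup AdjG ∧ ρ ∈ autSubgroup AdjS ∧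
        ∀ x : VG × VS, τ x = (σ x.1, ρ x.2) := by
  refine ⟨⟨fun p => (if p.2 ∈ U then α p.1 else β p.1, p.2),
    fun p => (if p.2 ∈ U then α.symm p.1 else β.symm p.1, p.2),
    fun p => by by_cases h : p.2 ∈ U <;> simp [h],
    fun p => by by_cases h : p.2 ∈ U <;> simp [h]⟩, fun s v => rfl, ?_, ?_⟩
  · intro x y
    rcases x with ⟨s, u⟩; rcases y with ⟨t, w⟩
    simp only [prodAdj, Equiv.coe_fn_mk]
    constructor
    · rintro ⟨hG, hS⟩
      refine ⟨?_, hS⟩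
      rcases hbip u w hS with ⟨hu, hw⟩ | ⟨hu, hw⟩
      · rw [if_pos hu, if_neg (fun h => hdisj.ne_of_mem h hw rfl)]
        exact (hTF s t).mp hG
      · rw [if_neg (fun h => hdisj.ne_of_mem h hu rfl), if_pos hw]
        exact hsG ((hTF t s).mp (hsG hG))
    · rintro ⟨hG, hS⟩
      refine ⟨?_, hS⟩
      rcases hbip u w hS with ⟨hu, hw⟩ | ⟨hu, hw⟩
      · rw [if_pos hu, if_neg (fun h => hdisj.ne_of_mem h hw rfl)] at hG
        exact (hTF s t).mpr hG
      · rw [if_neg (fun h => hdisj.ne_of_mem h hu rfl), if_pos hw] at hG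
        exact hsG ((hTF t s).mpr (hsG hG))
  · rintro ⟨σ, ρ, _, _, h⟩
    obtain ⟨u, hu⟩ := hU
    obtain ⟨w, hw⟩ := hW
    apply hne
    ext s
    have h1 := congrArg Prod.fst (h (s, u))
    have h2 := congrArg Prod.fst (h (s, w))
    simp only [Equiv.coe_fn_mk, if_pos hu,
      if_neg (fun h => hdisj.ne_of_mem h hw rfl)] at h1 h2
    rw [h1, ← h2]
end

section
/- Let Γ and Σ be connected graphs with Γ non-bipartite and Σ bipartite with bipartition {U,W}. Then the direct product Γ × Σ is connected and bipartite with bipartition {V(Γ)×U, V(Γ)×W}. -/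
/-- Walks of length `n` in a graph with adjacency relation `A`. -/
def walkN {X : Type*} (A : X → X → Prop) : ℕ → X → X → Prop
  | 0 => Eq
  | n + 1 => fun u v => ∃ w, A u w ∧ walkN A n w v

lemma walkN_trans {X : Type*} {A : X → X → Prop} :
    ∀ {n m : ℕ} {u v w : X}, walkN A n u v → walkN A m v w → walkN A (n + m) u w := by
  intro n
  induction n with
  | zero => intro m u v w h1 h2; cases h1; rwa [Nat.zero_add]
  | succ n ih =>
      intro m u v w h1 h2
      obtain ⟨z, hz, hrest⟩ := h1
      rw [Nat.succ_add]
      exact ⟨z, hz, ih hrest h2⟩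

lemma walkN_one {X : Type*} {A : X → X → Prop} {u v : X} (h : A u v) :
    walkN A 1 u v := ⟨v, h, rfl⟩

lemma walkN_symm {X : Type*} {A : X → X → Prop} (hs : Symmetric A) :
    ∀ {n : ℕ} {u v : X}, walkN A n u v → walkN A n v u := by
  intro n
  induction n with
  | zero => intro u v h; cases h; rfl
  | succ n ih =>
      intro u v h
      obtain ⟨z, hz, hrest⟩ := h
      exact walkN_trans (ih hrest) (walkN_one (hs hz))

lemma rtg_of_walkN {X : Type*} {A : X → X → Prop} :
    ∀ {n : ℕ} {u v : X}, walkN A n u v → Relation.ReflTransGen A u v := by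
  intro n
  induction n with
  | zero => intro u v h; cases h; rfl
  | succ n ih =>
      intro u v h
      obtain ⟨z, hz, hrest⟩ := h
      exact Relation.ReflTransGen.head hz (ih hrest)

lemma exists_walkN_of_rtg {X : Type*} {A : X → X → Prop} {u v : X}
    (h : Relation.ReflTransGen A u v) : ∃ n, walkN A n u v := by
  induction h with
  | refl => exact ⟨0, rfl⟩
  | tail _ hbc ih =>
      obtain ⟨n, hn⟩ := ih
      exact ⟨n + 1, walkN_trans hn (walkN_one hbc)⟩

/-- Prepend `j` closed walks of length two (using a neighbor of `u`). -/
lemma walkN_add_two_mul {X : Type*} {A : X → X → Prop} (hs : Symmetric A)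
    {u w : X} (hA : A u w) :
    ∀ (j : ℕ) {n : ℕ} {v : X}, walkN A n u v → walkN A (n + 2 * j) u v := by
  intro j
  induction j with
  | zero => intro n v h; simpa using h
  | succ j ih =>
      intro n v h
      have h2 : walkN A 2 u u := ⟨w, hA, u, hs hA, rfl⟩
      have := walkN_trans h2 (ih h)
      have heq : 2 + (n + 2 * j) = n + 2 * (j + 1) := by ring
      rwa [heq] at this

/-- A connected non-bipartite graph has an odd closed walk. -/
lemma exists_odd_closed {X : Type*} {A : X → X → Prop} (hs : Symmetric A)
    (hconn : ∀ u v : X, Relation.ReflTransGen A u v)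
    (hnb : ¬∃ c : X → Bool, ∀ u v, A u v → c u ≠ c v) :
    ∃ u n, Odd n ∧ walkN A n u u := by
  classical
  by_contra h
  push_neg at h
  apply hnb
  by_cases hX : Nonempty X
  · obtain ⟨v0⟩ := hX
    refine ⟨fun v => decide (∃ n, Odd n ∧ walkN A n v0 v), ?_⟩
    intro u v hA hc
    simp only [decide_eq_decide] at hc
    obtain ⟨a, ha⟩ := exists_walkN_of_rtg (hconn v0 u)
    have key : ∀ (x : X) (n m : ℕ), walkN A n v0 x → walkN A m v0 x →
        Odd (n + m) → False := by
      intro x n m h1 h2 hodd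
      exact h v0 (n + m) hodd (walkN_trans h1 (walkN_symm hs h2))
    have hav : walkN A (a + 1) v0 v := walkN_trans ha (walkN_one hA)
    rcases Nat.even_or_odd a with hae | hao
    · have hPu : ∃ n, Odd n ∧ walkN A n v0 u :=
        hc.mpr ⟨a + 1, by rw [Nat.even_iff] at hae; rw [Nat.odd_iff]; omega, hav⟩
      obtain ⟨n, hno, hn⟩ := hPu
      exact key u n a hn ha
        (by rw [Nat.odd_iff] at *; rw [Nat.even_iff] at hae; omega)
    · have hPv : ∃ n, Odd n ∧ walkN A n v0 v := hc.mp ⟨a, hao, ha⟩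
      obtain ⟨n, hno, hn⟩ := hPv
      exact key v n (a + 1) hn hav
        (by rw [Nat.odd_iff] at *; omega)
  · exact ⟨fun _ => true, fun u v _ _ => hX ⟨u⟩⟩

/-- Walks in both factors of equal length give a walk in the direct product. -/
lemma walkN_prod {X Y : Type*} {A : X → X → Prop} {B : Y → Y → Prop} :
    ∀ {n : ℕ} {u v : X} {s t : Y}, walkN A n u v → walkN B n s t →
      walkN (prodAdj A B) n (u, s) (v, t) := by
  intro n
  induction n with
  | zero => intro u v s t h1 h2; cases h1; cases h2; rfl
  | succ n ih =>
      intro u v s t h1 h2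
      obtain ⟨z, hz, h1'⟩ := h1
      obtain ⟨w, hw, h2'⟩ := h2
      exact ⟨(z, w), ⟨hz, hw⟩, ih h1' h2'⟩

lemma walkN_succ_iff {X : Type*} {A : X → X → Prop} {n : ℕ} {u v : X} :
    walkN A (n + 1) u v ↔ ∃ w, A u w ∧ walkN A n w v := Iff.rfl

/-- Let `Γ` be connected non-bipartite and `Σ` connected bipartite with
bipartition `{U, W}`. Then `Γ × Σ` is connected and bipartite with bipartition
`{V(Γ) × U, V(Γ) × W}`. -/
theorem stmt_14 {VG VS : Type*} [Fintype VG] [Fintype VS]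
    (AdjG : VG → VG → Prop) (hsG : Symmetric AdjG)
    (hconnG : ∀ u v : VG, Relation.ReflTransGen AdjG u v)
    (hnbG : ¬∃ c : VG → Bool, ∀ u v, AdjG u v → c u ≠ c v)
    (AdjS : VS → VS → Prop) (hsS : Symmetric AdjS)
    (hconnS : ∀ u v : VS, Relation.ReflTransGen AdjS u v)
    (U W : Set VS) (hdisj : Disjoint U W) (hcover : U ∪ W = Set.univ)
    (hU : U.Nonempty) (hW : W.Nonempty)
    (hbip : ∀ u v, AdjS u v → (u ∈ U ∧ v ∈ W) ∨ (u ∈ W ∧ v ∈ U)) :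
    (∀ x y : VG × VS, Relation.ReflTransGen (prodAdj AdjG AdjS) x y) ∧
    (∀ x y : VG × VS, prodAdj AdjG AdjS x y →
      (x.2 ∈ U ∧ y.2 ∈ W) ∨ (x.2 ∈ W ∧ y.2 ∈ U)) := by
  constructor
  · rintro ⟨g1, s1⟩ ⟨g2, s2⟩
    obtain ⟨u0g, n0, hn0odd, hn0⟩ := exists_odd_closed hsG hconnG hnbG
    obtain ⟨a, ha⟩ := exists_walkN_of_rtg (hconnG g1 u0g)
    have hloop : walkN AdjG (a + (n0 + a)) g1 g1 :=
      walkN_trans ha (walkN_trans hn0 (walkN_symm hsG ha))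
    set N := a + (n0 + a) with hN
    have hNodd : Odd N := by
      rw [Nat.odd_iff] at *
      omega
    have hnbrG : ∃ w, AdjG g1 w := by
      obtain ⟨p, hp⟩ : ∃ p, N = p + 1 := by
        rw [Nat.odd_iff] at hNodd; exact ⟨N - 1, by omega⟩
      rw [hp, walkN_succ_iff] at hloop
      obtain ⟨w, hw, -⟩ := hloop
      exact ⟨w, hw⟩
    obtain ⟨wg, hwg⟩ := hnbrG
    obtain ⟨k, hk⟩ := exists_walkN_of_rtg (hconnG g1 g2)
    have hGamma : ∀ d, walkN AdjG (k + N + d) g1 g2 := by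
      intro d
      rcases Nat.even_or_odd d with ⟨j, hj⟩ | ⟨j, hj⟩
      · have := walkN_add_two_mul hsG hwg j (walkN_trans hloop hk)
        have heq : N + k + 2 * j = k + N + d := by omega
        rwa [heq] at this
      · obtain ⟨t, ht⟩ := hNodd
        have := walkN_add_two_mul hsG hwg (t + j + 1) hk
        have heq : k + 2 * (t + j + 1) = k + N + d := by omega
        rwa [heq] at this
    have hnbrS : ∃ t, AdjS s1 t := by
      have hmem : s1 ∈ U ∪ W := hcover ▸ Set.mem_univ s1
      obtain ⟨w0, hw0⟩ := hW
      obtain ⟨u0, hu0⟩ := hU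
      rcases hmem with h1 | h1
      · rcases (hconnS s1 w0).cases_head with heq | ⟨x, hx, -⟩
        · exact (Set.disjoint_left.mp hdisj h1 (by rw [heq]; exact hw0)).elim
        · exact ⟨x, hx⟩
      · rcases (hconnS s1 u0).cases_head with heq | ⟨x, hx, -⟩
        · exact (Set.disjoint_left.mp hdisj (by rw [heq]; exact hu0) h1).elim
        · exact ⟨x, hx⟩
    obtain ⟨ws, hws⟩ := hnbrS
    obtain ⟨m, hm⟩ := exists_walkN_of_rtg (hconnS s1 s2)
    have hSwalk : walkN AdjS (m + 2 * (k + N)) s1 s2 :=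
      walkN_add_two_mul hsS hws (k + N) hm
    have hGwalk : walkN AdjG (m + 2 * (k + N)) g1 g2 := by
      have := hGamma (m + k + N)
      have heq : k + N + (m + k + N) = m + 2 * (k + N) := by ring
      rwa [heq] at this
    exact rtg_of_walkN (walkN_prod hGwalk hSwalk)
  · intro x y h
    exact hbip x.2 y.2 h.2
end

section
/- Let Γ be a connected graph and n ≥ 3. Suppose V(Γ) admits a partition {L₁,…,Lₙ} into independent sets and a partition 𝒫 satisfying: (a) |P ∩ Lᵢ| = 1 for all P ∈ 𝒫 and i; (b) whenever there are edges of Γ from P to P′ and from Lᵢ to Lⱼ, there is an edge from P∩Lᵢ to P′∩Lⱼ; (c) for all P,P′ the quantity |N_Γ(x) ∩ P′| equals a constant d_{P,P′} ∈ {0,2} for all x ∈ P. Then Γ ≅ Δ × Cₙ for some graph Δ. -/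
section Aux

variable {X : Type} (E : X → X → Prop)

open Classical in
/-- The neighbour of `i` other than `a`. -/
noncomputable def onb (i a : X) : X :=
  if h : ∃ c, E i c ∧ c ≠ a then h.choose else a

variable {E}

lemma pair_eq_pair {s : Set X} {x y a b : X} (hs : s = {x, y}) (hxy : x ≠ y)
    (hab : a ≠ b) (hma : a ∈ s) (hmb : b ∈ s) : s = {a, b} := by
  subst hs
  simp only [Set.mem_insert_iff, Set.mem_singleton_iff] at hma hmb
  rcases hma with rfl | rfl <;> rcases hmb with rfl | rfl <;>
      simp_all [Set.pair_comm]

variable (hdeg : ∀ i, {j | E i j}.ncard = 2)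

include hdeg

lemma onb_ex {i a : X} (h : E i a) : ∃ c, E i c ∧ c ≠ a := by
  obtain ⟨x, y, hxy, hs⟩ := Set.ncard_eq_two.mp (hdeg i)
  have hmem : a ∈ ({x, y} : Set X) := hs ▸ h
  have hx : E i x := by rw [show E i x ↔ x ∈ {j | E i j} from Iff.rfl, hs]; simp
  have hy : E i y := by rw [show E i y ↔ y ∈ {j | E i j} from Iff.rfl, hs]; simp
  rcases hmem with rfl | rfl
  · exact ⟨y, hy, fun hya => hxy hya.symm⟩
  · exact ⟨x, hx, hxy⟩

lemma onb_spec {i a : X} (h : E i a) : E i (onb E i a) ∧ onb E i a ≠ a := by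
  have hex := onb_ex hdeg h
  rw [onb, dif_pos hex]
  exact hex.choose_spec

lemma onb_uniq {i a c : X} (h : E i a) (hc : E i c) (hca : c ≠ a) :
    c = onb E i a := by
  obtain ⟨x, y, hxy, hs⟩ := Set.ncard_eq_two.mp (hdeg i)
  obtain ⟨ho, hone⟩ := onb_spec hdeg h
  have hma : a ∈ ({x, y} : Set X) := hs ▸ h
  have hmc : c ∈ ({x, y} : Set X) := hs ▸ hc
  have hmo : onb E i a ∈ ({x, y} : Set X) := hs ▸ ho
  rcases hma with rfl | rfl <;> rcases hmc with rfl | rfl <;>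
    rcases hmo with ho' | ho' <;> simp_all

lemma onb_invol {i a : X} (h : E i a) : onb E i (onb E i a) = a := by
  obtain ⟨ho, hone⟩ := onb_spec hdeg h
  exact (onb_uniq hdeg ho h (Ne.symm hone)).symm

end Aux

section Seq

variable {X : Type} (E : X → X → Prop) (v w : X)

/-- Walk along the graph: `(a,b) ↦ (b, other neighbour of b)`. -/
noncomputable def cycSeq : ℕ → X × X :=
  fun k => (fun p => (p.2, onb E p.2 p.1))^[k] (v, w)

lemma cycSeq_zero : cycSeq E v w 0 = (v, w) := rfl

lemma cycSeq_succ (k : ℕ) :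
    cycSeq E v w (k + 1) = ((cycSeq E v w k).2, onb E (cycSeq E v w k).2 (cycSeq E v w k).1) := by
  unfold cycSeq
  rw [Function.iterate_succ_apply']

variable {E v w}
variable (hdeg : ∀ i, {j | E i j}.ncard = 2) (hsym : Symmetric E) (hvw : E v w)

include hdeg hsym hvw

lemma cycSeq_inv (k : ℕ) : E (cycSeq E v w k).1 (cycSeq E v w k).2 := by
  induction k with
  | zero => exact hvw
  | succ k ih =>
    rw [cycSeq_succ]
    exact (onb_spec hdeg (hsym ih)).1

lemma cycSeq_back (k : ℕ) :
    cycSeq E v w k = (onb E (cycSeq E v w (k+1)).1 (cycSeq E v w (k+1)).2,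
      (cycSeq E v w (k+1)).1) := by
  have h := cycSeq_inv hdeg hsym hvw k
  rw [cycSeq_succ]
  exact Prod.ext (onb_invol hdeg (hsym h)).symm rfl

lemma cycSeq_back_inj {k k' : ℕ} (h : cycSeq E v w (k+1) = cycSeq E v w (k'+1)) :
    cycSeq E v w k = cycSeq E v w k' := by
  rw [cycSeq_back hdeg hsym hvw k, cycSeq_back hdeg hsym hvw k', h]

end Seq

lemma cycle_core {X : Type} [Fintype X] [Nonempty X] {E : X → X → Prop}
    (hsym : Symmetric E) (hirr : ∀ i, ¬E i i)
    (hdeg : ∀ i, {j | E i j}.ncard = 2)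
    (hconn : ∀ i j, Relation.ReflTransGen E i j) :
    ∃ m : ℕ, 0 < m ∧ ∃ G : ZMod m → X,
      Function.Bijective G ∧ ∀ a b, E (G a) (G b) ↔ cycAdj m a b := by
  classical
  obtain ⟨v⟩ := ‹Nonempty X›
  obtain ⟨w, hvw⟩ : {j | E v j}.Nonempty := by
    apply Set.nonempty_of_ncard_ne_zero; rw [hdeg v]; omega
  set g : ℕ → X := fun k => (cycSeq E v w k).1 with hgdef
  have hGk : ∀ k, g k = (cycSeq E v w k).1 := fun _ => rfl
  have hg2 : ∀ k, (cycSeq E v w k).2 = g (k + 1) := by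
    intro k; rw [hGk, cycSeq_succ]
  have pairEq : ∀ k, cycSeq E v w k = (g k, g (k+1)) := fun k =>
    Prod.ext rfl (hg2 k)
  have hEg : ∀ k, E (g k) (g (k+1)) := by
    intro k
    have h := cycSeq_inv hdeg hsym hvw k
    rwa [pairEq k] at h
  have hrec : ∀ k, g (k+2) = onb E (g (k+1)) (g k) := by
    intro k
    have h := congrArg Prod.snd (cycSeq_succ E v w k)
    rw [pairEq k] at h
    rw [hg2 (k+1)] at h
    exact h
  -- existence of a period
  have hex : ∃ k, 0 < k ∧ cycSeq E v w k = cycSeq E v w 0 := by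
    obtain ⟨a, b, hab, heq⟩ := Finite.exists_ne_map_eq_of_infinite (cycSeq E v w)
    wlog hlt : a < b generalizing a b
    · exact this b a hab.symm heq.symm (by omega)
    have back : ∀ t, t ≤ a → cycSeq E v w (a - t) = cycSeq E v w (b - t) := by
      intro t
      induction t with
      | zero => intro _; simpa using heq
      | succ t ih =>
        intro ht
        have h1 := ih (by omega)
        rw [show a - t = (a - (t+1)) + 1 by omega,
            show b - t = (b - (t+1)) + 1 by omega] at h1
        exact cycSeq_back_inj hdeg hsym hvw h1
    have h := back a le_rfl
    simp only [Nat.sub_self] at h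
    exact ⟨b - a, by omega, h.symm⟩
  set m := Nat.find hex with hmdef
  obtain ⟨hm0, hmper⟩ : 0 < m ∧ cycSeq E v w m = cycSeq E v w 0 := Nat.find_spec hex
  have hmin : ∀ k, 0 < k → k < m → cycSeq E v w k ≠ cycSeq E v w 0 := by
    intro k hk1 hk2 hk3
    exact Nat.find_min hex hk2 ⟨hk1, hk3⟩
  haveI : NeZero m := ⟨by omega⟩
  have per : ∀ k, cycSeq E v w (k + m) = cycSeq E v w k := by
    intro k
    induction k with
    | zero => simpa using hmper
    | succ k ih => rw [show k+1+m = (k+m)+1 by omega, cycSeq_succ, ih, ← cycSeq_succ]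
  have perg : ∀ k t, g (k + m * t) = g k := by
    intro k t
    induction t with
    | zero => simp
    | succ t ih =>
      rw [show k + m*(t+1) = (k + m*t) + m by ring, hGk, per (k + m*t), ← hGk]
      exact ih
  have gmod : ∀ j, g j = g (j % m) := by
    intro j
    conv_lhs => rw [← Nat.mod_add_div j m]
    exact perg (j % m) (j / m)
  set G : ZMod m → X := fun k => g k.val with hGdef
  have hGval : ∀ k : ZMod m, G k = g k.val := fun _ => rfl
  have Gcast : ∀ j : ℕ, G (j : ZMod m) = g j := by
    intro j
    rw [hGval, ZMod.val_natCast]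
    exact (gmod j).symm
  have hkval : ∀ k : ZMod m, ((k.val : ℕ) : ZMod m) = k := by
    intro k; simp [ZMod.natCast_val]
  have Gadd : ∀ (k : ZMod m) (t : ℕ), G (k + t) = g (k.val + t) := by
    intro k t
    rw [← Gcast (k.val + t), Nat.cast_add, hkval]
  have hEG : ∀ k : ZMod m, E (G k) (G (k + 1)) := by
    intro k
    have h1 := Gadd k 1; rw [Nat.cast_one] at h1
    rw [h1, hGval]
    exact hEg k.val
  have hrecG : ∀ k : ZMod m, G (k + 2) = onb E (G (k+1)) (G k) := by
    intro k
    have h2 := Gadd k 2; rw [Nat.cast_two] at h2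
    have h1 := Gadd k 1; rw [Nat.cast_one] at h1
    rw [h2, h1, hGval, hrec k.val]
  have hneG : ∀ k : ZMod m, G (k + 2) ≠ G k := by
    intro k
    rw [hrecG k]
    exact (onb_spec hdeg (hsym (hEG k))).2
  have hnbr : ∀ k : ZMod m, {j | E (G k) j} = {G (k - 1), G (k + 1)} := by
    intro k
    obtain ⟨x, y, hxy, hs⟩ := Set.ncard_eq_two.mp (hdeg (G k))
    refine pair_eq_pair hs hxy ?_ ?_ ?_
    · intro h
      refine hneG (k-1) ?_
      rw [show k-1+2 = k+1 by ring]
      exact h.symm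
    · show E (G k) (G (k-1))
      have h := hsym (hEG (k-1))
      rwa [show k-1+1 = k by ring] at h
    · exact hEG k
  have fwd : ∀ a b : ZMod m, G a = G b → G (a+1) = G (b+1) →
      ∀ t : ℕ, G (a + t) = G (b + t) ∧ G (a + t + 1) = G (b + t + 1) := by
    intro a b h0 h1 t
    induction t with
    | zero => simpa using ⟨h0, h1⟩
    | succ t ih =>
      constructor
      · rw [show (a + (t+1 : ℕ) : ZMod m) = a + t + 1 by push_cast; ring,
            show (b + (t+1 : ℕ) : ZMod m) = b + t + 1 by push_cast; ring]
        exact ih.2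
      · rw [show (a + (t+1:ℕ) + 1 : ZMod m) = (a + t) + 2 by push_cast; ring,
            show (b + (t+1:ℕ) + 1 : ZMod m) = (b + t) + 2 by push_cast; ring,
            hrecG, hrecG, ih.1, ih.2]
  have bwd : ∀ a b : ZMod m, G a = G b → G (a+1) = G (b-1) →
      ∀ t : ℕ, G (a + t) = G (b - t) ∧ G (a + t + 1) = G (b - t - 1) := by
    intro a b h0 h1 t
    induction t with
    | zero => simpa using ⟨h0, h1⟩
    | succ t ih =>
      have hE2 : E (G (b - t - 1)) (G (b - t - 2)) := by
        have h := hsym (hEG (b - t - 2))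
        rwa [show b-t-2+1 = b-t-1 by ring] at h
      have key : G (b - t - 2) = onb E (G (b - t - 1)) (G (b - t)) := by
        have h2 : G (b - t) = onb E (G (b-t-1)) (G (b-t-2)) := by
          have h := hrecG (b - t - 2)
          rwa [show (b-t-2) + 2 = b-t by ring, show (b-t-2)+1 = b-t-1 by ring] at h
        rw [h2]
        exact (onb_invol hdeg hE2).symm
      constructor
      · rw [show (a + (t+1 : ℕ) : ZMod m) = a + t + 1 by push_cast; ring,
            show (b - (t+1 : ℕ) : ZMod m) = b - t - 1 by push_cast; ring]
        exact ih.2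
      · rw [show (a + (t+1:ℕ) + 1 : ZMod m) = (a + t) + 2 by push_cast; ring,
            show (b - (t+1:ℕ) - 1 : ZMod m) = b - t - 2 by push_cast; ring,
            hrecG, ih.1, ih.2]
        exact key.symm
  have noPer : ∀ d : ZMod m, d ≠ 0 → (∀ k : ZMod m, G (k + d) = G k) → False := by
    intro d hd hper
    have h0 : g d.val = g 0 := by
      have h := hper 0; rw [zero_add] at h
      rw [hGval, hGval] at h
      rwa [ZMod.val_zero] at h
    have h1 : g (d.val + 1) = g 1 := by
      have h := hper 1
      rw [add_comm (1 : ZMod m) d] at h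
      have h2 := Gadd d 1; rw [Nat.cast_one] at h2
      rw [h2] at h
      have h3 := Gcast 1; rw [Nat.cast_one] at h3
      rwa [h3] at h
    have hcyc : cycSeq E v w d.val = cycSeq E v w 0 := by
      rw [pairEq, pairEq, h0, h1]
    exact hmin d.val (Nat.pos_of_ne_zero (fun h => hd ((ZMod.val_eq_zero d).mp h)))
      (ZMod.val_lt d) hcyc
  have hinj : Function.Injective G := by
    intro a b hab
    by_contra hne
    have hmem : G (a+1) ∈ {j | E (G b) j} := by
      show E (G b) (G (a+1)); rw [← hab]; exact hEG a
    rw [hnbr b] at hmem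
    rcases hmem with h | h
    · -- reflection case
      have hrefl : ∀ x : ZMod m, G x = G (a + b - x) := by
        intro x
        have h2 := (bwd a b hab h (x - a).val).1
        rw [hkval (x - a)] at h2
        rwa [show a + (x - a) = x by ring, show b - (x - a) = a + b - x by ring] at h2
      rcases Nat.even_or_odd ((a + b : ZMod m).val) with ⟨u, hu⟩ | ⟨u, hu⟩
      · have h2x : (u : ZMod m) + u = a + b := by
          have h3 : ((u + u : ℕ) : ZMod m) = a + b := by rw [← hu, hkval]
          push_cast at h3; exact h3
        have hx1 := hrefl ((u:ZMod m) + 1)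
        rw [show a + b - ((u:ZMod m)+1) = (u:ZMod m) - 1 by rw [← h2x]; ring] at hx1
        refine hneG ((u:ZMod m) - 1) ?_
        rw [show (u:ZMod m) - 1 + 2 = (u:ZMod m)+1 by ring]
        exact hx1
      · have h2x : 2*(u : ZMod m) + 1 = a + b := by
          have h3 : ((2*u + 1 : ℕ) : ZMod m) = a + b := by rw [← hu, hkval]
          push_cast at h3; exact h3
        have hx1 := hrefl (u : ZMod m)
        rw [show a + b - (u:ZMod m) = (u:ZMod m) + 1 by rw [← h2x]; ring] at hx1
        refine hirr (G (u : ZMod m)) ?_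
        have h4 := hEG (u : ZMod m)
        rwa [← hx1] at h4
    · -- period case
      refine noPer (b - a) (sub_ne_zero.mpr (Ne.symm hne)) ?_
      intro k
      have h2 := (fwd a b hab h (k - a).val).1
      rw [hkval (k - a)] at h2
      rw [show a + (k - a) = k by ring, show b + (k - a) = k + (b - a) by ring] at h2
      exact h2.symm
  have hsurj : Function.Surjective G := by
    intro y
    have hcon := hconn (G 0) y
    induction hcon with
    | refl => exact ⟨0, rfl⟩
    | @tail b c hst hlast ih =>
      obtain ⟨k, rfl⟩ := ih
      have hm : c ∈ {j | E (G k) j} := hlast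
      rw [hnbr k] at hm
      rcases hm with h | h
      · exact ⟨k - 1, h.symm⟩
      · exact ⟨k + 1, h.symm⟩
  refine ⟨m, hm0, G, ⟨hinj, hsurj⟩, ?_⟩
  intro a b
  constructor
  · intro hEab
    have hm : G b ∈ {j | E (G a) j} := hEab
    rw [hnbr a] at hm
    rcases hm with h | h
    · left
      rw [hinj h]; ring
    · right
      exact hinj h
  · intro hc
    rcases hc with h | h
    · rw [h]
      exact hsym (hEG b)
    · rw [h]
      exact hEG a

lemma cycle_iso {n : ℕ} [NeZero n] {E : ZMod n → ZMod n → Prop}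
    (hsym : Symmetric E) (hirr : ∀ i, ¬E i i)
    (hdeg : ∀ i, {j | E i j}.ncard = 2)
    (hconn : ∀ i j, Relation.ReflTransGen E i j) :
    ∃ σ : ZMod n ≃ ZMod n, ∀ i j, E i j ↔ cycAdj n (σ i) (σ j) := by
  obtain ⟨m, hm0, G, hbij, hG⟩ := cycle_core hsym hirr hdeg hconn
  haveI : NeZero m := ⟨by omega⟩
  have hmn : m = n := by
    have h := Fintype.card_of_bijective hbij
    rwa [ZMod.card, ZMod.card] at h
  subst hmn
  refine ⟨(Equiv.ofBijective G hbij).symm, ?_⟩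
  intro i j
  conv_lhs => rw [← Equiv.apply_symm_apply (Equiv.ofBijective G hbij) i,
                  ← Equiv.apply_symm_apply (Equiv.ofBijective G hbij) j]
  exact hG _ _


/-- If a connected graph `Γ` admits a partition `{L₁, …, Lₙ}` into
independent sets and a partition `𝒫` satisfying conditions (a), (b), (c), then
`Γ ≅ Δ × Cₙ` for some graph `Δ`. -/
theorem stmt_17 {V : Type} [Fintype V]
    (Adj : V → V → Prop) (hsymm : Symmetric Adj)
    (hconn : ∀ u v : V, Relation.ReflTransGen Adj u v)
    (n : ℕ) (hn : 3 ≤ n)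
    (L : ZMod n → Set V)
    (hLdisj : Pairwise fun i j => Disjoint (L i) (L j))
    (hLcover : (⋃ i, L i) = Set.univ)
    (hLind : ∀ i, ∀ x ∈ L i, ∀ y ∈ L i, ¬Adj x y)
    (P : Set (Set V)) (hP : Setoid.IsPartition P)
    (ha : ∀ p ∈ P, ∀ i, ∃! x, x ∈ p ∩ L i)
    (hb : ∀ p ∈ P, ∀ p' ∈ P, ∀ i j : ZMod n,
      (∃ x ∈ p, ∃ y ∈ p', Adj x y) → (∃ x ∈ L i, ∃ y ∈ L j, Adj x y) →
      ∃ x ∈ p ∩ L i, ∃ y ∈ p' ∩ L j, Adj x y)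
    (hc : ∀ p ∈ P, ∀ p' ∈ P, ∃ d : ℕ, (d = 0 ∨ d = 2) ∧
      ∀ x ∈ p, Set.ncard {y ∈ p' | Adj x y} = d) :
    ∃ (VD : Type) (DAdj : VD → VD → Prop), Symmetric DAdj ∧
      ∃ e : V ≃ VD × ZMod n,
        ∀ x y, Adj x y ↔ (DAdj (e x).1 (e y).1 ∧ cycAdj n (e x).2 (e y).2) := by
  classical
  haveI : NeZero n := ⟨by omega⟩
  haveI : Fact (1 < n) := ⟨by omega⟩
  rcases isEmpty_or_nonempty V with hV | hV
  · exact ⟨Empty, fun _ _ => False, fun _ _ h => h,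
      Equiv.equivOfIsEmpty V (Empty × ZMod n), fun x _ => isEmptyElim x⟩
  -- the layer function
  have hlayer_ex : ∀ x : V, ∃ i, x ∈ L i := by
    intro x
    have hx : x ∈ ⋃ i, L i := by rw [hLcover]; trivial
    simpa using hx
  choose layer hlayer using hlayer_ex
  have layer_eq : ∀ {x : V} {i : ZMod n}, x ∈ L i → layer x = i := by
    intro x i hx
    by_contra hne
    exact Set.disjoint_left.mp (hLdisj hne) (hlayer x) hx
  -- the part function
  have hpart_ex : ∀ x : V, ∃ p, p ∈ P ∧ x ∈ p := fun x => (hP.2 x).exists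
  choose part hpartP hpartmem using hpart_ex
  have part_eq : ∀ {x : V} {p : Set V}, p ∈ P → x ∈ p → part x = p := by
    intro x p hp hx
    obtain ⟨q, _, huniq⟩ := hP.2 x
    rw [huniq (part x) ⟨hpartP x, hpartmem x⟩]
    exact (huniq p ⟨hp, hx⟩).symm
  -- uniqueness of the element of p ∩ L i
  have elt_unique : ∀ {p : Set V}, p ∈ P → ∀ {i : ZMod n} {x y : V},
      x ∈ p → x ∈ L i → y ∈ p → y ∈ L i → x = y := by
    intro p hp i x y hx1 hx2 hy1 hy2
    obtain ⟨z, _, hu⟩ := ha p hp i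
    rw [hu x ⟨hx1, hx2⟩, hu y ⟨hy1, hy2⟩]
  -- the layer graph
  set EL : ZMod n → ZMod n → Prop := fun i j => ∃ x ∈ L i, ∃ y ∈ L j, Adj x y with hELdef
  have hELsym : Symmetric EL := by
    rintro i j ⟨x, hx, y, hy, h⟩; exact ⟨y, hy, x, hx, hsymm h⟩
  have hELirr : ∀ i, ¬EL i i := by
    rintro i ⟨x, hx, y, hy, h⟩; exact hLind i x hx y hy h
  -- an edge of Γ
  obtain ⟨v0⟩ := hV
  obtain ⟨a0, ha0⟩ := (ha (part v0) (hpartP v0) 0).exists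
  obtain ⟨b0, hb0⟩ := (ha (part v0) (hpartP v0) 1).exists
  have hne0 : a0 ≠ b0 := by
    intro h
    have h01 : (0 : ZMod n) = 1 := by
      rw [← layer_eq ha0.2, h, layer_eq hb0.2]
    exact zero_ne_one h01
  obtain ⟨y0, hy0adj, -⟩ :=
    (Relation.ReflTransGen.cases_head (hconn a0 b0)).resolve_left hne0
  set p0 := part v0 with hp0def
  have hp0 : p0 ∈ P := hpartP v0
  set q0 := part y0 with hq0def
  have hq0 : q0 ∈ P := hpartP y0
  have hedge : ∃ x ∈ p0, ∃ y ∈ q0, Adj x y :=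
    ⟨a0, ha0.1, y0, hpartmem y0, hy0adj⟩
  -- the degree constant is 2
  obtain ⟨d, hd02, hdval⟩ := hc p0 hp0 q0 hq0
  have hd2 : d = 2 := by
    rcases hd02 with h0 | h2
    · exfalso
      have hcard := hdval a0 ha0.1
      rw [h0, Set.ncard_eq_zero (Set.toFinite _)] at hcard
      have : y0 ∈ {y ∈ q0 | Adj a0 y} := ⟨hpartmem y0, hy0adj⟩
      rw [hcard] at this
      exact this
    · exact h2
  -- every layer has exactly two neighbouring layers
  have hELdeg : ∀ i, {j | EL i j}.ncard = 2 := by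
    intro i
    obtain ⟨xi, ⟨hxi_p, hxi_L⟩, -⟩ := ha p0 hp0 i
    have hinj : Set.InjOn layer {y ∈ q0 | Adj xi y} := by
      intro y hy y' hy' hll
      refine elt_unique hq0 hy.1 (hlayer y) hy'.1 ?_
      rw [hll]
      exact hlayer y'
    have himg : {j | EL i j} = layer '' {y ∈ q0 | Adj xi y} := by
      ext j
      constructor
      · rintro ⟨u, hu, z, hz, huz⟩
        obtain ⟨x', ⟨hx'p, hx'L⟩, y', ⟨hy'q, hy'L⟩, hxy'⟩ :=
          hb p0 hp0 q0 hq0 i j hedge ⟨u, hu, z, hz, huz⟩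
        have hxx : x' = xi := elt_unique hp0 hx'p hx'L hxi_p hxi_L
        exact ⟨y', ⟨hy'q, hxx ▸ hxy'⟩, layer_eq hy'L⟩
      · rintro ⟨y, ⟨hyq, hyadj⟩, rfl⟩
        exact ⟨xi, hxi_L, y, hlayer y, hyadj⟩
    rw [himg, Set.ncard_image_of_injOn hinj, hdval xi hxi_p, hd2]
  -- the layer graph is connected
  have hELconn : ∀ i j, Relation.ReflTransGen EL i j := by
    intro i j
    obtain ⟨xi, hxi, -⟩ := ha p0 hp0 i
    obtain ⟨xj, hxj, -⟩ := ha p0 hp0 j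
    have hlift : Relation.ReflTransGen EL (layer xi) (layer xj) := Relation.ReflTransGen.lift (p := EL) layer
      (fun a b hab => show EL (layer a) (layer b) from ⟨a, hlayer a, b, hlayer b, hab⟩) xi xj (hconn xi xj)
    rwa [layer_eq hxi.2, layer_eq hxj.2] at hlift
  -- the layer graph is a cycle
  obtain ⟨σ, hσ⟩ := cycle_iso hELsym hELirr hELdeg hELconn
  -- the key structure lemma
  have KSL : ∀ x y : V, Adj x y ↔
      ((∃ u ∈ part x, ∃ w ∈ part y, Adj u w) ∧ EL (layer x) (layer y)) := by
    intro x y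
    constructor
    · intro h
      exact ⟨⟨x, hpartmem x, y, hpartmem y, h⟩, ⟨x, hlayer x, y, hlayer y, h⟩⟩
    · rintro ⟨h1, h2⟩
      obtain ⟨x', ⟨hx'p, hx'L⟩, y', ⟨hy'p, hy'L⟩, hxy'⟩ :=
        hb (part x) (hpartP x) (part y) (hpartP y) (layer x) (layer y) h1 h2
      have ex : x' = x := elt_unique (hpartP x) hx'p hx'L (hpartmem x) (hlayer x)
      have ey : y' = y := elt_unique (hpartP y) hy'p hy'L (hpartmem y) (hlayer y)
      rwa [ex, ey] at hxy'
  -- the equivalence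
  let VD := {p : Set V // p ∈ P}
  let f : V → VD × ZMod n := fun x => (⟨part x, hpartP x⟩, σ (layer x))
  have hfbij : Function.Bijective f := by
    constructor
    · intro x y hxy
      have h1 : part x = part y := congrArg (fun q => q.1.1) hxy
      have h2 : layer x = layer y := σ.injective (congrArg Prod.snd hxy)
      refine elt_unique (hpartP x) (hpartmem x) (hlayer x) ?_ ?_
      · rw [h1]; exact hpartmem y
      · rw [h2]; exact hlayer y
    · rintro ⟨⟨p, hp⟩, k⟩
      obtain ⟨x, ⟨hxp, hxL⟩, -⟩ := ha p hp (σ.symm k)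
      refine ⟨x, Prod.ext (Subtype.ext (part_eq hp hxp)) ?_⟩
      show σ (layer x) = k
      rw [layer_eq hxL, Equiv.apply_symm_apply]
  refine ⟨VD, fun p q => ∃ x ∈ p.1, ∃ y ∈ q.1, Adj x y, ?_,
    Equiv.ofBijective f hfbij, ?_⟩
  · rintro p q ⟨x, hx, y, hy, h⟩
    exact ⟨y, hy, x, hx, hsymm h⟩
  · intro x y
    rw [KSL x y, hσ (layer x) (layer y)]
    exact Iff.rfl
end

section
/- A nonempty graph Γ is isomorphic to a direct product Δ × Σ of two graphs if and only if V(Γ) admits partitions 𝒫 and ℒ such that: (a) |P ∩ L| = 1 for all P ∈ 𝒫 and L ∈ ℒ; and (b) for P_u, P_v ∈ 𝒫 and L_i, L_j ∈ ℒ, if there exist edges of Γ from P_u to P_v and from L_i to L_j, then there exists an edge of Γ from P_u ∩ L_i to P_v ∩ L_j. -/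
/-- A nonempty graph `Γ` is isomorphic to a direct product `Δ × Σ`
iff `V(Γ)` admits partitions `𝒫` and `ℒ` satisfying conditions (a) and (b). -/
theorem stmt_18 {V : Type} [Fintype V] [Nonempty V]
    (Adj : V → V → Prop) (hsymm : Symmetric Adj) :
    (∃ (A B : Type) (AdjA : A → A → Prop) (AdjB : B → B → Prop),
      Symmetric AdjA ∧ Symmetric AdjB ∧
      ∃ e : V ≃ A × B,
        ∀ x y, Adj x y ↔ (AdjA (e x).1 (e y).1 ∧ AdjB (e x).2 (e y).2)) ↔
    (∃ P L : Set (Set V), Setoid.IsPartition P ∧ Setoid.IsPartition L ∧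
      (∀ p ∈ P, ∀ l ∈ L, ∃! x, x ∈ p ∩ l) ∧
      (∀ p ∈ P, ∀ p' ∈ P, ∀ l ∈ L, ∀ l' ∈ L,
        (∃ x ∈ p, ∃ y ∈ p', Adj x y) → (∃ x ∈ l, ∃ y ∈ l', Adj x y) →
        ∃ x ∈ p ∩ l, ∃ y ∈ p' ∩ l', Adj x y)) := by
  classical
  constructor
  · rintro ⟨A, B, AdjA, AdjB, hA, hB, e, he⟩
    obtain ⟨v0⟩ := ‹Nonempty V›
    refine ⟨Set.range (fun a => {x | (e x).1 = a}),
            Set.range (fun b => {x | (e x).2 = b}), ?_, ?_, ?_, ?_⟩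
    · constructor
      · rintro ⟨a, ha⟩
        have h2 : ({x | (e x).1 = a} : Set V) = ∅ := ha
        have : e.symm (a, (e v0).2) ∈ ({x | (e x).1 = a} : Set V) := by simp
        rw [h2] at this; exact this
      · intro x
        refine ⟨{y | (e y).1 = (e x).1}, ⟨⟨_, rfl⟩, rfl⟩, ?_⟩
        rintro p ⟨⟨a, rfl⟩, hx⟩
        simp only [Set.mem_setOf_eq] at hx
        subst hx; rfl
    · constructor
      · rintro ⟨b, hb⟩
        have h2 : ({x | (e x).2 = b} : Set V) = ∅ := hb
        have : e.symm ((e v0).1, b) ∈ ({x | (e x).2 = b} : Set V) := by simp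
        rw [h2] at this; exact this
      · intro x
        refine ⟨{y | (e y).2 = (e x).2}, ⟨⟨_, rfl⟩, rfl⟩, ?_⟩
        rintro p ⟨⟨b, rfl⟩, hx⟩
        simp only [Set.mem_setOf_eq] at hx
        subst hx; rfl
    · rintro p ⟨a, rfl⟩ l ⟨b, rfl⟩
      refine ⟨e.symm (a, b), by simp [Set.mem_inter_iff], ?_⟩
      rintro y ⟨hy1, hy2⟩
      simp only [Set.mem_setOf_eq] at hy1 hy2
      have : e y = (a, b) := Prod.ext hy1 hy2
      exact e.injective (by simp [this])
    · rintro p ⟨a, rfl⟩ p' ⟨a', rfl⟩ l ⟨b, rfl⟩ l' ⟨b', rfl⟩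
        ⟨x, hx, y, hy, hxy⟩ ⟨z, hz, w, hw, hzw⟩
      simp only [Set.mem_setOf_eq] at hx hy hz hw
      have h1 : AdjA a a' := by
        have := (he x y).1 hxy; rw [hx, hy] at this; exact this.1
      have h2 : AdjB b b' := by
        have := (he z w).1 hzw; rw [hz, hw] at this; exact this.2
      refine ⟨e.symm (a, b), by simp [Set.mem_inter_iff], e.symm (a', b'),
        by simp [Set.mem_inter_iff], ?_⟩
      rw [he]; simp [h1, h2]
  · rintro ⟨P, L, hP, hL, ha, hb⟩
    choose pB hpB using fun x => hP.2 x
    choose lB hlB using fun x => hL.2 x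
    have hpBP : ∀ x, pB x ∈ P := fun x => (hpB x).1.1
    have hxpB : ∀ x, x ∈ pB x := fun x => (hpB x).1.2
    have hpBu : ∀ x p, p ∈ P → x ∈ p → p = pB x := fun x p h1 h2 => (hpB x).2 p ⟨h1, h2⟩
    have hlBL : ∀ x, lB x ∈ L := fun x => (hlB x).1.1
    have hxlB : ∀ x, x ∈ lB x := fun x => (hlB x).1.2
    have hlBu : ∀ x l, l ∈ L → x ∈ l → l = lB x := fun x l h1 h2 => (hlB x).2 l ⟨h1, h2⟩
    set AdjA : {s // s ∈ P} → {s // s ∈ P} → Prop :=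
      fun p q => ∃ x ∈ p.1, ∃ y ∈ q.1, Adj x y with hAdjA
    set AdjB : {s // s ∈ L} → {s // s ∈ L} → Prop :=
      fun p q => ∃ x ∈ p.1, ∃ y ∈ q.1, Adj x y with hAdjB
    have hbij : Function.Bijective
        (fun x : V => ((⟨pB x, hpBP x⟩, ⟨lB x, hlBL x⟩) : {s // s ∈ P} × {s // s ∈ L})) := by
      constructor
      · intro x y hxy
        simp only [Prod.mk.injEq, Subtype.mk.injEq] at hxy
        obtain ⟨z, _, hzu⟩ := ha (pB x) (hpBP x) (lB x) (hlBL x)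
        have h1 := hzu x ⟨hxpB x, hxlB x⟩
        have h2 := hzu y ⟨hxy.1 ▸ hxpB y, hxy.2 ▸ hxlB y⟩
        rw [h1, h2]
      · rintro ⟨⟨p, hp⟩, ⟨l, hl⟩⟩
        obtain ⟨z, ⟨hzp, hzl⟩, _⟩ := ha p hp l hl
        exact ⟨z, by simp [← hpBu z p hp hzp, ← hlBu z l hl hzl]⟩
    set e := Equiv.ofBijective _ hbij with hedef
    refine ⟨{s // s ∈ P}, {s // s ∈ L}, AdjA, AdjB,
      fun p q ⟨x, hx, y, hy, h⟩ => ⟨y, hy, x, hx, hsymm h⟩,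
      fun p q ⟨x, hx, y, hy, h⟩ => ⟨y, hy, x, hx, hsymm h⟩, e, ?_⟩
    intro x y
    constructor
    · intro h
      exact ⟨⟨x, hxpB x, y, hxpB y, h⟩, ⟨x, hxlB x, y, hxlB y, h⟩⟩
    · rintro ⟨h1, h2⟩
      obtain ⟨x', hx', y', hy', hxy'⟩ :=
        hb (pB x) (hpBP x) (pB y) (hpBP y) (lB x) (hlBL x) (lB y) (hlBL y) h1 h2
      obtain ⟨z, _, hzu⟩ := ha (pB x) (hpBP x) (lB x) (hlBL x)
      have ex : x' = x := (hzu x' hx').trans (hzu x ⟨hxpB x, hxlB x⟩).symm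
      obtain ⟨w, _, hwu⟩ := ha (pB y) (hpBP y) (lB y) (hlBL y)
      have ey : y' = y := (hwu y' hy').trans (hwu y ⟨hxpB y, hxlB y⟩).symm
      rw [ex, ey] at hxy'
      exact hxy'
end

section
/- Let Γ be a connected, non-bipartite, twin-free graph and Σ be a connected, twin-free, bipartite graph with bipartition {U,W}. Then every automorphism of S(Γ) □ S(Σ) either stabilizes V(Γ) × U setwise or maps V(Γ) × U onto V(Γ) × W; and there exists σ ∈ Aut(S(Σ)) with σ² = id such that composing with (id, σ) yields an automorphism stabilizing V(Γ) × U, where moreover σ interchanges U and W if σ ≠ id. -/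
/-- The neighborhood of a vertex. -/
def nbhd {X : Type*} (A : X → X → Prop) (u : X) : Set X := {x | A u x}

/-- Adjacency of the graph `B(Γ)`: distinct vertices with a common neighbor. -/
def bAdj {X : Type*} (A : X → X → Prop) : X → X → Prop :=
  fun u v => u ≠ v ∧ ∃ w, A u w ∧ A v w

/-- An edge `{u, v}` of `B(Γ)` is dispensable with respect to `Γ`. -/
def dispensable {X : Type*} (A : X → X → Prop) (u v : X) : Prop :=
  ∃ w, ((nbhd A u ∩ nbhd A v ⊂ nbhd A u ∩ nbhd A w) ∨
        (nbhd A u ⊂ nbhd A w ∧ nbhd A w ⊂ nbhd A v)) ∧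
       ((nbhd A v ∩ nbhd A u ⊂ nbhd A v ∩ nbhd A w) ∨
        (nbhd A v ⊂ nbhd A w ∧ nbhd A w ⊂ nbhd A u))

/-- Adjacency of the Cartesian skeleton `S(Γ)`: edges of `B(Γ)` that are not
dispensable with respect to `Γ`. -/
def sAdj {X : Type*} (A : X → X → Prop) : X → X → Prop :=
  fun u v => bAdj A u v ∧ ¬dispensable A u v

/-- Adjacency of the Cartesian product of two graphs. -/
def boxAdj {X Y : Type*} (A : X → X → Prop) (B : Y → Y → Prop) :
    X × Y → X × Y → Prop :=
  fun p q => (p.1 = q.1 ∧ B p.2 q.2) ∨ (p.2 = q.2 ∧ A p.1 q.1)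

namespace Skel

variable {X Y Z : Type*}

/-- walks of given length -/
def WalkLen (A : X → X → Prop) : ℕ → X → X → Prop
  | 0, x, y => x = y
  | (n+1), x, y => ∃ z, A x z ∧ WalkLen A n z y

theorem walkLen_trans {A : X → X → Prop} :
    ∀ {m n x y z}, WalkLen A m x y → WalkLen A n y z → WalkLen A (m + n) x z := by
  intro m
  induction m with
  | zero => intro n x y z h h'; cases h; simpa using h'
  | succ k ih =>
    rintro n x y z ⟨w, hw, hwk⟩ h'
    have he : k + 1 + n = (k + n) + 1 := by omega
    rw [he]
    exact ⟨w, hw, ih hwk h'⟩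

theorem rtg_walkLen {A : X → X → Prop} {x y : X} (h : Relation.ReflTransGen A x y) :
    ∃ n, WalkLen A n x y := by
  induction h with
  | refl => exact ⟨0, rfl⟩
  | tail _ hstep ih =>
    obtain ⟨n, hn⟩ := ih
    exact ⟨n + 1, walkLen_trans hn ⟨_, hstep, rfl⟩⟩

theorem walkLen_rtg {A : X → X → Prop} :
    ∀ {n x y}, WalkLen A n x y → Relation.ReflTransGen A x y := by
  intro n
  induction n with
  | zero => intro x y h; cases h; rfl
  | succ k ih =>
    rintro x y ⟨z, hz, hw⟩
    exact Relation.ReflTransGen.head hz (ih hw)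

/-- graph distance via sInf -/
noncomputable def gdist (A : X → X → Prop) (x y : X) : ℕ :=
  sInf {n | WalkLen A n x y}

theorem gdist_le {A : X → X → Prop} {x y : X} {n : ℕ} (h : WalkLen A n x y) :
    gdist A x y ≤ n := Nat.sInf_le h

theorem gdist_spec {A : X → X → Prop} {x y : X}
    (h : Relation.ReflTransGen A x y) : WalkLen A (gdist A x y) x y := by
  obtain ⟨n, hn⟩ := rtg_walkLen h
  exact Nat.sInf_mem (⟨n, hn⟩ : {n | WalkLen A n x y}.Nonempty)

theorem gdist_self {A : X → X → Prop} (x : X) : gdist A x x = 0 :=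
  Nat.le_zero.mp (gdist_le (by rfl))

theorem gdist_eq_zero {A : X → X → Prop} {x y : X}
    (h : Relation.ReflTransGen A x y) (h0 : gdist A x y = 0) : x = y := by
  have := gdist_spec h
  rw [h0] at this
  exact this

theorem gdist_triangle {A : X → X → Prop} {x y z : X}
    (hxy : Relation.ReflTransGen A x y) (hyz : Relation.ReflTransGen A y z) :
    gdist A x z ≤ gdist A x y + gdist A y z :=
  gdist_le (walkLen_trans (gdist_spec hxy) (gdist_spec hyz))

section Box

variable {A : X → X → Prop} {B : Y → Y → Prop}

theorem walkLen_box_left : ∀ {n a a'} (b : Y), WalkLen A n a a' →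
    WalkLen (boxAdj A B) n (a, b) (a', b) := by
  intro n
  induction n with
  | zero => intro a a' b h; cases h; rfl
  | succ k ih =>
    rintro a a' b ⟨z, hz, hw⟩
    exact ⟨(z, b), Or.inr ⟨rfl, hz⟩, ih b hw⟩

theorem walkLen_box_right : ∀ {n b b'} (a : X), WalkLen B n b b' →
    WalkLen (boxAdj A B) n (a, b) (a, b') := by
  intro n
  induction n with
  | zero => intro b b' a h; cases h; rfl
  | succ k ih =>
    rintro b b' a ⟨z, hz, hw⟩
    exact ⟨(a, z), Or.inl ⟨rfl, hz⟩, ih a hw⟩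

theorem walkLen_box_proj : ∀ {n} {p q : X × Y}, WalkLen (boxAdj A B) n p q →
    ∃ m k, m + k = n ∧ WalkLen A m p.1 q.1 ∧ WalkLen B k p.2 q.2 := by
  intro n
  induction n with
  | zero => intro p q h; cases h; exact ⟨0, 0, rfl, rfl, rfl⟩
  | succ j ih =>
    rintro p q ⟨r, hr, hw⟩
    obtain ⟨m, k, hmk, h1, h2⟩ := ih hw
    rcases hr with ⟨he, hb⟩ | ⟨he, ha⟩
    · exact ⟨m, k + 1, by omega, by rw [he]; exact h1, ⟨r.2, hb, h2⟩⟩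
    · exact ⟨m + 1, k, by omega, ⟨r.1, ha, h1⟩, by rw [he]; exact h2⟩

theorem rtg_box (hA : ∀ a a' : X, Relation.ReflTransGen A a a')
    (hB : ∀ b b' : Y, Relation.ReflTransGen B b b') :
    ∀ p q : X × Y, Relation.ReflTransGen (boxAdj A B) p q := by
  intro p q
  obtain ⟨m, hm⟩ := rtg_walkLen (hA p.1 q.1)
  obtain ⟨k, hk⟩ := rtg_walkLen (hB p.2 q.2)
  exact walkLen_rtg (walkLen_trans (walkLen_box_left p.2 hm) (walkLen_box_right q.1 hk))

theorem rtg_box_proj_left {p q : X × Y} (h : Relation.ReflTransGen (boxAdj A B) p q) :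
    Relation.ReflTransGen A p.1 q.1 := by
  induction h with
  | refl => rfl
  | tail _ hstep ih =>
    rcases hstep with ⟨he, _⟩ | ⟨_, ha⟩
    · rwa [← he]
    · exact ih.tail ha

theorem rtg_box_proj_right {p q : X × Y} (h : Relation.ReflTransGen (boxAdj A B) p q) :
    Relation.ReflTransGen B p.2 q.2 := by
  induction h with
  | refl => rfl
  | tail _ hstep ih =>
    rcases hstep with ⟨_, hb⟩ | ⟨he, _⟩
    · exact ih.tail hb
    · rwa [← he]

theorem gdist_box (hA : ∀ a a' : X, Relation.ReflTransGen A a a')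
    (hB : ∀ b b' : Y, Relation.ReflTransGen B b b') (p q : X × Y) :
    gdist (boxAdj A B) p q = gdist A p.1 q.1 + gdist B p.2 q.2 := by
  apply le_antisymm
  · exact gdist_le (walkLen_trans (walkLen_box_left p.2 (gdist_spec (hA _ _)))
      (walkLen_box_right q.1 (gdist_spec (hB _ _))))
  · obtain ⟨m, k, hmk, h1, h2⟩ := walkLen_box_proj (gdist_spec (rtg_box hA hB p q))
    calc gdist A p.1 q.1 + gdist B p.2 q.2 ≤ m + k := by
          exact Nat.add_le_add (gdist_le h1) (gdist_le h2)
      _ = _ := hmk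

end Box


/-- relation isomorphism along an equiv -/
def IsoRel (e : X ≃ Y) (A : X → X → Prop) (B : Y → Y → Prop) : Prop :=
  ∀ x y, A x y ↔ B (e x) (e y)

theorem IsoRel.symm {e : X ≃ Y} {A B} (h : IsoRel e A B) : IsoRel e.symm B A := by
  intro x y
  rw [h (e.symm x) (e.symm y)]
  simp

theorem IsoRel.trans {e : X ≃ Y} {f : Y ≃ Z} {A B C}
    (h : IsoRel e A B) (h' : IsoRel f B C) : IsoRel (e.trans f) A C := by
  intro x y
  exact (h x y).trans (h' _ _)

theorem IsoRel.rtg {e : X ≃ Y} {A B} (h : IsoRel e A B) {x y : X}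
    (hw : Relation.ReflTransGen A x y) : Relation.ReflTransGen B (e x) (e y) := by
  induction hw with
  | refl => rfl
  | tail _ hstep ih => exact ih.tail ((h _ _).mp hstep)

theorem IsoRel.walkLen {e : X ≃ Y} {A B} (h : IsoRel e A B) :
    ∀ {n x y}, WalkLen A n x y → WalkLen B n (e x) (e y) := by
  intro n
  induction n with
  | zero => intro x y hxy; cases hxy; rfl
  | succ k ih =>
    rintro x y ⟨z, hz, hw⟩
    exact ⟨e z, (h _ _).mp hz, ih hw⟩

theorem IsoRel.gdist {e : X ≃ Y} {A B} (h : IsoRel e A B) (x y : X) :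
    gdist B (e x) (e y) = gdist A x y := by
  unfold Skel.gdist
  congr 1
  ext n
  constructor
  · intro hw
    have := h.symm.walkLen hw
    simpa using this
  · exact fun hw => h.walkLen hw

theorem IsoRel.prodCongr {e : X ≃ X'} {f : Y ≃ Y'} {A A' B B'}
    (h : IsoRel e A A') (h' : IsoRel f B B') :
    IsoRel (e.prodCongr f) (boxAdj A B) (boxAdj A' B') := by
  rintro ⟨a, b⟩ ⟨a', b'⟩
  simp only [boxAdj, Equiv.prodCongr_apply, Prod.map]
  rw [← h a a', ← h' b b', e.apply_eq_iff_eq, f.apply_eq_iff_eq]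

/-- interval-closed subsets -/
def IC (A : X → X → Prop) (T : Set X) : Prop :=
  ∀ x y z, x ∈ T → z ∈ T → gdist A x y + gdist A y z = gdist A x z → y ∈ T

theorem IC.preimage {e : X ≃ Y} {A B} (h : IsoRel e A B) {T : Set Y}
    (hT : IC B T) : IC A (e ⁻¹' T) := by
  intro x y z hx hz hd
  exact hT (e x) (e y) (e z) hx hz (by rw [h.gdist, h.gdist, h.gdist]; exact hd)



section Layers

variable {A : X → X → Prop} {B : Y → Y → Prop}
  (hA : ∀ a a' : X, Relation.ReflTransGen A a a')
  (hB : ∀ b b' : Y, Relation.ReflTransGen B b b')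

include hA hB

/-- first-factor layers are interval closed -/
theorem IC_layer_fst (b0 : Y) : IC (boxAdj A B) {p | p.2 = b0} := by
  rintro ⟨a, b⟩ ⟨c, d⟩ ⟨a', b'⟩ hx hz hd
  simp only [Set.mem_setOf_eq] at hx hz ⊢
  rw [gdist_box hA hB, gdist_box hA hB, gdist_box hA hB] at hd
  simp only at hd
  rw [hx, hz] at hd
  have h1 : gdist A a a' ≤ gdist A a c + gdist A c a' := gdist_triangle (hA _ _) (hA _ _)
  have h2 : gdist B b0 b0 = 0 := gdist_self _
  have h3 : gdist B b0 d = 0 := by omega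
  exact (gdist_eq_zero (hB _ _) h3).symm

theorem IC_layer_snd (a0 : X) : IC (boxAdj A B) {p | p.1 = a0} := by
  rintro ⟨a, b⟩ ⟨c, d⟩ ⟨a', b'⟩ hx hz hd
  simp only [Set.mem_setOf_eq] at hx hz ⊢
  rw [gdist_box hA hB, gdist_box hA hB, gdist_box hA hB] at hd
  simp only at hd
  rw [hx, hz] at hd
  have h1 : gdist B b b' ≤ gdist B b d + gdist B d b' := gdist_triangle (hB _ _) (hB _ _)
  have h2 : gdist A a0 a0 = 0 := gdist_self _
  have h3 : gdist A a0 c = 0 := by omega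
  exact (gdist_eq_zero (hA _ _) h3).symm

/-- interval-closed subsets of a box are closed under coordinate mixing -/
theorem IC.mix {T : Set (X × Y)} (hT : IC (boxAdj A B) T)
    {p q : X × Y} (hp : p ∈ T) (hq : q ∈ T) : (p.1, q.2) ∈ T := by
  apply hT p (p.1, q.2) q hp hq
  rw [gdist_box hA hB, gdist_box hA hB, gdist_box hA hB]
  simp only
  rw [gdist_self, gdist_self]
  omega

end Layers


/-- restriction of a relation to a subset -/
def relOn (A : X → X → Prop) (P : Set X) : ↑P → ↑P → Prop := fun a b => A a.1 b.1

theorem relOn_irrefl {A : X → X → Prop} (iA : Irreflexive A) (P : Set X) :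
    Irreflexive (relOn A P) := fun a h => iA a.1 h

theorem box_fix_snd {A : X → X → Prop} {B : Y → Y → Prop} (iB : Irreflexive B)
    (b : Y) (a a' : X) : boxAdj A B (a, b) (a', b) ↔ A a a' := by
  constructor
  · rintro (⟨_, h⟩ | ⟨_, h⟩)
    · exact absurd h (iB b)
    · exact h
  · exact fun h => Or.inr ⟨rfl, h⟩

theorem box_fix_fst {A : X → X → Prop} {B : Y → Y → Prop} (iA : Irreflexive A)
    (a : X) (b b' : Y) : boxAdj A B (a, b) (a, b') ↔ B b b' := by
  constructor
  · rintro (⟨_, h⟩ | ⟨_, h⟩)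
    · exact h
    · exact absurd h (iA a)
  · exact fun h => Or.inl ⟨rfl, h⟩

theorem box_subtype {A : X → X → Prop} {B : Y → Y → Prop} {P : Set X} {Q : Set Y}
    (u v : ↑P × ↑Q) :
    boxAdj (relOn A P) (relOn B Q) u v ↔ boxAdj A B (u.1.1, u.2.1) (v.1.1, v.2.1) := by
  simp [boxAdj, relOn, Subtype.ext_iff]

theorem IsoRel.refl (A : X → X → Prop) : IsoRel (Equiv.refl X) A A := fun _ _ => Iff.rfl

theorem IsoRel.conn {e : X ≃ Y} {A B} (h : IsoRel e A B)
    (hA : ∀ a a', Relation.ReflTransGen A a a') :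
    ∀ b b', Relation.ReflTransGen B b b' := by
  intro b b'
  have := h.rtg (hA (e.symm b) (e.symm b'))
  simpa using this

theorem conn_box_left {A : X → X → Prop} {B : Y → Y → Prop} [Nonempty Y]
    (h : ∀ p q : X × Y, Relation.ReflTransGen (boxAdj A B) p q) :
    ∀ a a', Relation.ReflTransGen A a a' := by
  intro a a'
  obtain ⟨b⟩ := (inferInstance : Nonempty Y)
  exact rtg_box_proj_left (h (a, b) (a', b))

theorem conn_box_right {A : X → X → Prop} {B : Y → Y → Prop} [Nonempty X]
    (h : ∀ p q : X × Y, Relation.ReflTransGen (boxAdj A B) p q) :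
    ∀ b b', Relation.ReflTransGen B b b' := by
  intro b b'
  obtain ⟨a⟩ := (inferInstance : Nonempty X)
  exact rtg_box_proj_right (h (a, b) (a, b'))

universe u v

/-- Cancellation of connected finite graphs over the Cartesian product. -/
theorem cancel : ∀ (n : ℕ) {X : Type u} {Y Z : Type v}
    [Finite X] [Finite Y] [Finite Z]
    (A : X → X → Prop) (B : Y → Y → Prop) (C : Z → Z → Prop),
    Nonempty X → Nonempty Y →
    (∀ a a', Relation.ReflTransGen A a a') →
    (∀ b b', Relation.ReflTransGen B b b') →
    (∀ c c', Relation.ReflTransGen C c c') →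
    Irreflexive A → Irreflexive B → Irreflexive C →
    Nat.card X ≤ n →
    ∀ (φ : X × Y ≃ X × Z), IsoRel φ (boxAdj A B) (boxAdj A C) →
    ∃ f : Y ≃ Z, IsoRel f B C := by
  intro n
  induction n using Nat.strong_induction_on with
  | _ n IH =>
  intro X Y Z _ _ _ A B C hXne hYne hA hB hC iA iB iC hn φ hφ
  classical
  obtain ⟨x0⟩ := hXne
  obtain ⟨y0⟩ := hYne
  set α0 : X := (φ (x0, y0)).1 with hα0
  set γ0 : Z := (φ (x0, y0)).2 with hγ0
  -- interval-closed sets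
  have hICL : IC (boxAdj A C) (φ.symm ⁻¹' {p : X × Y | p.2 = y0}) :=
    IC.preimage hφ.symm (IC_layer_fst hA hB y0)
  have hICM : IC (boxAdj A B) (φ ⁻¹' {q : X × Z | q.2 = γ0}) :=
    IC.preimage hφ (IC_layer_fst hA hC γ0)
  have hICL' : IC (boxAdj A C) (φ.symm ⁻¹' {p : X × Y | p.1 = x0}) :=
    IC.preimage hφ.symm (IC_layer_snd hA hB x0)
  have hICM' : IC (boxAdj A B) (φ ⁻¹' {q : X × Z | q.1 = α0}) :=
    IC.preimage hφ (IC_layer_snd hA hC α0)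
  -- mixing consequences
  have C1 : ∀ a a' : X, ∃ a'' : X, φ (a'', y0) = ((φ (a, y0)).1, (φ (a', y0)).2) := by
    intro a a'
    have h1 : φ (a, y0) ∈ φ.symm ⁻¹' {p : X × Y | p.2 = y0} := by simp
    have h2 : φ (a', y0) ∈ φ.symm ⁻¹' {p : X × Y | p.2 = y0} := by simp
    have hm := IC.mix hA hC hICL h1 h2
    simp only [Set.mem_preimage, Set.mem_setOf_eq] at hm
    obtain ⟨m, hmeq⟩ : ∃ m, m = φ.symm ((φ (a, y0)).1, (φ (a', y0)).2) := ⟨_, rfl⟩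
    rw [← hmeq] at hm
    refine ⟨m.1, ?_⟩
    conv_lhs => rw [← hm]
    rw [Prod.mk.eta, hmeq]
    simp
  have C2 : ∀ p q : X × Y, (φ p).2 = γ0 → (φ q).2 = γ0 → (φ (p.1, q.2)).2 = γ0 := by
    intro p q hp hq
    have hm := IC.mix hA hB hICM (by simpa using hp) (by simpa using hq)
    simpa using hm
  have C3 : ∀ b b' : Y, ∃ b'' : Y, φ (x0, b'') = ((φ (x0, b)).1, (φ (x0, b')).2) := by
    intro b b'
    have h1 : φ (x0, b) ∈ φ.symm ⁻¹' {p : X × Y | p.1 = x0} := by simp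
    have h2 : φ (x0, b') ∈ φ.symm ⁻¹' {p : X × Y | p.1 = x0} := by simp
    have hm := IC.mix hA hC hICL' h1 h2
    simp only [Set.mem_preimage, Set.mem_setOf_eq] at hm
    obtain ⟨m, hmeq⟩ : ∃ m, m = φ.symm ((φ (x0, b)).1, (φ (x0, b')).2) := ⟨_, rfl⟩
    rw [← hmeq] at hm
    refine ⟨m.2, ?_⟩
    conv_lhs => rw [← hm]
    rw [Prod.mk.eta, hmeq]
    simp
  have C4 : ∀ p q : X × Y, (φ p).1 = α0 → (φ q).1 = α0 → (φ (p.1, q.2)).1 = α0 := by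
    intro p q hp hq
    have hm := IC.mix hA hB hICM' (by simpa using hp) (by simpa using hq)
    simpa using hm
  -- the eight subsets
  set P : Set X := {x | ∃ a, (φ (a, y0)).1 = x} with hP
  set Q : Set Z := {z | ∃ a, (φ (a, y0)).2 = z} with hQ
  set R : Set X := {x | ∃ p : X × Y, (φ p).2 = γ0 ∧ p.1 = x} with hR
  set S : Set Y := {y | ∃ p : X × Y, (φ p).2 = γ0 ∧ p.2 = y} with hS
  set P₂ : Set X := {x | ∃ b, (φ (x0, b)).1 = x} with hP2
  set Q₂ : Set Z := {z | ∃ b, (φ (x0, b)).2 = z} with hQ2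
  set R₂ : Set X := {x | ∃ p : X × Y, (φ p).1 = α0 ∧ p.1 = x} with hR2
  set S₂ : Set Y := {y | ∃ p : X × Y, (φ p).1 = α0 ∧ p.2 = y} with hS2
  have memP : ∀ {x}, x ∈ P ↔ ∃ a, (φ (a, y0)).1 = x := fun {x} => by rw [hP]; exact Iff.rfl
  have memQ : ∀ {z}, z ∈ Q ↔ ∃ a, (φ (a, y0)).2 = z := fun {z} => by rw [hQ]; exact Iff.rfl
  have memR : ∀ {x}, x ∈ R ↔ ∃ p : X × Y, (φ p).2 = γ0 ∧ p.1 = x :=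
    fun {x} => by rw [hR]; exact Iff.rfl
  have memS : ∀ {y}, y ∈ S ↔ ∃ p : X × Y, (φ p).2 = γ0 ∧ p.2 = y :=
    fun {y} => by rw [hS]; exact Iff.rfl
  have memP₂ : ∀ {x}, x ∈ P₂ ↔ ∃ b, (φ (x0, b)).1 = x := fun {x} => by rw [hP2]; exact Iff.rfl
  have memQ₂ : ∀ {z}, z ∈ Q₂ ↔ ∃ b, (φ (x0, b)).2 = z := fun {z} => by rw [hQ2]; exact Iff.rfl
  have memR₂ : ∀ {x}, x ∈ R₂ ↔ ∃ p : X × Y, (φ p).1 = α0 ∧ p.1 = x :=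
    fun {x} => by rw [hR2]; exact Iff.rfl
  have memS₂ : ∀ {y}, y ∈ S₂ ↔ ∃ p : X × Y, (φ p).1 = α0 ∧ p.2 = y :=
    fun {y} => by rw [hS2]; exact Iff.rfl
  -- auxiliary facts
  have hry : ∀ x ∈ R, (φ (x, y0)).2 = γ0 := by
    intro x hx
    obtain ⟨p, hp2, hp1⟩ := memR.mp hx
    have := C2 p (x0, y0) hp2 hγ0.symm
    rwa [hp1] at this
  have hr2y : ∀ x ∈ R₂, (φ (x, y0)).1 = α0 := by
    intro x hx
    obtain ⟨p, hp1, hpe⟩ := memR₂.mp hx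
    have := C4 p (x0, y0) hp1 hα0.symm
    rwa [hpe] at this
  have hxs : ∀ y ∈ S, (φ (x0, y)).2 = γ0 := by
    intro y hy
    obtain ⟨p, hp2, hpe⟩ := memS.mp hy
    have := C2 (x0, y0) p hγ0.symm hp2
    rwa [hpe] at this
  have hxs2 : ∀ y ∈ S₂, (φ (x0, y)).1 = α0 := by
    intro y hy
    obtain ⟨p, hp1, hpe⟩ := memS₂.mp hy
    have := C4 (x0, y0) p hα0.symm hp1
    rwa [hpe] at this
  -- e1 : X ≃ ↑P × ↑Q
  have m1bij : Function.Bijective (fun a : X =>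
      ((⟨(φ (a, y0)).1, memP.mpr ⟨a, rfl⟩⟩ : ↑P),
       (⟨(φ (a, y0)).2, memQ.mpr ⟨a, rfl⟩⟩ : ↑Q))) := by
    constructor
    · intro a a' h
      simp only [Prod.mk.injEq, Subtype.mk.injEq] at h
      have h2 : φ (a, y0) = φ (a', y0) := Prod.ext_iff.mpr h
      have := φ.injective h2
      exact congrArg Prod.fst this
    · rintro ⟨⟨p, hp⟩, ⟨q, hq⟩⟩
      obtain ⟨a, ha⟩ := memP.mp hp
      obtain ⟨a', ha'⟩ := memQ.mp hq
      obtain ⟨a'', ha''⟩ := C1 a a'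
      refine ⟨a'', ?_⟩
      simp only [Prod.mk.injEq, Subtype.mk.injEq, ha'']
      exact ⟨ha, ha'⟩
  set e1 : X ≃ ↑P × ↑Q := Equiv.ofBijective _ m1bij with he1
  have hE1 : IsoRel e1 A (boxAdj (relOn A P) (relOn C Q)) := by
    intro a a'
    calc A a a' ↔ boxAdj A B (a, y0) (a', y0) := (box_fix_snd iB y0 a a').symm
      _ ↔ boxAdj A C (φ (a, y0)) (φ (a', y0)) := hφ _ _
      _ ↔ boxAdj (relOn A P) (relOn C Q) (e1 a) (e1 a') := (box_subtype (e1 a) (e1 a')).symm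
  -- e2 : X ≃ ↑R × ↑S
  have m2bij : Function.Bijective (fun x : X =>
      ((⟨(φ.symm (x, γ0)).1, memR.mpr ⟨φ.symm (x, γ0), by simp, rfl⟩⟩ : ↑R),
       (⟨(φ.symm (x, γ0)).2, memS.mpr ⟨φ.symm (x, γ0), by simp, rfl⟩⟩ : ↑S))) := by
    constructor
    · intro x x' h
      simp only [Prod.mk.injEq, Subtype.mk.injEq] at h
      have h2 : φ.symm (x, γ0) = φ.symm (x', γ0) := Prod.ext_iff.mpr h
      have := φ.symm.injective h2
      exact congrArg Prod.fst this
    · rintro ⟨⟨r, hr⟩, ⟨s, hs⟩⟩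
      obtain ⟨p, hp2, hp1⟩ := memR.mp hr
      obtain ⟨q, hq2, hq1⟩ := memS.mp hs
      have h := C2 p q hp2 hq2
      have key : φ.symm ((φ (p.1, q.2)).1, γ0) = (p.1, q.2) := by
        conv_lhs => rw [← h]
        rw [Prod.mk.eta]
        simp
      refine ⟨(φ (p.1, q.2)).1, ?_⟩
      simp only [Prod.mk.injEq, Subtype.mk.injEq, key]
      exact ⟨hp1, hq1⟩
  set e2 : X ≃ ↑R × ↑S := Equiv.ofBijective _ m2bij with he2
  have hE2 : IsoRel e2 A (boxAdj (relOn A R) (relOn B S)) := by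
    intro x x'
    calc A x x' ↔ boxAdj A C (x, γ0) (x', γ0) := (box_fix_snd iC γ0 x x').symm
      _ ↔ boxAdj A B (φ.symm (x, γ0)) (φ.symm (x', γ0)) := hφ.symm _ _
      _ ↔ boxAdj (relOn A R) (relOn B S) (e2 x) (e2 x') := (box_subtype (e2 x) (e2 x')).symm
  -- e3 : Y ≃ ↑P₂ × ↑Q₂
  have m3bij : Function.Bijective (fun b : Y =>
      ((⟨(φ (x0, b)).1, memP₂.mpr ⟨b, rfl⟩⟩ : ↑P₂),
       (⟨(φ (x0, b)).2, memQ₂.mpr ⟨b, rfl⟩⟩ : ↑Q₂))) := by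
    constructor
    · intro b b' h
      simp only [Prod.mk.injEq, Subtype.mk.injEq] at h
      have h2 : φ (x0, b) = φ (x0, b') := Prod.ext_iff.mpr h
      have := φ.injective h2
      exact congrArg Prod.snd this
    · rintro ⟨⟨p, hp⟩, ⟨q, hq⟩⟩
      obtain ⟨b, hb⟩ := memP₂.mp hp
      obtain ⟨b', hb'⟩ := memQ₂.mp hq
      obtain ⟨b'', hb''⟩ := C3 b b'
      refine ⟨b'', ?_⟩
      simp only [Prod.mk.injEq, Subtype.mk.injEq, hb'']
      exact ⟨hb, hb'⟩
  set e3 : Y ≃ ↑P₂ × ↑Q₂ := Equiv.ofBijective _ m3bij with he3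
  have hE3 : IsoRel e3 B (boxAdj (relOn A P₂) (relOn C Q₂)) := by
    intro b b'
    calc B b b' ↔ boxAdj A B (x0, b) (x0, b') := (box_fix_fst iA x0 b b').symm
      _ ↔ boxAdj A C (φ (x0, b)) (φ (x0, b')) := hφ _ _
      _ ↔ boxAdj (relOn A P₂) (relOn C Q₂) (e3 b) (e3 b') := (box_subtype (e3 b) (e3 b')).symm
  -- e4 : Z ≃ ↑R₂ × ↑S₂
  have m4bij : Function.Bijective (fun z : Z =>
      ((⟨(φ.symm (α0, z)).1, memR₂.mpr ⟨φ.symm (α0, z), by simp, rfl⟩⟩ : ↑R₂),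
       (⟨(φ.symm (α0, z)).2, memS₂.mpr ⟨φ.symm (α0, z), by simp, rfl⟩⟩ : ↑S₂))) := by
    constructor
    · intro z z' h
      simp only [Prod.mk.injEq, Subtype.mk.injEq] at h
      have h2 : φ.symm (α0, z) = φ.symm (α0, z') := Prod.ext_iff.mpr h
      have := φ.symm.injective h2
      exact congrArg Prod.snd this
    · rintro ⟨⟨r, hr⟩, ⟨s, hs⟩⟩
      obtain ⟨p, hp1, hpe⟩ := memR₂.mp hr
      obtain ⟨q, hq1, hqe⟩ := memS₂.mp hs
      have h := C4 p q hp1 hq1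
      have key : φ.symm (α0, (φ (p.1, q.2)).2) = (p.1, q.2) := by
        conv_lhs => rw [← h]
        rw [Prod.mk.eta]
        simp
      refine ⟨(φ (p.1, q.2)).2, ?_⟩
      simp only [Prod.mk.injEq, Subtype.mk.injEq, key]
      exact ⟨hpe, hqe⟩
  set e4 : Z ≃ ↑R₂ × ↑S₂ := Equiv.ofBijective _ m4bij with he4
  have hE4 : IsoRel e4 C (boxAdj (relOn A R₂) (relOn B S₂)) := by
    intro z z'
    calc C z z' ↔ boxAdj A C (α0, z) (α0, z') := (box_fix_fst iA α0 z z').symm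
      _ ↔ boxAdj A B (φ.symm (α0, z)) (φ.symm (α0, z')) := hφ.symm _ _
      _ ↔ boxAdj (relOn A R₂) (relOn B S₂) (e4 z) (e4 z') := (box_subtype (e4 z) (e4 z')).symm
  -- I5 : ↑R ≃ ↑P
  have j5bij : Function.Bijective (fun r : ↑R =>
      (⟨(φ (r.1, y0)).1, memP.mpr ⟨r.1, rfl⟩⟩ : ↑P)) := by
    constructor
    · intro r r' h
      simp only [Subtype.mk.injEq] at h
      have h2 : φ (r.1, y0) = φ (r'.1, y0) :=
        Prod.ext_iff.mpr ⟨h, (hry r.1 r.2).trans (hry r'.1 r'.2).symm⟩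
      have := φ.injective h2
      exact Subtype.ext (congrArg Prod.fst this)
    · rintro ⟨p, hp⟩
      obtain ⟨a, ha⟩ := memP.mp hp
      obtain ⟨a'', ha''⟩ := C1 a x0
      have hmem : a'' ∈ R := memR.mpr ⟨(a'', y0), by rw [ha''], rfl⟩
      refine ⟨⟨a'', hmem⟩, ?_⟩
      simp only [Subtype.mk.injEq, ha'']
      exact ha
  set I5 : ↑R ≃ ↑P := Equiv.ofBijective _ j5bij with hi5
  have hI5 : IsoRel I5 (relOn A R) (relOn A P) := by
    intro r r'
    have er : φ (r.1, y0) = ((φ (r.1, y0)).1, γ0) := Prod.ext_iff.mpr ⟨rfl, hry r.1 r.2⟩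
    have er' : φ (r'.1, y0) = ((φ (r'.1, y0)).1, γ0) := Prod.ext_iff.mpr ⟨rfl, hry r'.1 r'.2⟩
    calc A r.1 r'.1 ↔ boxAdj A B (r.1, y0) (r'.1, y0) := (box_fix_snd iB y0 _ _).symm
      _ ↔ boxAdj A C (φ (r.1, y0)) (φ (r'.1, y0)) := hφ _ _
      _ ↔ A (φ (r.1, y0)).1 (φ (r'.1, y0)).1 := by rw [er, er']; exact box_fix_snd iC γ0 _ _
  -- I7 : ↑R₂ ≃ ↑Q
  have j7bij : Function.Bijective (fun r : ↑R₂ =>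
      (⟨(φ (r.1, y0)).2, memQ.mpr ⟨r.1, rfl⟩⟩ : ↑Q)) := by
    constructor
    · intro r r' h
      simp only [Subtype.mk.injEq] at h
      have h2 : φ (r.1, y0) = φ (r'.1, y0) :=
        Prod.ext_iff.mpr ⟨(hr2y r.1 r.2).trans (hr2y r'.1 r'.2).symm, h⟩
      have := φ.injective h2
      exact Subtype.ext (congrArg Prod.fst this)
    · rintro ⟨q, hq⟩
      obtain ⟨a, ha⟩ := memQ.mp hq
      obtain ⟨a'', ha''⟩ := C1 x0 a
      have hmem : a'' ∈ R₂ := memR₂.mpr ⟨(a'', y0), by rw [ha''], rfl⟩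
      refine ⟨⟨a'', hmem⟩, ?_⟩
      simp only [Subtype.mk.injEq, ha'']
      exact ha
  set I7 : ↑R₂ ≃ ↑Q := Equiv.ofBijective _ j7bij with hi7
  have hI7 : IsoRel I7 (relOn A R₂) (relOn C Q) := by
    intro r r'
    have er : φ (r.1, y0) = (α0, (φ (r.1, y0)).2) := Prod.ext_iff.mpr ⟨hr2y r.1 r.2, rfl⟩
    have er' : φ (r'.1, y0) = (α0, (φ (r'.1, y0)).2) := Prod.ext_iff.mpr ⟨hr2y r'.1 r'.2, rfl⟩
    calc A r.1 r'.1 ↔ boxAdj A B (r.1, y0) (r'.1, y0) := (box_fix_snd iB y0 _ _).symm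
      _ ↔ boxAdj A C (φ (r.1, y0)) (φ (r'.1, y0)) := hφ _ _
      _ ↔ C (φ (r.1, y0)).2 (φ (r'.1, y0)).2 := by rw [er, er']; exact box_fix_fst iA α0 _ _
  -- I8 : ↑S ≃ ↑P₂
  have j8bij : Function.Bijective (fun s : ↑S =>
      (⟨(φ (x0, s.1)).1, memP₂.mpr ⟨s.1, rfl⟩⟩ : ↑P₂)) := by
    constructor
    · intro s s' h
      simp only [Subtype.mk.injEq] at h
      have h2 : φ (x0, s.1) = φ (x0, s'.1) :=
        Prod.ext_iff.mpr ⟨h, (hxs s.1 s.2).trans (hxs s'.1 s'.2).symm⟩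
      have := φ.injective h2
      exact Subtype.ext (congrArg Prod.snd this)
    · rintro ⟨p, hp⟩
      obtain ⟨b, hb⟩ := memP₂.mp hp
      obtain ⟨b'', hb''⟩ := C3 b y0
      have hmem : b'' ∈ S := memS.mpr ⟨(x0, b''), by rw [hb''], rfl⟩
      refine ⟨⟨b'', hmem⟩, ?_⟩
      simp only [Subtype.mk.injEq, hb'']
      exact hb
  set I8 : ↑S ≃ ↑P₂ := Equiv.ofBijective _ j8bij with hi8
  have hI8 : IsoRel I8 (relOn B S) (relOn A P₂) := by
    intro s s'
    have er : φ (x0, s.1) = ((φ (x0, s.1)).1, γ0) := Prod.ext_iff.mpr ⟨rfl, hxs s.1 s.2⟩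
    have er' : φ (x0, s'.1) = ((φ (x0, s'.1)).1, γ0) := Prod.ext_iff.mpr ⟨rfl, hxs s'.1 s'.2⟩
    calc B s.1 s'.1 ↔ boxAdj A B (x0, s.1) (x0, s'.1) := (box_fix_fst iA x0 _ _).symm
      _ ↔ boxAdj A C (φ (x0, s.1)) (φ (x0, s'.1)) := hφ _ _
      _ ↔ A (φ (x0, s.1)).1 (φ (x0, s'.1)).1 := by rw [er, er']; exact box_fix_snd iC γ0 _ _
  -- I6 : ↑S₂ ≃ ↑Q₂
  have j6bij : Function.Bijective (fun s : ↑S₂ =>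
      (⟨(φ (x0, s.1)).2, memQ₂.mpr ⟨s.1, rfl⟩⟩ : ↑Q₂)) := by
    constructor
    · intro s s' h
      simp only [Subtype.mk.injEq] at h
      have h2 : φ (x0, s.1) = φ (x0, s'.1) :=
        Prod.ext_iff.mpr ⟨(hxs2 s.1 s.2).trans (hxs2 s'.1 s'.2).symm, h⟩
      have := φ.injective h2
      exact Subtype.ext (congrArg Prod.snd this)
    · rintro ⟨q, hq⟩
      obtain ⟨b, hb⟩ := memQ₂.mp hq
      obtain ⟨b'', hb''⟩ := C3 y0 b
      have hmem : b'' ∈ S₂ := memS₂.mpr ⟨(x0, b''), by rw [hb''], rfl⟩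
      refine ⟨⟨b'', hmem⟩, ?_⟩
      simp only [Subtype.mk.injEq, hb'']
      exact hb
  set I6 : ↑S₂ ≃ ↑Q₂ := Equiv.ofBijective _ j6bij with hi6
  have hI6 : IsoRel I6 (relOn B S₂) (relOn C Q₂) := by
    intro s s'
    have er : φ (x0, s.1) = (α0, (φ (x0, s.1)).2) := Prod.ext_iff.mpr ⟨hxs2 s.1 s.2, rfl⟩
    have er' : φ (x0, s'.1) = (α0, (φ (x0, s'.1)).2) := Prod.ext_iff.mpr ⟨hxs2 s'.1 s'.2, rfl⟩
    calc B s.1 s'.1 ↔ boxAdj A B (x0, s.1) (x0, s'.1) := (box_fix_fst iA x0 _ _).symm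
      _ ↔ boxAdj A C (φ (x0, s.1)) (φ (x0, s'.1)) := hφ _ _
      _ ↔ C (φ (x0, s.1)).2 (φ (x0, s'.1)).2 := by rw [er, er']; exact box_fix_fst iA α0 _ _
  -- nonemptiness
  haveI hPne : Nonempty ↑P := ⟨⟨α0, memP.mpr ⟨x0, hα0.symm⟩⟩⟩
  haveI hQne : Nonempty ↑Q := ⟨⟨γ0, memQ.mpr ⟨x0, hγ0.symm⟩⟩⟩
  haveI hSne : Nonempty ↑S := ⟨⟨y0, memS.mpr ⟨(x0, y0), hγ0.symm, rfl⟩⟩⟩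
  haveI hRne : Nonempty ↑R := ⟨⟨x0, memR.mpr ⟨(x0, y0), hγ0.symm, rfl⟩⟩⟩
  -- cardinalities
  have cardX1 : Nat.card X = Nat.card ↑P * Nat.card ↑Q := by
    rw [← Nat.card_prod]
    exact Nat.card_congr e1
  have cardX2 : Nat.card X = Nat.card ↑R * Nat.card ↑S := by
    rw [← Nat.card_prod]
    exact Nat.card_congr e2
  have cardRP : Nat.card ↑R = Nat.card ↑P := Nat.card_congr I5
  have cardPpos : 0 < Nat.card ↑P := Nat.card_pos
  have cardQpos : 0 < Nat.card ↑Q := Nat.card_pos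
  -- the middle isomorphism
  have main : ∃ f0 : ↑Q ≃ ↑S, IsoRel f0 (relOn C Q) (relOn B S) := by
    by_cases hq1 : Nat.card ↑Q = 1
    · have cardS1 : Nat.card ↑S = 1 := by
        have h := cardX1.symm.trans cardX2
        rw [cardRP] at h
        have h2 := Nat.eq_of_mul_eq_mul_left cardPpos h
        omega
      haveI : Subsingleton ↑Q := by
        have := Nat.card_eq_one_iff_unique.mp hq1
        exact this.1
      haveI : Subsingleton ↑S := by
        have := Nat.card_eq_one_iff_unique.mp cardS1
        exact this.1
      refine ⟨equivOfSubsingletonOfSubsingleton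
        (fun _ => Classical.arbitrary ↑S) (fun _ => Classical.arbitrary ↑Q), ?_⟩
      intro x y
      have hxy : x = y := Subsingleton.elim x y
      subst hxy
      exact iff_of_false (fun h => iC _ h) (fun h => iB _ h)
    · have hQ2 : 2 ≤ Nat.card ↑Q := by omega
      have cardPlt : Nat.card ↑P < Nat.card X := by
        have := Nat.mul_le_mul_left (Nat.card ↑P) hQ2
        omega
      have hconnPQ := hE1.conn hA
      have hconnP := conn_box_left hconnPQ
      have hconnQ := conn_box_right hconnPQ
      have hconnRS := hE2.conn hA
      have hconnS := conn_box_right hconnRS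
      exact IH (Nat.card ↑P) (lt_of_lt_of_le cardPlt hn)
        (relOn A P) (relOn C Q) (relOn B S) hPne hQne hconnP hconnQ hconnS
        (relOn_irrefl iA P) (relOn_irrefl iC Q) (relOn_irrefl iB S) le_rfl
        (e1.symm.trans (e2.trans (Equiv.prodCongr I5 (Equiv.refl ↑S))))
        (hE1.symm.trans (hE2.trans (hI5.prodCongr (IsoRel.refl _))))
  obtain ⟨f0, hf0⟩ := main
  refine ⟨e3.trans ((Equiv.prodCongr (I8.symm.trans (f0.symm.trans I7.symm)) I6.symm).trans
    e4.symm), ?_⟩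
  exact hE3.trans (((hI8.symm.trans (hf0.symm.trans hI7.symm)).prodCongr hI6.symm).trans
    hE4.symm)




section Skeleton

variable {A : X → X → Prop}

theorem rtg_box_fix_snd {B : Y → Y → Prop} {a a' : X} (b : Y)
    (h : Relation.ReflTransGen A a a') :
    Relation.ReflTransGen (boxAdj A B) (a, b) (a', b) := by
  induction h with
  | refl => rfl
  | tail _ hstep ih => exact ih.tail (Or.inr ⟨rfl, hstep⟩)

theorem rtg_box_fix_fst {B : Y → Y → Prop} {b b' : Y} (a : X)
    (h : Relation.ReflTransGen B b b') :
    Relation.ReflTransGen (boxAdj A B) (a, b) (a, b') := by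
  induction h with
  | refl => rfl
  | tail _ hstep ih => exact ih.tail (Or.inl ⟨rfl, hstep⟩)

variable [Finite X]

/-- measure for the dispensability induction -/
noncomputable def mu (A : X → X → Prop) (u v : X) : ℕ :=
  (Nat.card X + 1) * (Nat.card X - (nbhd A u ∩ nbhd A v).ncard) +
    (nbhd A u ∪ nbhd A v).ncard

theorem ncard_le_card (s : Set X) : s.ncard ≤ Nat.card X := by
  rw [← Set.ncard_univ]
  exact Set.ncard_le_ncard (Set.subset_univ s) Set.finite_univ

theorem mu_lt_inter {u v a b : X}
    (h : (nbhd A u ∩ nbhd A v).ncard < (nbhd A a ∩ nbhd A b).ncard) :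
    mu A a b < mu A u v := by
  unfold mu
  have h1 := ncard_le_card (nbhd A a ∩ nbhd A b)
  have h2 := ncard_le_card (nbhd A a ∪ nbhd A b)
  have h3 : Nat.card X - (nbhd A a ∩ nbhd A b).ncard + 1
      ≤ Nat.card X - (nbhd A u ∩ nbhd A v).ncard := by omega
  have h4 := Nat.mul_le_mul_left (Nat.card X + 1) h3
  have h5 : (Nat.card X + 1) * (Nat.card X - (nbhd A a ∩ nbhd A b).ncard + 1)
      = (Nat.card X + 1) * (Nat.card X - (nbhd A a ∩ nbhd A b).ncard)
        + (Nat.card X + 1) := by ring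
  omega

theorem mu_lt_union {u v a b : X}
    (hint : nbhd A a ∩ nbhd A b = nbhd A u ∩ nbhd A v)
    (hun : (nbhd A a ∪ nbhd A b).ncard < (nbhd A u ∪ nbhd A v).ncard) :
    mu A a b < mu A u v := by
  unfold mu
  rw [hint]
  omega

/-- every edge of `B(Γ)` joins vertices in the same component of `S(Γ)` -/
theorem bAdj_rtg_sAdj : ∀ u v, bAdj A u v → Relation.ReflTransGen (sAdj A) u v := by
  have H : ∀ n u v, mu A u v ≤ n → bAdj A u v → Relation.ReflTransGen (sAdj A) u v := by
    intro n
    induction n using Nat.strong_induction_on with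
    | _ n IH =>
    intro u v hn hb
    by_cases hd : dispensable A u v
    swap
    · exact Relation.ReflTransGen.single ⟨hb, hd⟩
    obtain ⟨w, hc1, hc2⟩ := hd
    obtain ⟨t, hut, hvt⟩ := hb.2
    have hI : t ∈ nbhd A u ∩ nbhd A v := ⟨hut, hvt⟩
    have hI' : t ∈ nbhd A v ∩ nbhd A u := ⟨hvt, hut⟩
    have hfin : ∀ s : Set X, s.Finite := fun s => Set.toFinite s
    rcases hc1 with h1 | ⟨h1a, h1b⟩
    · rcases hc2 with h2 | ⟨h2a, h2b⟩
      · -- both intersections grow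
        have huw : u ≠ w := by rintro rfl; exact ssubset_irrefl _ h2
        have hvw : v ≠ w := by rintro rfl; exact ssubset_irrefl _ h1
        have htw := h1.1 hI
        have htw' := h2.1 hI'
        have hb1 : bAdj A u w := ⟨huw, t, hut, htw.2⟩
        have hb2 : bAdj A w v := ⟨fun he => hvw he.symm, t, htw'.2, hvt⟩
        have hlt1 : mu A u w < mu A u v :=
          mu_lt_inter (Set.ncard_lt_ncard h1 (hfin _))
        have hlt2 : mu A w v < mu A u v := by
          apply mu_lt_inter
          rw [Set.inter_comm (nbhd A w)]
          calc (nbhd A u ∩ nbhd A v).ncard = (nbhd A v ∩ nbhd A u).ncard := by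
                rw [Set.inter_comm]
            _ < (nbhd A v ∩ nbhd A w).ncard := Set.ncard_lt_ncard h2 (hfin _)
        exact (IH _ (lt_of_lt_of_le hlt1 hn) u w le_rfl hb1).trans
          (IH _ (lt_of_lt_of_le hlt2 hn) w v le_rfl hb2)
      · -- Nv ⊂ Nw ⊂ Nu
        have huw : u ≠ w := by rintro rfl; exact ssubset_irrefl _ h2b
        have hvw : v ≠ w := by rintro rfl; exact ssubset_irrefl _ h2a
        have htw := h1.1 hI
        have hb1 : bAdj A u w := ⟨huw, t, hut, htw.2⟩
        have hb2 : bAdj A w v := ⟨fun he => hvw he.symm, t, h2a.1 hvt, hvt⟩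
        have hvsubu : nbhd A v ⊆ nbhd A u := h2a.1.trans h2b.1
        have hlt1 : mu A u w < mu A u v :=
          mu_lt_inter (Set.ncard_lt_ncard h1 (hfin _))
        have hlt2 : mu A w v < mu A u v := by
          apply mu_lt_union
          · rw [Set.inter_eq_right.mpr h2a.1, Set.inter_eq_right.mpr hvsubu]
          · rw [Set.union_eq_left.mpr h2a.1, Set.union_eq_left.mpr hvsubu]
            exact Set.ncard_lt_ncard h2b (hfin _)
        exact (IH _ (lt_of_lt_of_le hlt1 hn) u w le_rfl hb1).trans
          (IH _ (lt_of_lt_of_le hlt2 hn) w v le_rfl hb2)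
    · rcases hc2 with h2 | ⟨h2a, h2b⟩
      · -- Nu ⊂ Nw ⊂ Nv
        have huw : u ≠ w := by rintro rfl; exact ssubset_irrefl _ h1a
        have hvw : v ≠ w := by rintro rfl; exact ssubset_irrefl _ h1b
        have htw' := h2.1 hI'
        have hb1 : bAdj A u w := ⟨huw, t, hut, h1a.1 hut⟩
        have hb2 : bAdj A w v := ⟨fun he => hvw he.symm, t, htw'.2, hvt⟩
        have husubv : nbhd A u ⊆ nbhd A v := h1a.1.trans h1b.1
        have hlt1 : mu A u w < mu A u v := by
          apply mu_lt_union
          · rw [Set.inter_eq_left.mpr h1a.1, Set.inter_eq_left.mpr husubv]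
          · rw [Set.union_eq_right.mpr h1a.1, Set.union_eq_right.mpr husubv]
            exact Set.ncard_lt_ncard h1b (hfin _)
        have hlt2 : mu A w v < mu A u v := by
          apply mu_lt_inter
          rw [Set.inter_comm (nbhd A w)]
          calc (nbhd A u ∩ nbhd A v).ncard = (nbhd A v ∩ nbhd A u).ncard := by
                rw [Set.inter_comm]
            _ < (nbhd A v ∩ nbhd A w).ncard := Set.ncard_lt_ncard h2 (hfin _)
        exact (IH _ (lt_of_lt_of_le hlt1 hn) u w le_rfl hb1).trans
          (IH _ (lt_of_lt_of_le hlt2 hn) w v le_rfl hb2)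
      · exact absurd (h1a.trans h2b) (ssubset_irrefl _)
  exact fun u v => H (mu A u v) u v le_rfl

/-- common-neighbour relation -/
def cnR (A : X → X → Prop) : X → X → Prop := fun u v => ∃ t, A u t ∧ A v t

theorem cnR_rtg_sAdj {u v : X} (h : cnR A u v) :
    Relation.ReflTransGen (sAdj A) u v := by
  by_cases he : u = v
  · exact he ▸ Relation.ReflTransGen.refl
  · exact bAdj_rtg_sAdj u v ⟨he, h⟩

theorem rtg_cnR_rtg_sAdj {u v : X} (h : Relation.ReflTransGen (cnR A) u v) :
    Relation.ReflTransGen (sAdj A) u v := by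
  induction h with
  | refl => rfl
  | tail _ hstep ih => exact ih.trans (cnR_rtg_sAdj hstep)

/-- in a connected non-bipartite graph, any two vertices are joined by a chain
of common-neighbour steps -/
theorem nonbip_cnR (hs : Symmetric A)
    (hconn : ∀ u v : X, Relation.ReflTransGen A u v)
    (hnb : ¬∃ c : X → Bool, ∀ u v, A u v → c u ≠ c v) :
    ∀ u v : X, Relation.ReflTransGen (cnR A) u v := by
  classical
  intro u v
  have claim1 : ∀ x, Relation.ReflTransGen A u x →
      (Relation.ReflTransGen (cnR A) u x ∨
        ∃ p, A p x ∧ Relation.ReflTransGen (cnR A) u p) := by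
    intro x h
    induction h with
    | refl => exact Or.inl Relation.ReflTransGen.refl
    | @tail b x hp hstep ih =>
      rcases ih with hD | ⟨p, hpb, hD⟩
      · exact Or.inr ⟨b, hstep, hD⟩
      · exact Or.inl (hD.tail ⟨b, hpb, hs hstep⟩)
  by_cases hex : ∃ x y, A x y ∧ Relation.ReflTransGen (cnR A) u x ∧
      Relation.ReflTransGen (cnR A) u y
  · obtain ⟨x, y, hxy, hDx, hDy⟩ := hex
    have claim2 : ∀ t, Relation.ReflTransGen A x t →
        (Relation.ReflTransGen (cnR A) u t ∧
          ∀ s, A t s → Relation.ReflTransGen (cnR A) u s) := by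
      intro t h
      induction h with
      | refl => exact ⟨hDx, fun s hxs => hDy.tail ⟨x, hs hxy, hs hxs⟩⟩
      | @tail b t hp hstep ih =>
        exact ⟨ih.2 t hstep, fun s hts => ih.1.tail ⟨t, hstep, hs hts⟩⟩
    exact (claim2 v (hconn x v)).1
  · exfalso
    apply hnb
    refine ⟨fun x => if Relation.ReflTransGen (cnR A) u x then true else false, ?_⟩
    intro a b hab hcc
    by_cases ha : Relation.ReflTransGen (cnR A) u a
    · by_cases hb2 : Relation.ReflTransGen (cnR A) u b
      · exact hex ⟨a, b, hab, ha, hb2⟩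
      · simp [ha, hb2] at hcc
    · by_cases hb2 : Relation.ReflTransGen (cnR A) u b
      · simp [ha, hb2] at hcc
      · rcases claim1 a (hconn u a) with h | ⟨p, hpa, hD⟩
        · exact ha h
        · exact hb2 (hD.tail ⟨a, hpa, hs hab⟩)


theorem box_subtype_right {B : Y → Y → Prop} {A : X → X → Prop} {Q : Set Y}
    (a a' : X) (q q' : ↑Q) :
    boxAdj A (relOn B Q) (a, q) (a', q') ↔ boxAdj A B (a, q.1) (a', q'.1) := by
  simp [boxAdj, relOn, Subtype.ext_iff]

/-- in a connected bipartite graph, two vertices in the same part are joined by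
a chain of common-neighbour steps -/
theorem bip_cnR {A : X → X → Prop} (hs : Symmetric A)
    (hconn : ∀ u v : X, Relation.ReflTransGen A u v)
    (U' W' : Set X) (hdisj : Disjoint U' W') (hcover : U' ∪ W' = Set.univ)
    (hbip : ∀ u v, A u v → (u ∈ U' ∧ v ∈ W') ∨ (u ∈ W' ∧ v ∈ U')) :
    ∀ x y, x ∈ U' → y ∈ U' → Relation.ReflTransGen (cnR A) x y := by
  have memW : ∀ s, s ∈ W' ↔ s ∉ U' := by
    intro s
    constructor
    · intro hw hu; exact Set.disjoint_left.mp hdisj hu hw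
    · intro hnu
      have hsu : s ∈ U' ∪ W' := by rw [hcover]; trivial
      rcases hsu with h | h
      · exact absurd h hnu
      · exact h
  have cnPart : ∀ a b, cnR A a b → (a ∈ U' ↔ b ∈ U') := by
    rintro a b ⟨t, hat, hbt⟩
    have h1 : a ∈ U' ↔ t ∈ W' := by
      rcases hbip a t hat with ⟨ha, ht⟩ | ⟨ha, ht⟩
      · exact iff_of_true ha ht
      · exact iff_of_false ((memW a).mp ha) (fun htw => (memW t).mp htw ht)
    have h2 : b ∈ U' ↔ t ∈ W' := by
      rcases hbip b t hbt with ⟨hb, ht⟩ | ⟨hb, ht⟩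
      · exact iff_of_true hb ht
      · exact iff_of_false ((memW b).mp hb) (fun htw => (memW t).mp htw ht)
    exact h1.trans h2.symm
  have DPart : ∀ a b, Relation.ReflTransGen (cnR A) a b → (a ∈ U' ↔ b ∈ U') := by
    intro a b h
    induction h with
    | refl => exact Iff.rfl
    | tail _ hstep ih => exact ih.trans (cnPart _ _ hstep)
  intro x y hx hy
  have claim1 : ∀ t, Relation.ReflTransGen A x t →
      (Relation.ReflTransGen (cnR A) x t ∨
        ∃ p, A p t ∧ Relation.ReflTransGen (cnR A) x p) := by
    intro t h
    induction h with
    | refl => exact Or.inl Relation.ReflTransGen.refl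
    | @tail b t hp hstep ih =>
      rcases ih with hD | ⟨p, hpb, hD⟩
      · exact Or.inr ⟨b, hstep, hD⟩
      · exact Or.inl (hD.tail ⟨b, hpb, hs hstep⟩)
  rcases claim1 y (hconn x y) with h | ⟨p, hpy, hD⟩
  · exact h
  · exfalso
    have hpU : p ∈ U' := (DPart x p hD).mp hx
    rcases hbip p y hpy with ⟨_, hyW⟩ | ⟨hpW, _⟩
    · exact (memW y).mp hyW hy
    · exact (memW p).mp hpW hpU

end Skeleton

end Skel


/-- Let `Γ` be connected, non-bipartite, twin-free, and `Σ` connected,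
twin-free, bipartite with bipartition `{U, W}`. Then every automorphism `τ` of
`S(Γ) □ S(Σ)` either stabilizes `V(Γ) × U` setwise or maps it onto `V(Γ) × W`;
and there exists `σ ∈ Aut(S(Σ))` with `σ² = id` such that composing with `(id, σ)`
yields an automorphism stabilizing `V(Γ) × U`, and `σ` interchanges `U` and `W`
whenever `σ ≠ id`. -/
theorem stmt_19 {VG VS : Type*} [Fintype VG] [Fintype VS]
    (AdjG : VG → VG → Prop) (hsG : Symmetric AdjG)
    (hconnG : ∀ u v : VG, Relation.ReflTransGen AdjG u v)
    (hnbG : ¬∃ c : VG → Bool, ∀ u v, AdjG u v → c u ≠ c v)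
    (htfG : ∀ u v : VG, (∀ x, AdjG u x ↔ AdjG v x) → u = v)
    (AdjS : VS → VS → Prop) (hsS : Symmetric AdjS)
    (hconnS : ∀ u v : VS, Relation.ReflTransGen AdjS u v)
    (htfS : ∀ u v : VS, (∀ x, AdjS u x ↔ AdjS v x) → u = v)
    (U W : Set VS) (hdisj : Disjoint U W) (hcover : U ∪ W = Set.univ)
    (hU : U.Nonempty) (hW : W.Nonempty)
    (hbip : ∀ u v, AdjS u v → (u ∈ U ∧ v ∈ W) ∨ (u ∈ W ∧ v ∈ U)) :
    ∀ τ ∈ autSubgroup (boxAdj (sAdj AdjG) (sAdj AdjS)),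
      ((∀ x : VG × VS, x.2 ∈ U → (τ x).2 ∈ U) ∨
       (∀ x : VG × VS, x.2 ∈ U → (τ x).2 ∈ W)) ∧
      ∃ σ : Equiv.Perm VS, σ ∈ autSubgroup (sAdj AdjS) ∧ σ * σ = 1 ∧
        (∀ x : VG × VS, x.2 ∈ U → (τ (x.1, σ x.2)).2 ∈ U) ∧
        (∀ x : VG × VS, x.2 ∈ U → σ (τ x).2 ∈ U) ∧
        (σ ≠ 1 → ⇑σ '' U = W ∧ ⇑σ '' W = U) := by
  open Skel in
  classical
  intro τ hτmem
  have hτ : ∀ x y, boxAdj (sAdj AdjG) (sAdj AdjS) x y ↔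
      boxAdj (sAdj AdjG) (sAdj AdjS) (τ x) (τ y) := hτmem
  have hGne : Nonempty VG := by
    by_contra h
    rw [not_nonempty_iff] at h
    exact hnbG ⟨fun _ => true, fun u => isEmptyElim u⟩
  obtain ⟨g0⟩ := hGne
  obtain ⟨s0, hs0⟩ := hU
  obtain ⟨w0, hw0⟩ := hW
  have coverElim : ∀ s : VS, s ∈ U ∨ s ∈ W := by
    intro s
    have : s ∈ U ∪ W := by rw [hcover]; trivial
    exact this
  have memWiff : ∀ s : VS, s ∈ W ↔ s ∉ U := by
    intro s
    constructor
    · intro hw hu; exact Set.disjoint_left.mp hdisj hu hw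
    · intro hnu
      rcases coverElim s with h | h
      · exact absurd h hnu
      · exact h
  -- part preservation along the skeleton of Σ
  have sPart : ∀ a b : VS, sAdj AdjS a b → (a ∈ U ↔ b ∈ U) := by
    rintro a b ⟨⟨hne, t, hat, hbt⟩, -⟩
    have h1 : a ∈ U ↔ t ∈ W := by
      rcases hbip a t hat with ⟨ha, ht⟩ | ⟨ha, ht⟩
      · exact iff_of_true ha ht
      · exact iff_of_false ((memWiff a).mp ha) (fun htw => (memWiff t).mp htw ht)
    have h2 : b ∈ U ↔ t ∈ W := by
      rcases hbip b t hbt with ⟨hb, ht⟩ | ⟨hb, ht⟩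
      · exact iff_of_true hb ht
      · exact iff_of_false ((memWiff b).mp hb) (fun htw => (memWiff t).mp htw ht)
    exact h1.trans h2.symm
  have sPartW : ∀ a b : VS, sAdj AdjS a b → (a ∈ W ↔ b ∈ W) := by
    intro a b h
    rw [memWiff, memWiff]
    exact not_iff_not.mpr (sPart a b h)
  -- connectivity of the skeletons
  have connG : ∀ g h : VG, Relation.ReflTransGen (sAdj AdjG) g h :=
    fun g h => rtg_cnR_rtg_sAdj (nonbip_cnR hsG hconnG hnbG g h)
  have hbipW : ∀ u v, AdjS u v → (u ∈ W ∧ v ∈ U) ∨ (u ∈ U ∧ v ∈ W) :=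
    fun u v h => (hbip u v h).symm
  have connSU : ∀ x y : VS, x ∈ U → y ∈ U → Relation.ReflTransGen (sAdj AdjS) x y :=
    fun x y hx hy => rtg_cnR_rtg_sAdj (bip_cnR hsS hconnS U W hdisj hcover hbip x y hx hy)
  have connSW : ∀ x y : VS, x ∈ W → y ∈ W → Relation.ReflTransGen (sAdj AdjS) x y :=
    fun x y hx hy => rtg_cnR_rtg_sAdj
      (bip_cnR hsS hconnS W U hdisj.symm (by rw [Set.union_comm]; exact hcover)
        hbipW x y hx hy)
  have irrG : Irreflexive (sAdj AdjG) := fun x h => h.1.1 rfl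
  have irrS : Irreflexive (sAdj AdjS) := fun x h => h.1.1 rfl
  -- lifting paths into parts
  have liftPart : ∀ (U' : Set VS), (∀ a b, sAdj AdjS a b → (a ∈ U' ↔ b ∈ U')) →
      ∀ a b, Relation.ReflTransGen (sAdj AdjS) a b → ∀ ha : a ∈ U',
      ∃ hb : b ∈ U', Relation.ReflTransGen (relOn (sAdj AdjS) U') ⟨a, ha⟩ ⟨b, hb⟩ := by
    intro U' hpart a b h
    induction h with
    | refl => exact fun ha => ⟨ha, Relation.ReflTransGen.refl⟩
    | tail _ hstep ih =>
      intro ha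
      obtain ⟨hbm, hpath⟩ := ih ha
      exact ⟨(hpart _ _ hstep).mp hbm, hpath.tail hstep⟩
  have connU' : ∀ s t : ↑U, Relation.ReflTransGen (relOn (sAdj AdjS) U) s t := by
    intro s t
    obtain ⟨hb, hp⟩ := liftPart U sPart s.1 t.1 (connSU s.1 t.1 s.2 t.2) s.2
    have he1 : (⟨s.1, s.2⟩ : ↑U) = s := Subtype.ext rfl
    have he2 : (⟨t.1, hb⟩ : ↑U) = t := Subtype.ext rfl
    rwa [he1, he2] at hp
  have connW' : ∀ s t : ↑W, Relation.ReflTransGen (relOn (sAdj AdjS) W) s t := by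
    intro s t
    obtain ⟨hb, hp⟩ := liftPart W sPartW s.1 t.1 (connSW s.1 t.1 s.2 t.2) s.2
    have he1 : (⟨s.1, s.2⟩ : ↑W) = s := Subtype.ext rfl
    have he2 : (⟨t.1, hb⟩ : ↑W) = t := Subtype.ext rfl
    rwa [he1, he2] at hp
  -- sides of the box product
  have stepSide : ∀ p q : VG × VS, boxAdj (sAdj AdjG) (sAdj AdjS) p q →
      (p.2 ∈ U ↔ q.2 ∈ U) := by
    rintro p q (⟨h1, h2⟩ | ⟨h1, h2⟩)
    · exact sPart _ _ h2
    · rw [h1]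
  have rtgSide : ∀ p q : VG × VS,
      Relation.ReflTransGen (boxAdj (sAdj AdjG) (sAdj AdjS)) p q →
      (p.2 ∈ U ↔ q.2 ∈ U) := by
    intro p q h
    induction h with
    | refl => exact Iff.rfl
    | tail _ hstep ih => exact ih.trans (stepSide _ _ hstep)
  have rtgSideW : ∀ p q : VG × VS,
      Relation.ReflTransGen (boxAdj (sAdj AdjG) (sAdj AdjS)) p q →
      (p.2 ∈ W ↔ q.2 ∈ W) := by
    intro p q h
    rw [memWiff, memWiff]
    exact not_iff_not.mpr (rtgSide p q h)
  have tauRtg : ∀ p q : VG × VS,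
      Relation.ReflTransGen (boxAdj (sAdj AdjG) (sAdj AdjS)) p q →
      Relation.ReflTransGen (boxAdj (sAdj AdjG) (sAdj AdjS)) (τ p) (τ q) := by
    intro p q h
    induction h with
    | refl => rfl
    | tail _ hstep ih => exact ih.tail ((hτ _ _).mp hstep)
  have boxconnU : ∀ p q : VG × VS, p.2 ∈ U → q.2 ∈ U →
      Relation.ReflTransGen (boxAdj (sAdj AdjG) (sAdj AdjS)) p q := by
    intro p q hp hq
    have h1 := rtg_box_fix_snd (B := sAdj AdjS) p.2 (connG p.1 q.1)
    have h2 := rtg_box_fix_fst (A := sAdj AdjG) q.1 (connSU p.2 q.2 hp hq)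
    exact h1.trans h2
  have boxconnW : ∀ p q : VG × VS, p.2 ∈ W → q.2 ∈ W →
      Relation.ReflTransGen (boxAdj (sAdj AdjG) (sAdj AdjS)) p q := by
    intro p q hp hq
    have h1 := rtg_box_fix_snd (B := sAdj AdjS) p.2 (connG p.1 q.1)
    have h2 := rtg_box_fix_fst (A := sAdj AdjG) q.1 (connSW p.2 q.2 hp hq)
    exact h1.trans h2
  by_cases hgood : (τ (g0, s0)).2 ∈ U
  · -- stabilizing case
    have stab : ∀ x : VG × VS, x.2 ∈ U → (τ x).2 ∈ U := by
      intro x hx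
      exact (rtgSide _ _ (tauRtg _ _ (boxconnU x (g0, s0) hx hs0))).mpr hgood
    refine ⟨Or.inl stab, 1, (autSubgroup (sAdj AdjS)).one_mem, one_mul 1, ?_, ?_,
      fun h => absurd rfl h⟩
    · intro x hx
      exact stab x hx
    · intro x hx
      exact stab x hx
  · -- swapping case
    have swapU : ∀ x : VG × VS, x.2 ∈ U → (τ x).2 ∈ W := by
      intro x hx
      have h := rtgSide _ _ (tauRtg _ _ (boxconnU x (g0, s0) hx hs0))
      exact (memWiff _).mpr (fun hu => hgood (h.mp hu))
    have swapW : ∀ x : VG × VS, x.2 ∈ W → (τ x).2 ∈ U := by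
      by_cases hq : (τ (g0, w0)).2 ∈ U
      · intro x hx
        exact (rtgSide _ _ (tauRtg _ _ (boxconnW x (g0, w0) hx hw0))).mpr hq
      · exfalso
        have hall : ∀ x : VG × VS, (τ x).2 ∈ W := by
          intro x
          rcases coverElim x.2 with hu | hw
          · exact swapU x hu
          · exact (rtgSideW _ _ (tauRtg _ _ (boxconnW x (g0, w0) hw hw0))).mpr
              ((memWiff _).mpr hq)
        obtain ⟨x, hx⟩ := τ.surjective (g0, s0)
        have h := hall x
        rw [hx] at h
        exact (memWiff s0).mp h hs0
    have symmU : ∀ q : VG × VS, q.2 ∈ W → (τ.symm q).2 ∈ U := by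
      intro q hq
      rcases coverElim (τ.symm q).2 with hu | hw
      · exact hu
      · exfalso
        have h := swapW (τ.symm q) hw
        rw [τ.apply_symm_apply] at h
        exact (memWiff _).mp hq h
    -- the isomorphism between the two components
    set φ : VG × ↑U ≃ VG × ↑W :=
      { toFun := fun p => ((τ (p.1, p.2.1)).1,
          ⟨(τ (p.1, p.2.1)).2, swapU (p.1, p.2.1) p.2.2⟩)
        invFun := fun q => ((τ.symm (q.1, q.2.1)).1,
          ⟨(τ.symm (q.1, q.2.1)).2, symmU (q.1, q.2.1) q.2.2⟩)
        left_inv := by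
          intro p
          simp only [Prod.mk.eta, Equiv.symm_apply_apply]
        right_inv := by
          intro q
          simp only [Prod.mk.eta, Equiv.apply_symm_apply] } with hφdef
    have hφiso : IsoRel φ (boxAdj (sAdj AdjG) (relOn (sAdj AdjS) U))
        (boxAdj (sAdj AdjG) (relOn (sAdj AdjS) W)) := by
      intro p q
      calc boxAdj (sAdj AdjG) (relOn (sAdj AdjS) U) p q
          ↔ boxAdj (sAdj AdjG) (sAdj AdjS) (p.1, p.2.1) (q.1, q.2.1) :=
            box_subtype_right p.1 q.1 p.2 q.2
        _ ↔ boxAdj (sAdj AdjG) (sAdj AdjS) (τ (p.1, p.2.1)) (τ (q.1, q.2.1)) := hτ _ _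
        _ ↔ boxAdj (sAdj AdjG) (relOn (sAdj AdjS) W) (φ p) (φ q) :=
            (box_subtype_right (φ p).1 (φ q).1 (φ p).2 (φ q).2).symm
    obtain ⟨f, hf⟩ := Skel.cancel (Nat.card VG) (sAdj AdjG) (relOn (sAdj AdjS) U)
      (relOn (sAdj AdjS) W) ⟨g0⟩ ⟨⟨s0, hs0⟩⟩ connG connU' connW' irrG
      (relOn_irrefl irrS U) (relOn_irrefl irrS W) le_rfl φ hφiso
    -- the involution σ
    have hfval : ∀ u : ↑U, (f u).1 ∈ W := fun u => (f u).2
    have hfsval : ∀ w : ↑W, (f.symm w).1 ∈ U := fun w => (f.symm w).2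
    set σf : VS → VS := fun s =>
      if h : s ∈ U then (f ⟨s, h⟩).1
      else if h' : s ∈ W then (f.symm ⟨s, h'⟩).1 else s with hσfdef
    have hσU : ∀ s (h : s ∈ U), σf s = (f ⟨s, h⟩).1 := fun s h => dif_pos h
    have hσW : ∀ s (h : s ∈ W), σf s = (f.symm ⟨s, h⟩).1 := by
      intro s h
      rw [hσfdef]
      simp only
      rw [dif_neg ((memWiff s).mp h), dif_pos h]
    have hinv : Function.Involutive σf := by
      intro s
      rcases coverElim s with h | h
      · rw [hσU s h, hσW _ (hfval ⟨s, h⟩)]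
        have he : (⟨(f ⟨s, h⟩).1, hfval ⟨s, h⟩⟩ : ↑W) = f ⟨s, h⟩ := Subtype.ext rfl
        rw [he, Equiv.symm_apply_apply]
      · rw [hσW s h, hσU _ (hfsval ⟨s, h⟩)]
        have he : (⟨(f.symm ⟨s, h⟩).1, hfsval ⟨s, h⟩⟩ : ↑U) = f.symm ⟨s, h⟩ :=
          Subtype.ext rfl
        rw [he, Equiv.apply_symm_apply]
    set σ : Equiv.Perm VS := Function.Involutive.toPerm σf hinv with hσdef
    have hσcoe : ∀ s, σ s = σf s := fun s => rfl
    have noCrossUW : ∀ a b : VS, a ∈ U → b ∈ W → ¬sAdj AdjS a b :=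
      fun a b ha hb hadj => (memWiff b).mp hb ((sPart a b hadj).mp ha)
    have noCrossWU : ∀ a b : VS, a ∈ W → b ∈ U → ¬sAdj AdjS a b :=
      fun a b ha hb hadj => (memWiff a).mp ha ((sPart a b hadj).mpr hb)
    have hmem : σ ∈ autSubgroup (sAdj AdjS) := by
      intro x y
      rcases coverElim x with hx | hx <;> rcases coverElim y with hy | hy
      · rw [hσcoe, hσcoe, hσU x hx, hσU y hy]
        exact hf ⟨x, hx⟩ ⟨y, hy⟩
      · refine iff_of_false (noCrossUW x y hx hy) ?_
        rw [hσcoe, hσcoe, hσU x hx, hσW y hy]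
        exact noCrossWU _ _ (hfval _) (hfsval _)
      · refine iff_of_false (noCrossWU x y hx hy) ?_
        rw [hσcoe, hσcoe, hσW x hx, hσU y hy]
        exact noCrossUW _ _ (hfsval _) (hfval _)
      · rw [hσcoe, hσcoe, hσW x hx, hσW y hy]
        have h := hf (f.symm ⟨x, hx⟩) (f.symm ⟨y, hy⟩)
        rw [Equiv.apply_symm_apply, Equiv.apply_symm_apply] at h
        exact h.symm
    have hmul : σ * σ = 1 := by
      apply Equiv.ext
      intro s
      simpa [Equiv.Perm.mul_apply, hσcoe] using hinv s
    have himgU : σf '' U = W := by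
      apply Set.Subset.antisymm
      · rintro - ⟨a, ha, rfl⟩
        rw [hσU a ha]
        exact hfval _
      · intro w hw
        refine ⟨σf w, ?_, hinv w⟩
        rw [hσW w hw]
        exact hfsval _
    have himgW : σf '' W = U := by
      apply Set.Subset.antisymm
      · rintro - ⟨a, ha, rfl⟩
        rw [hσW a ha]
        exact hfsval _
      · intro u hu
        refine ⟨σf u, ?_, hinv u⟩
        rw [hσU u hu]
        exact hfval _
    refine ⟨Or.inr swapU, σ, hmem, hmul, ?_, ?_, fun _ => ⟨himgU, himgW⟩⟩
    · intro x hx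
      have hm : σ x.2 ∈ W := by
        rw [hσcoe, hσU _ hx]
        exact hfval _
      exact swapW (x.1, σ x.2) hm
    · intro x hx
      have hw : (τ x).2 ∈ W := swapU x hx
      rw [hσcoe, hσW _ hw]
      exact hfsval _
end
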